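/- arXiv:1602.05457 — 8 statements merged into one kernel-verified Lean document; each statement's English description precedes it below -/
import Mathlib

section
/- Let G be a finite simple connected graph with modularity matrix M = A - (1/vol V) d dᵀ. The rightmost (largest) eigenvalue of M is nonnegative, and it is zero if and only if G is a complete multipartite graph. -/
open Matrix Finset

/-- The rightmost (largest) eigenvalue of the modularity matrix
`M = A - (1/vol V) d dᵀ` is nonnegative, and it is zero if and only if `G` is a
complete multipartite graph (vertices partitioned into classes, adjacency iff
the endpoints lie in different classes). -/
theorem modularity_rightmost_eigenvalue_nonneg_and_zero_iff_completeMultipartite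
    {n : ℕ} (hn : 0 < n) (G : SimpleGraph (Fin n)) [DecidableRel G.Adj]
    (hconn : G.Connected)
    (A : Matrix (Fin n) (Fin n) ℝ) (hA : A = G.adjMatrix ℝ)
    (d : Fin n → ℝ) (hd : d = fun i => ∑ j, A i j)
    (vol : ℝ) (hvol : vol = ∑ i, d i)
    (M : Matrix (Fin n) (Fin n) ℝ)
    (hM : M = A - (1 / vol) • vecMulVec d d)
    (lam : ℝ)
    (hlam : IsGreatest {μ : ℝ | ∃ v : Fin n → ℝ, v ≠ 0 ∧ M.mulVec v = μ • v} lam) :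
    0 ≤ lam ∧
    (lam = 0 ↔ ∃ P : Fin n → Fin n, ∀ i j : Fin n, G.Adj i j ↔ P i ≠ P j) := by
  classical
  -- entries of A
  have hAnn : ∀ i j, 0 ≤ A i j := by
    intro i j; rw [hA, SimpleGraph.adjMatrix_apply]; split <;> norm_num
  have hA1 : ∀ i j, G.Adj i j → A i j = 1 := by
    intro i j h; rw [hA, SimpleGraph.adjMatrix_apply, if_pos h]
  have hA0 : ∀ i j, ¬ G.Adj i j → A i j = 0 := by
    intro i j h; rw [hA, SimpleGraph.adjMatrix_apply, if_neg h]
  have hAsymm : ∀ i j, A i j = A j i := by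
    intro i j; rw [hA]; simp [SimpleGraph.adjMatrix_apply, G.adj_comm]
  have hdnn : ∀ i, 0 ≤ d i := by
    intro i; rw [hd]
    exact Finset.sum_nonneg fun j _ => hAnn i j
  have hvolnn : 0 ≤ vol := by
    rw [hvol]; exact Finset.sum_nonneg fun i _ => hdnn i
  -- M applied to a vector
  have hMsub : ∀ x : Fin n → ℝ, M *ᵥ x = A *ᵥ x - ((1 / vol) * (d ⬝ᵥ x)) • d := by
    intro x
    rw [hM, sub_mulVec, smul_mulVec]
    congr 1
    funext i
    simp only [Pi.smul_apply, smul_eq_mul, mulVec, dotProduct, vecMulVec_apply]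
    rw [show (∑ j, d i * d j * x j) = (∑ j, d j * x j) * d i by
      rw [Finset.sum_mul]; exact Finset.sum_congr rfl fun j _ => by ring]
    ring
  have hquad : ∀ x : Fin n → ℝ, x ⬝ᵥ M *ᵥ x = x ⬝ᵥ A *ᵥ x - (1 / vol) * (d ⬝ᵥ x) ^ 2 := by
    intro x
    rw [hMsub, dotProduct_sub, dotProduct_smul, smul_eq_mul, dotProduct_comm x d]
    ring
  -- M annihilates the all-ones vector
  have hones : M *ᵥ (fun _ => (1 : ℝ)) = 0 := by
    have hA1v : A *ᵥ (fun _ => (1 : ℝ)) = d := by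
      funext i; simp [mulVec, dotProduct, hd]
    have hd1 : d ⬝ᵥ (fun _ => (1 : ℝ)) = vol := by
      simp [dotProduct, hvol]
    rw [hMsub, hA1v, hd1]
    by_cases hv : vol = 0
    · have hdz : d = 0 := by
        funext i
        have := (Finset.sum_eq_zero_iff_of_nonneg (fun i _ => hdnn i)).mp
          (by rw [← hvol]; exact hv) i (Finset.mem_univ i)
        simpa using this
      rw [hdz]; simp
    · rw [one_div, inv_mul_cancel₀ hv, one_smul, sub_self]
  have honesne : (fun _ : Fin n => (1 : ℝ)) ≠ 0 := by
    intro h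
    have := congrFun h ⟨0, hn⟩
    norm_num at this
  have part1 : 0 ≤ lam :=
    hlam.2 ⟨fun _ => 1, honesne, by rw [hones, zero_smul]⟩
  -- symmetry of M
  have hMsymm : ∀ i j, M i j = M j i := by
    intro i j
    rw [hM]
    simp only [Matrix.sub_apply, Matrix.smul_apply, vecMulVec_apply, smul_eq_mul]
    rw [hAsymm i j, mul_comm (d i) (d j)]
  refine ⟨part1, ?_, ?_⟩
  · -- lam = 0 → complete multipartite
    intro hlam0
    -- M is negative semidefinite
    have hherm : (-M).IsHermitian := by
      ext i j
      simp only [conjTranspose_apply, Matrix.neg_apply, star_trivial]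
      rw [hMsymm j i]
    have hpsd : (-M).PosSemidef := by
      refine hherm.posSemidef_iff_eigenvalues_nonneg.mpr (Pi.le_def.mpr fun i => ?_)
      show (0:ℝ) ≤ hherm.eigenvalues i
      have hv := hherm.mulVec_eigenvectorBasis i
      have hw : (⇑(hherm.eigenvectorBasis i) : Fin n → ℝ) ≠ 0 := by
        have := hherm.eigenvectorBasis.orthonormal.ne_zero i
        intro h
        exact this (by ext t; exact congrFun h t)
      rw [neg_mulVec] at hv
      have hMw : M *ᵥ ⇑(hherm.eigenvectorBasis i)
          = (-(hherm.eigenvalues i)) • ⇑(hherm.eigenvectorBasis i) := by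
        rw [neg_smul, ← hv, neg_neg]
      have hle : -(hherm.eigenvalues i) ≤ lam := hlam.2 ⟨_, hw, hMw⟩
      rw [hlam0] at hle
      linarith
    have hneg : ∀ x : Fin n → ℝ, x ⬝ᵥ M *ᵥ x ≤ 0 := by
      intro x
      have h := hpsd.dotProduct_mulVec_nonneg x
      rw [star_trivial, neg_mulVec, dotProduct_neg] at h
      linarith
    -- every vertex has a neighbor (given some other vertex exists)
    have hdegpos : ∀ j : Fin n, (∃ i : Fin n, i ≠ j) → 0 < d j := by
      rintro j ⟨i, hij⟩
      obtain ⟨wlk⟩ := hconn.preconnected j i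
      have hex : ∃ t, G.Adj j t := by
        cases wlk with
        | nil => exact absurd rfl hij.symm
        | cons h p => exact ⟨_, h⟩
      obtain ⟨t, ht⟩ := hex
      have h1 : (1 : ℝ) ≤ ∑ u, A j u := by
        have h0 := Finset.single_le_sum (f := fun u => A j u)
          (fun u _ => hAnn j u) (Finset.mem_univ t)
        rwa [hA1 j t ht] at h0
      rw [hd]
      exact lt_of_lt_of_le one_pos h1
    -- no "bad triple"
    have htriple : ∀ i j k : Fin n, i ≠ j → j ≠ k → i ≠ k →
        G.Adj i k → ¬ G.Adj i j → ¬ G.Adj k j → False := by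
      intro i j k hij hjk hik hadj hnij hnkj
      have hdj : 0 < d j := hdegpos j ⟨i, hij⟩
      set cj : ℝ := -(d i + d k) / d j with hcj
      set x : Fin n → ℝ := Pi.single i 1 + Pi.single k 1 + Pi.single j cj with hx
      have hdx : d ⬝ᵥ x = 0 := by
        rw [hx]
        simp only [dotProduct_add, dotProduct_single]
        rw [hcj]
        field_simp
        ring
      have hxAx : x ⬝ᵥ A *ᵥ x = 2 := by
        have dii : A i i = 0 := hA0 i i (G.loopless.irrefl i)
        have dkk : A k k = 0 := hA0 k k (G.loopless.irrefl k)
        have djj : A j j = 0 := hA0 j j (G.loopless.irrefl j)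
        have eik : A i k = 1 := hA1 i k hadj
        have eki : A k i = 1 := hA1 k i (G.adj_symm hadj)
        have eij : A i j = 0 := hA0 i j hnij
        have eji : A j i = 0 := hA0 j i (fun h => hnij (G.adj_symm h))
        have ekj : A k j = 0 := hA0 k j hnkj
        have ejk : A j k = 0 := hA0 j k (fun h => hnkj (G.adj_symm h))
        rw [hx]
        simp only [mulVec_add, mulVec_single, dotProduct_add, add_dotProduct,
          single_dotProduct, Pi.smul_apply, col_apply, op_smul_eq_mul]
        rw [dii, dkk, djj, eik, eki, eij, eji, ekj, ejk]
        ring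
      have hpos : x ⬝ᵥ M *ᵥ x = 2 := by
        rw [hquad, hxAx, hdx]
        norm_num
      have := hneg x
      rw [hpos] at this
      linarith
    -- non-adjacency is transitive
    have htrans : ∀ a b c : Fin n, ¬ G.Adj a b → ¬ G.Adj b c → ¬ G.Adj a c := by
      intro a b c h1 h2 h3
      by_cases hab : a = b
      · subst hab; exact h2 h3
      by_cases hbc : b = c
      · subst hbc; exact h1 h3
      exact htriple a b c hab hbc (G.ne_of_adj h3) h3 h1 (fun h => h2 (G.adj_symm h))
    have hsetP : ∀ a : Fin n, a ∈ univ.filter (fun b => ¬ G.Adj a b) := by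
      intro a; simp [G.loopless.irrefl a]
    have hmin : ∀ (s t : Finset (Fin n)) (hs : s.Nonempty) (ht : t.Nonempty),
        s = t → s.min' hs = t.min' ht := by
      rintro s t hs ht rfl; rfl
    refine ⟨fun a => (univ.filter (fun b => ¬ G.Adj a b)).min' ⟨a, hsetP a⟩,
      fun i j => ⟨?_, ?_⟩⟩
    · intro hadj heq
      replace heq : (univ.filter (fun b => ¬ G.Adj i b)).min' ⟨i, hsetP i⟩
          = (univ.filter (fun b => ¬ G.Adj j b)).min' ⟨j, hsetP j⟩ := heq
      have hmi := Finset.min'_mem (univ.filter (fun b => ¬ G.Adj i b)) ⟨i, hsetP i⟩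
      have hmj := Finset.min'_mem (univ.filter (fun b => ¬ G.Adj j b)) ⟨j, hsetP j⟩
      rw [Finset.mem_filter] at hmi hmj
      refine htrans i _ j hmi.2 (fun h => hmj.2 ?_) hadj
      rw [← heq]
      exact G.adj_symm h
    · intro hPne
      by_contra hnadj
      apply hPne
      have hfil : univ.filter (fun b => ¬ G.Adj i b) = univ.filter (fun b => ¬ G.Adj j b) := by
        ext b
        simp only [Finset.mem_filter, Finset.mem_univ, true_and]
        constructor
        · intro h; exact htrans j i b (fun h' => hnadj (G.adj_symm h')) h
        · intro h; exact htrans i j b hnadj h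
      exact hmin _ _ ⟨i, hsetP i⟩ ⟨j, hsetP j⟩ hfil
  · -- complete multipartite → lam = 0
    rintro ⟨P, hP⟩
    have hAij : ∀ i j, A i j = if P i = P j then 0 else 1 := by
      intro i j
      rw [hA, SimpleGraph.adjMatrix_apply]
      by_cases h : P i = P j
      · have hna : ¬ G.Adj i j := fun hadj => (hP i j).mp hadj h
        simp [hna, h]
      · have ha : G.Adj i j := (hP i j).mpr h
        simp [ha, h]
    -- the quadratic form of M is nonpositive
    have key : ∀ x : Fin n → ℝ, x ⬝ᵥ M *ᵥ x ≤ 0 := by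
      intro x
      have hn' : (n : ℝ) ≠ 0 := Nat.cast_ne_zero.mpr hn.ne'
      set c : ℝ := (∑ t, x t) / n with hc
      set y : Fin n → ℝ := fun t => x t - c with hy
      have hxy : x = y + c • (fun _ => (1 : ℝ)) := by
        funext t; simp [hy]
      have hysum : ∑ t, y t = 0 := by
        rw [hy]
        rw [Finset.sum_sub_distrib, Finset.sum_const, card_univ, Fintype.card_fin,
          nsmul_eq_mul, hc, mul_div_cancel₀ _ hn', sub_self]
      have hred : x ⬝ᵥ M *ᵥ x = y ⬝ᵥ M *ᵥ y := by
        have h1 : M *ᵥ x = M *ᵥ y := by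
          rw [hxy, mulVec_add, mulVec_smul, hones, smul_zero, add_zero]
        have h2 : (fun _ : Fin n => (1 : ℝ)) ⬝ᵥ (M *ᵥ y) = 0 := by
          have hMT : Mᵀ = M := by
            ext i j; rw [transpose_apply]; exact hMsymm j i
          rw [dotProduct_mulVec, ← mulVec_transpose, hMT, hones, zero_dotProduct]
        rw [h1, hxy, add_dotProduct, smul_dotProduct, h2, smul_zero, add_zero]
      set s : Fin n → ℝ := fun cc => ∑ t ∈ univ.filter (fun t => P t = cc), y t with hs
      have hrow : ∀ i, (A *ᵥ y) i = (∑ t, y t) - s (P i) := by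
        intro i
        simp only [mulVec, dotProduct]
        rw [Finset.sum_congr rfl (fun j _ => show A i j * y j
            = y j - (if P j = P i then y j else 0) by
          rw [hAij i j]
          by_cases h : P i = P j
          · rw [if_pos h, if_pos h.symm]; ring
          · rw [if_neg h, if_neg (fun hh => h hh.symm)]; ring)]
        rw [Finset.sum_sub_distrib]
        congr 1
        exact (Finset.sum_filter (fun t => P t = P i) y).symm
      have hyA : y ⬝ᵥ (A *ᵥ y) = - ∑ cc, (s cc) ^ 2 := by
        have e1 : y ⬝ᵥ (A *ᵥ y) = ∑ i, y i * ((∑ t, y t) - s (P i)) := by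
          simp only [dotProduct]
          exact Finset.sum_congr rfl fun i _ => by rw [hrow i]
        rw [e1, hysum]
        rw [show (∑ i, y i * ((0 : ℝ) - s (P i))) = - ∑ i, y i * s (P i) by
          rw [← Finset.sum_neg_distrib]
          exact Finset.sum_congr rfl fun i _ => by ring]
        congr 1
        rw [← Finset.sum_fiberwise univ P (fun i => y i * s (P i))]
        exact Finset.sum_congr rfl fun cc _ => by
          rw [Finset.sum_congr rfl (fun i hi => show y i * s (P i) = y i * s cc by
            rw [(Finset.mem_filter.mp hi).2]), ← Finset.sum_mul, hs, sq]
      rw [hred, hquad, hyA]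
      have h1 : 0 ≤ (1 / vol) * (d ⬝ᵥ y) ^ 2 :=
        mul_nonneg (one_div_nonneg.mpr hvolnn) (sq_nonneg _)
      have h2 : 0 ≤ ∑ cc, (s cc) ^ 2 :=
        Finset.sum_nonneg fun cc _ => sq_nonneg _
      linarith
    obtain ⟨v, hv, hMv⟩ := hlam.1
    have h1 : v ⬝ᵥ M *ᵥ v = lam * (v ⬝ᵥ v) := by
      rw [hMv, dotProduct_smul, smul_eq_mul]
    have h2 : 0 < v ⬝ᵥ v := by
      rcases lt_or_eq_of_le (Finset.sum_nonneg fun i _ => mul_self_nonneg (v i)) with h | h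
      · exact h
      · exact absurd (dotProduct_self_eq_zero.mp h.symm) hv
    have h3 : lam * (v ⬝ᵥ v) ≤ 0 := by rw [← h1]; exact key v
    have hle : lam ≤ 0 := by
      by_contra h
      push_neg at h
      nlinarith
    exact le_antisymm hle part1
end

section
/- Let G be a finite simple connected graph with normalized modularity matrix 𝓜 = 𝓐 - δδᵀ/vol V. Then 1 is not an eigenvalue of 𝓜. Furthermore, if G is not bipartite, then -1 is not an eigenvalue of 𝓜. -/
open Matrix Finset

lemma sum_split_aux {ι : Type*} (s : Finset ι) (f g h : ι → ℝ) (c : ℝ) :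
    ∑ x ∈ s, (f x - c * g x + h x) =
      (∑ x ∈ s, f x) - c * (∑ x ∈ s, g x) + (∑ x ∈ s, h x) := by
  rw [Finset.sum_add_distrib, Finset.sum_sub_distrib, Finset.mul_sum]

lemma modularity_aux {n : ℕ} (G : SimpleGraph (Fin n)) [DecidableRel G.Adj]
    (A : Matrix (Fin n) (Fin n) ℝ) (hA : A = G.adjMatrix ℝ)
    (d : Fin n → ℝ) (hd : d = fun i => ∑ j, A i j)
    (vol : ℝ) (hvol : vol = ∑ i, d i)
    (δ : Fin n → ℝ) (hδ : δ = fun i => Real.sqrt (d i))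
    (NA : Matrix (Fin n) (Fin n) ℝ)
    (hNA : NA = diagonal (fun i => (Real.sqrt (d i))⁻¹) * A *
                diagonal (fun i => (Real.sqrt (d i))⁻¹))
    (NM : Matrix (Fin n) (Fin n) ℝ)
    (hNM : NM = NA - (1 / vol) • vecMulVec δ δ)
    (hd_pos : ∀ i, 0 < d i) (hvol_pos : 0 < vol)
    (σ : ℝ) (hσ : σ * σ = 1) (v : Fin n → ℝ)
    (hv : NM.mulVec v = σ • v) :
    δ ⬝ᵥ v = 0 ∧ ∀ i j, G.Adj i j →
      v i * (Real.sqrt (d i))⁻¹ = σ * (v j * (Real.sqrt (d j))⁻¹) := by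
  have hsq_pos : ∀ i, 0 < Real.sqrt (d i) := fun i => Real.sqrt_pos.mpr (hd_pos i)
  have hsq_ne : ∀ i, Real.sqrt (d i) ≠ 0 := fun i => (hsq_pos i).ne'
  have hmul_self : ∀ i, Real.sqrt (d i) * Real.sqrt (d i) = d i :=
    fun i => Real.mul_self_sqrt (hd_pos i).le
  have hNAij : ∀ i j, NA i j = (Real.sqrt (d i))⁻¹ * A i j * (Real.sqrt (d j))⁻¹ := by
    intro i j
    rw [hNA, Matrix.mul_diagonal, Matrix.diagonal_mul]
  have hAsymm : ∀ i j, A i j = A j i := by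
    intro i j; rw [hA]; simp [SimpleGraph.adjMatrix_apply, SimpleGraph.adj_comm]
  -- NA δ = δ
  have hNAδ : NA *ᵥ δ = δ := by
    funext i
    have : ∀ j, NA i j * δ j = (Real.sqrt (d i))⁻¹ * A i j := by
      intro j
      rw [hNAij, hδ]
      simp only
      rw [mul_assoc, inv_mul_cancel₀ (hsq_ne j), mul_one]
    simp only [Matrix.mulVec, dotProduct, this, ← Finset.mul_sum]
    rw [hδ]
    simp only
    rw [show (∑ j, A i j) = d i by rw [hd]]
    rw [← hmul_self i]
    rw [Real.sqrt_mul_self (hsq_pos i).le, ← mul_assoc, inv_mul_cancel₀ (hsq_ne i), one_mul]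
  -- δ ⬝ᵥ δ = vol
  have hδδ : δ ⬝ᵥ δ = vol := by
    rw [hδ, hvol, dotProduct]
    exact Finset.sum_congr rfl fun i _ => hmul_self i
  -- vecMulVec mulVec
  have hvmv : ∀ w : Fin n → ℝ, vecMulVec δ δ *ᵥ w = (δ ⬝ᵥ w) • δ := by
    intro w
    funext i
    simp only [Matrix.mulVec, dotProduct, vecMulVec_apply, Pi.smul_apply, smul_eq_mul]
    rw [Finset.sum_mul]
    exact Finset.sum_congr rfl fun x _ => by ring
  have hNM_mv : ∀ w, NM *ᵥ w = NA *ᵥ w - ((1 / vol) * (δ ⬝ᵥ w)) • δ := by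
    intro w
    rw [hNM, Matrix.sub_mulVec, Matrix.smul_mulVec, hvmv, smul_smul]
  have hNAsymm : NAᵀ = NA := by
    funext i j
    rw [Matrix.transpose_apply, hNAij, hNAij, hAsymm i j]
    ring
  have hdotNA : ∀ w, δ ⬝ᵥ (NA *ᵥ w) = δ ⬝ᵥ w := by
    intro w
    rw [Matrix.dotProduct_mulVec, ← Matrix.mulVec_transpose, hNAsymm, hNAδ]
  have hσ_ne : σ ≠ 0 := by
    intro h
    rw [h, zero_mul] at hσ
    norm_num at hσ
  have hortho : δ ⬝ᵥ v = 0 := by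
    have h1 : δ ⬝ᵥ (NM *ᵥ v) = 0 := by
      rw [hNM_mv, dotProduct_sub, dotProduct_smul, hdotNA, hδδ, smul_eq_mul]
      field_simp
      ring
    rw [hv, dotProduct_smul, smul_eq_mul] at h1
    exact (mul_eq_zero.mp h1).resolve_left hσ_ne
  have hNAv : NA *ᵥ v = σ • v := by
    rw [← hv, hNM_mv, hortho]
    simp
  set u : Fin n → ℝ := fun i => v i * (Real.sqrt (d i))⁻¹ with hu
  have hvu : ∀ i, v i = Real.sqrt (d i) * u i := by
    intro i
    rw [hu]
    simp only
    rw [mul_comm, mul_assoc, inv_mul_cancel₀ (hsq_ne i), mul_one]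
  have hAu : ∀ i, (∑ j, A i j * u j) = σ * (d i * u i) := by
    intro i
    have h0 := congrFun hNAv i
    simp only [Matrix.mulVec, dotProduct, Pi.smul_apply, smul_eq_mul] at h0
    have h1 : ∀ j, NA i j * v j = (Real.sqrt (d i))⁻¹ * (A i j * u j) := by
      intro j
      rw [hNAij]
      simp only [hu]
      ring
    rw [Finset.sum_congr rfl (fun j _ => h1 j), ← Finset.mul_sum] at h0
    have h2 : (∑ j, A i j * u j) = Real.sqrt (d i) * (σ * v i) := by
      rw [← h0, ← mul_assoc, mul_inv_cancel₀ (hsq_ne i), one_mul]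
    rw [h2, hvu i]
    linear_combination (σ * u i) * hmul_self i
  set T : ℝ := ∑ i, d i * u i ^ 2 with hT
  have hT1 : ∑ i, ∑ j, A i j * u i ^ 2 = T := by
    refine Finset.sum_congr rfl fun i _ => ?_
    rw [← Finset.sum_mul, show (∑ j, A i j) = d i from by rw [hd]]
  have hT3 : ∑ i, ∑ j, A i j * u j ^ 2 = T := by
    rw [Finset.sum_comm]
    refine Finset.sum_congr rfl fun j _ => ?_
    rw [← Finset.sum_mul,
      show (∑ i, A i j) = d j from by
        rw [Finset.sum_congr rfl fun i _ => (hAsymm i j), show (∑ i, A j i) = d j from by rw [hd]]]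
  have hT2 : ∑ i, ∑ j, A i j * (u i * u j) = σ * T := by
    rw [hT, Finset.mul_sum]
    refine Finset.sum_congr rfl fun i _ => ?_
    calc ∑ j, A i j * (u i * u j) = u i * ∑ j, A i j * u j := by
          rw [Finset.mul_sum]
          exact Finset.sum_congr rfl fun j _ => by ring
      _ = u i * (σ * (d i * u i)) := by rw [hAu i]
      _ = σ * (d i * u i ^ 2) := by ring
  have hS : (∑ i, ∑ j, A i j * (u i - σ * u j) ^ 2) = 0 := by
    have expand : ∀ i j, A i j * (u i - σ * u j) ^ 2 =
        A i j * u i ^ 2 - (2 * σ) * (A i j * (u i * u j)) + A i j * u j ^ 2 := by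
      intro i j
      linear_combination A i j * u j ^ 2 * hσ
    calc (∑ i, ∑ j, A i j * (u i - σ * u j) ^ 2)
        = ∑ i, ((∑ j, A i j * u i ^ 2) - (2 * σ) * (∑ j, A i j * (u i * u j))
            + (∑ j, A i j * u j ^ 2)) := by
          refine Finset.sum_congr rfl fun i _ => ?_
          rw [← sum_split_aux]
          exact Finset.sum_congr rfl fun j _ => expand i j
      _ = (∑ i, ∑ j, A i j * u i ^ 2) - (2 * σ) * (∑ i, ∑ j, A i j * (u i * u j))
            + (∑ i, ∑ j, A i j * u j ^ 2) := sum_split_aux _ _ _ _ _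
      _ = T - (2 * σ) * (σ * T) + T := by rw [hT1, hT2, hT3]
      _ = 0 := by linear_combination (-2 * T) * hσ
  have hA_nonneg : ∀ i j, (0:ℝ) ≤ A i j := by
    intro i j
    rw [hA, SimpleGraph.adjMatrix_apply]
    split <;> norm_num
  have hterm_nonneg : ∀ i j, (0:ℝ) ≤ A i j * (u i - σ * u j) ^ 2 :=
    fun i j => mul_nonneg (hA_nonneg i j) (sq_nonneg _)
  have hedge : ∀ i j, G.Adj i j → u i = σ * u j := by
    intro i j hadj
    have houter := (Finset.sum_eq_zero_iff_of_nonneg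
      (fun i _ => Finset.sum_nonneg (fun j _ => hterm_nonneg i j))).mp hS i (Finset.mem_univ i)
    have hinner := (Finset.sum_eq_zero_iff_of_nonneg
      (fun j _ => hterm_nonneg i j)).mp houter j (Finset.mem_univ j)
    have hA1 : A i j = 1 := by rw [hA]; simp [hadj]
    rw [hA1, one_mul, pow_eq_zero_iff (by norm_num), sub_eq_zero] at hinner
    exact hinner
  refine ⟨hortho, fun i j hadj => ?_⟩
  have := hedge i j hadj
  rw [hu] at this
  simpa using this

/-- For a connected graph `G`, `1` is not an eigenvalue of the normalized
modularity matrix `𝓜 = 𝓐 - δδᵀ/vol V`. Furthermore, if `G` is not bipartite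
(i.e. not 2-colorable), then `-1` is not an eigenvalue of `𝓜`. -/
theorem normalized_modularity_extreme_eigenvalues
    {n : ℕ} (hn : 0 < n) (G : SimpleGraph (Fin n)) [DecidableRel G.Adj]
    (hconn : G.Connected)
    (A : Matrix (Fin n) (Fin n) ℝ) (hA : A = G.adjMatrix ℝ)
    (d : Fin n → ℝ) (hd : d = fun i => ∑ j, A i j)
    (vol : ℝ) (hvol : vol = ∑ i, d i)
    (δ : Fin n → ℝ) (hδ : δ = fun i => Real.sqrt (d i))
    (NA : Matrix (Fin n) (Fin n) ℝ)
    (hNA : NA = diagonal (fun i => (Real.sqrt (d i))⁻¹) * A *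
                diagonal (fun i => (Real.sqrt (d i))⁻¹))
    (NM : Matrix (Fin n) (Fin n) ℝ)
    (hNM : NM = NA - (1 / vol) • vecMulVec δ δ) :
    (¬ ∃ v : Fin n → ℝ, v ≠ 0 ∧ NM.mulVec v = (1 : ℝ) • v) ∧
    (¬ G.Colorable 2 → ¬ ∃ v : Fin n → ℝ, v ≠ 0 ∧ NM.mulVec v = (-1 : ℝ) • v) := by
  by_cases h1 : n = 1
  · -- trivial one-vertex case: no edges, NM = 0
    subst h1
    have noAdj : ∀ i j : Fin 1, ¬ G.Adj i j := by
      intro i j hadj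
      exact G.irrefl (Subsingleton.elim i j ▸ hadj)
    have hA0 : A = 0 := by
      funext i j
      rw [hA, SimpleGraph.adjMatrix_apply, if_neg (noAdj i j)]
      rfl
    have hd0 : d = 0 := by
      funext i
      rw [hd]
      simp [hA0]
    have hNM0 : NM = 0 := by
      rw [hNM, hNA, hA0, hδ, hd0]
      funext i j
      simp [vecMulVec_apply]
    constructor
    · rintro ⟨v, hv0, hv⟩
      rw [hNM0] at hv
      simp at hv
      exact hv0 hv.symm
    · intro hncol _
      exact hncol ⟨SimpleGraph.Coloring.mk (fun _ => (0 : Fin 2))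
        (fun {a b} h => (noAdj a b h).elim)⟩
  · -- main case: n ≥ 2
    have hn2 : 2 ≤ n := by omega
    have hd_deg : ∀ i, d i = (G.degree i : ℝ) := by
      intro i
      rw [hd]
      simp only [hA, SimpleGraph.adjMatrix_apply, Finset.sum_boole]
      rw [SimpleGraph.degree, SimpleGraph.neighborFinset_eq_filter]
    have hd_pos : ∀ i, 0 < d i := by
      intro i
      rw [hd_deg]
      have hex : ∃ w, G.Adj i w := by
        have : Nontrivial (Fin n) := Fin.nontrivial_iff_two_le.mpr hn2
        obtain ⟨j, hj⟩ := exists_ne i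
        obtain ⟨w⟩ := hconn.preconnected i j
        cases w with
        | nil => exact absurd rfl hj.symm
        | cons h p => exact ⟨_, h⟩
      exact_mod_cast (G.degree_pos_iff_exists_adj i).mpr hex
    have hvol_pos : 0 < vol := by
      rw [hvol]
      exact Finset.sum_pos (fun i _ => hd_pos i) ⟨⟨0, hn⟩, Finset.mem_univ _⟩
    have hsq_ne : ∀ i, Real.sqrt (d i) ≠ 0 :=
      fun i => (Real.sqrt_pos.mpr (hd_pos i)).ne'
    have hmul_self : ∀ i, Real.sqrt (d i) * Real.sqrt (d i) = d i :=
      fun i => Real.mul_self_sqrt (hd_pos i).le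
    constructor
    · rintro ⟨v, hv0, hv⟩
      obtain ⟨hortho, hedge⟩ := modularity_aux G A hA d hd vol hvol δ hδ NA hNA NM hNM
        hd_pos hvol_pos 1 (by norm_num) v hv
      have hwalk : ∀ {i j : Fin n}, G.Walk i j →
          v i * (Real.sqrt (d i))⁻¹ = v j * (Real.sqrt (d j))⁻¹ := by
        intro i j w
        induction w with
        | nil => rfl
        | cons h p ih => rw [hedge _ _ h, one_mul, ih]
      set i₀ : Fin n := ⟨0, hn⟩
      set c : ℝ := v i₀ * (Real.sqrt (d i₀))⁻¹ with hc
      have hvic : ∀ i, v i = Real.sqrt (d i) * c := by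
        intro i
        obtain ⟨w⟩ := hconn.preconnected i i₀
        have h := hwalk w
        calc v i = v i * ((Real.sqrt (d i))⁻¹ * Real.sqrt (d i)) := by
              rw [inv_mul_cancel₀ (hsq_ne i), mul_one]
          _ = (v i * (Real.sqrt (d i))⁻¹) * Real.sqrt (d i) := by ring
          _ = c * Real.sqrt (d i) := by rw [h]
          _ = Real.sqrt (d i) * c := mul_comm _ _
      have hvc : vol * c = 0 := by
        calc vol * c = ∑ i, d i * c := by rw [hvol, Finset.sum_mul]
          _ = ∑ i, δ i * v i := Finset.sum_congr rfl fun i _ => by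
              rw [hvic i, hδ]
              simp only
              linear_combination c * (hmul_self i).symm
          _ = δ ⬝ᵥ v := rfl
          _ = 0 := hortho
      have hc0 : c = 0 := by
        rcases mul_eq_zero.mp hvc with h | h
        · exact absurd h hvol_pos.ne'
        · exact h
      apply hv0
      funext i
      rw [hvic i, hc0, mul_zero]
      rfl
    · intro hncol
      rintro ⟨v, hv0, hv⟩
      obtain ⟨hortho, hedge⟩ := modularity_aux G A hA d hd vol hvol δ hδ NA hNA NM hNM
        hd_pos hvol_pos (-1) (by norm_num) v hv
      have hedge' : ∀ i j, G.Adj i j →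
          v i * (Real.sqrt (d i))⁻¹ = -(v j * (Real.sqrt (d j))⁻¹) := by
        intro i j h
        rw [hedge i j h, neg_one_mul]
      have hwalk : ∀ {i j : Fin n}, G.Walk i j →
          |v i * (Real.sqrt (d i))⁻¹| = |v j * (Real.sqrt (d j))⁻¹| := by
        intro i j w
        induction w with
        | nil => rfl
        | cons h p ih => rw [hedge' _ _ h, abs_neg, ih]
      have hune : ∀ i, v i * (Real.sqrt (d i))⁻¹ ≠ 0 := by
        have hex : ∃ i, v i ≠ 0 := by
          by_contra hcon
          push_neg at hcon
          exact hv0 (funext fun i => hcon i)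
        obtain ⟨i₁, hi₁⟩ := hex
        have hu1 : v i₁ * (Real.sqrt (d i₁))⁻¹ ≠ 0 :=
          mul_ne_zero hi₁ (inv_ne_zero (hsq_ne i₁))
        intro i hi
        obtain ⟨w⟩ := hconn.preconnected i i₁
        have := hwalk w
        rw [hi, abs_zero] at this
        exact hu1 (abs_eq_zero.mp this.symm)
      apply hncol
      refine ⟨SimpleGraph.Coloring.mk
        (fun i => if 0 < v i * (Real.sqrt (d i))⁻¹ then (0 : Fin 2) else 1) ?_⟩
      intro a b hadj
      have hab := hedge' a b hadj
      by_cases hpa : 0 < v a * (Real.sqrt (d a))⁻¹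
      · have hnb : ¬ 0 < v b * (Real.sqrt (d b))⁻¹ := by
          intro hpb
          rw [hab] at hpa
          linarith
        simp only [if_pos hpa, if_neg hnb]
        decide
      · have hna : v a * (Real.sqrt (d a))⁻¹ < 0 :=
          lt_of_le_of_ne (not_lt.mp hpa) (hune a)
        have hpb : 0 < v b * (Real.sqrt (d b))⁻¹ := by
          rw [hab] at hna
          linarith
        simp only [if_neg hpa, if_pos hpb]
        decide
end

section
/- Let G be a finite simple connected graph and let ∅ ≠ S ⊊ V. Define v_S = D^{1/2}(𝟙_S - c𝟙) with c = vol S/vol V. Then δᵀ v_S = 0, v_Sᵀ v_S = vol S · vol S̄ / vol V, and v_Sᵀ 𝓜 v_S / v_Sᵀ v_S = q_norm(S,S̄) = Q(S)·vol V/(vol S · vol S̄). Consequently the normalized cut-modularity satisfies q_G^{NCut} ≤ μ_G, where μ_G = max { vᵀ𝓜v / vᵀv : v ≠ 0, vᵀδ = 0 } is the normalized algebraic modularity. -/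
open Matrix Finset

/-- For any nonempty proper `S ⊂ V` and `v_S = D^{1/2}(𝟙_S - c𝟙)` with
`c = vol S / vol V`, one has `δᵀv_S = 0`, `v_Sᵀv_S = vol S · vol S̄ / vol V`, and
`v_Sᵀ𝓜v_S / v_Sᵀv_S = q_norm(S,S̄) = Q(S)·vol V/(vol S · vol S̄)`. Consequently the
normalized cut-modularity satisfies `q_G^{NCut} ≤ μ_G`, the normalized algebraic
modularity. -/
theorem normalized_cut_modularity_le_normalized_algebraic_modularity
    {n : ℕ} (hn : 0 < n) (G : SimpleGraph (Fin n)) [DecidableRel G.Adj]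
    (hconn : G.Connected)
    (A : Matrix (Fin n) (Fin n) ℝ) (hA : A = G.adjMatrix ℝ)
    (d : Fin n → ℝ) (hd : d = fun i => ∑ j, A i j)
    (vol : ℝ) (hvol : vol = ∑ i, d i)
    (δ : Fin n → ℝ) (hδ : δ = fun i => Real.sqrt (d i))
    (NM : Matrix (Fin n) (Fin n) ℝ)
    (hNM : NM = diagonal (fun i => (Real.sqrt (d i))⁻¹) * A *
                diagonal (fun i => (Real.sqrt (d i))⁻¹) - (1 / vol) • vecMulVec δ δ)
    (Q : Finset (Fin n) → ℝ)
    (hQ : ∀ S, Q S = (∑ i ∈ S, ∑ j ∈ S, A i j) - (∑ i ∈ S, d i) ^ 2 / vol)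
    (vs : Finset (Fin n) → (Fin n → ℝ))
    (hvs : ∀ S, vs S = fun i => Real.sqrt (d i) *
            ((if i ∈ S then (1 : ℝ) else 0) - (∑ k ∈ S, d k) / vol))
    (μG : ℝ)
    (hμG : IsGreatest {r : ℝ | ∃ v : Fin n → ℝ, v ≠ 0 ∧ v ⬝ᵥ δ = 0 ∧
            r = (v ⬝ᵥ NM.mulVec v) / (v ⬝ᵥ v)} μG)
    (qN : ℝ)
    (hqN : IsGreatest {q : ℝ | ∃ S : Finset (Fin n), S.Nonempty ∧ S ≠ univ ∧
            q = Q S * vol / ((∑ i ∈ S, d i) * (∑ i ∈ Sᶜ, d i))} qN) :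
    (∀ S : Finset (Fin n), S.Nonempty → S ≠ univ →
      δ ⬝ᵥ vs S = 0 ∧
      (vs S) ⬝ᵥ (vs S) = (∑ i ∈ S, d i) * (∑ i ∈ Sᶜ, d i) / vol ∧
      ((vs S) ⬝ᵥ NM.mulVec (vs S)) / ((vs S) ⬝ᵥ (vs S)) =
        Q S * vol / ((∑ i ∈ S, d i) * (∑ i ∈ Sᶜ, d i))) ∧
    qN ≤ μG := by
  have hsym : ∀ i j, A i j = A j i := by
    intro i j; rw [hA]; simp [SimpleGraph.adjMatrix_apply, G.adj_comm]
  have hdeg : ∀ i, d i = (G.degree i : ℝ) := by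
    intro i
    rw [hd, hA]
    simp [SimpleGraph.adjMatrix_apply, SimpleGraph.degree, SimpleGraph.neighborFinset_eq_filter,
      Finset.sum_boole]
  have hd0 : ∀ i, 0 ≤ d i := by
    intro i; rw [hdeg]; positivity
  -- main helper
  have key : ∀ S : Finset (Fin n), S.Nonempty → S ≠ univ →
      (δ ⬝ᵥ vs S = 0 ∧
      (vs S) ⬝ᵥ (vs S) = (∑ i ∈ S, d i) * (∑ i ∈ Sᶜ, d i) / vol ∧
      ((vs S) ⬝ᵥ NM.mulVec (vs S)) / ((vs S) ⬝ᵥ (vs S)) =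
        Q S * vol / ((∑ i ∈ S, d i) * (∑ i ∈ Sᶜ, d i))) ∧ vs S ≠ 0 ∧
      (vs S) ⬝ᵥ NM.mulVec (vs S) = Q S := by
    intro S hS hS'
    obtain ⟨a, ha⟩ := hS
    obtain ⟨b, hb⟩ : Sᶜ.Nonempty := by
      rw [Finset.nonempty_iff_ne_empty]
      intro hc
      exact hS' (by simpa [Finset.compl_eq_empty_iff] using hc)
    have hab : a ≠ b := fun h => (Finset.mem_compl.1 hb) (h ▸ ha)
    haveI : Nontrivial (Fin n) := ⟨⟨a, b, hab⟩⟩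
    have hdpos : ∀ i, 0 < d i := by
      intro i
      obtain ⟨j, hj⟩ := exists_ne i
      obtain ⟨p⟩ := hconn.preconnected i j
      have hnil : ¬ p.Nil := SimpleGraph.Walk.not_nil_of_ne (fun h => hj h.symm)
      have hadj := p.adj_snd hnil
      have : 0 < G.degree i := (G.degree_pos_iff_exists_adj i).2 ⟨_, hadj⟩
      rw [hdeg]; exact_mod_cast this
    set s : ℝ := ∑ i ∈ S, d i with hs_def
    set t : ℝ := ∑ i ∈ Sᶜ, d i with ht_def
    have hs : 0 < s := Finset.sum_pos (fun i _ => hdpos i) ⟨a, ha⟩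
    have ht : 0 < t := Finset.sum_pos (fun i _ => hdpos i) ⟨b, hb⟩
    have hvolst : vol = s + t := by rw [hvol, ← Finset.sum_add_sum_compl S]
    have hvolpos : 0 < vol := by rw [hvolst]; linarith
    have hvne : vol ≠ 0 := ne_of_gt hvolpos
    set c : ℝ := s / vol with hc_def
    set χ : Fin n → ℝ := fun i => if i ∈ S then (1 : ℝ) else 0 with hχ_def
    have hvsS : vs S = fun i => Real.sqrt (d i) * (χ i - c) := hvs S
    have hsel : ∀ f : Fin n → ℝ, ∑ i, χ i * f i = ∑ i ∈ S, f i := by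
      intro f
      have : ∀ i, χ i * f i = if i ∈ S then f i else 0 := by
        intro i; by_cases h : i ∈ S <;> simp [hχ_def, h]
      simp only [this]
      simp [Finset.sum_ite_mem]
    have hsqd : ∀ i, Real.sqrt (d i) * Real.sqrt (d i) = d i :=
      fun i => Real.mul_self_sqrt (hd0 i)
    -- dot with δ
    have hdot1 : δ ⬝ᵥ vs S = 0 := by
      rw [hδ, hvsS]
      simp only [dotProduct]
      have : ∀ i ∈ (univ : Finset (Fin n)),
          Real.sqrt (d i) * (Real.sqrt (d i) * (χ i - c)) = χ i * d i - c * d i := by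
        intro i _
        rw [← mul_assoc, hsqd i]; ring
      rw [Finset.sum_congr rfl this, Finset.sum_sub_distrib, hsel d, ← Finset.mul_sum, ← hvol]
      rw [hc_def]
      field_simp
      exact sub_self _
    -- norm squared
    have hdot2 : (vs S) ⬝ᵥ (vs S) = s * t / vol := by
      rw [hvsS]
      simp only [dotProduct]
      have step : ∀ i ∈ (univ : Finset (Fin n)),
          (Real.sqrt (d i) * (χ i - c)) * (Real.sqrt (d i) * (χ i - c)) =
          (χ i * d i) - 2 * c * (χ i * d i) + c ^ 2 * d i := by
        intro i _
        have hχ2 : χ i * χ i = χ i := by by_cases h : i ∈ S <;> simp [hχ_def, h]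
        have : (Real.sqrt (d i) * (χ i - c)) * (Real.sqrt (d i) * (χ i - c)) =
            (Real.sqrt (d i) * Real.sqrt (d i)) * (χ i * χ i - 2 * c * χ i + c ^ 2) := by ring
        rw [this, hsqd i, hχ2]; ring
      rw [Finset.sum_congr rfl step]
      simp only [Finset.sum_add_distrib, Finset.sum_sub_distrib, ← Finset.mul_sum]
      rw [hsel d, ← hvol]
      rw [hc_def]
      have : t = vol - s := by rw [hvolst]; ring
      rw [this]
      field_simp
      ring
    -- quadratic form
    have hx : (diagonal (fun i => (Real.sqrt (d i))⁻¹)).mulVec (vs S) = fun i => χ i - c := by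
      funext i
      rw [mulVec_diagonal, hvsS]
      have : Real.sqrt (d i) ≠ 0 := by
        rw [Real.sqrt_ne_zero (hd0 i)]; exact ne_of_gt (hdpos i)
      field_simp
    have hform : (vs S) ⬝ᵥ NM.mulVec (vs S) = Q S := by
      rw [hNM, sub_mulVec, dotProduct_sub]
      have hterm2 : (vs S) ⬝ᵥ ((1 / vol) • vecMulVec δ δ).mulVec (vs S) = 0 := by
        have hvv : (vecMulVec δ δ).mulVec (vs S) = 0 := by
          funext i
          simp only [mulVec, vecMulVec_apply, dotProduct, Pi.zero_apply]
          have hre : ∑ x, δ i * δ x * vs S x = δ i * ∑ x, δ x * vs S x := by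
            rw [Finset.mul_sum]
            exact Finset.sum_congr rfl fun j _ => by ring
          rw [hre, show (∑ x, δ x * vs S x) = δ ⬝ᵥ vs S from rfl, hdot1, mul_zero]
        rw [smul_mulVec, hvv, smul_zero, dotProduct_zero]
      rw [hterm2, sub_zero]
      have hassoc : (diagonal (fun i => (Real.sqrt (d i))⁻¹) * A *
          diagonal (fun i => (Real.sqrt (d i))⁻¹)).mulVec (vs S) =
          (diagonal (fun i => (Real.sqrt (d i))⁻¹)).mulVec
            (A.mulVec ((diagonal (fun i => (Real.sqrt (d i))⁻¹)).mulVec (vs S))) := by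
        rw [mulVec_mulVec, mulVec_mulVec, Matrix.mul_assoc]
      rw [hassoc, hx]
      set y : Fin n → ℝ := A.mulVec (fun i => χ i - c) with hy_def
      have hleft : (vs S) ⬝ᵥ (diagonal (fun i => (Real.sqrt (d i))⁻¹)).mulVec y =
          ∑ i, (χ i - c) * y i := by
        simp only [dotProduct, mulVec_diagonal]
        refine Finset.sum_congr rfl fun i _ => ?_
        rw [hvsS]
        have hne : Real.sqrt (d i) ≠ 0 := by
          rw [Real.sqrt_ne_zero (hd0 i)]; exact ne_of_gt (hdpos i)
        field_simp
      rw [hleft]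
      -- now ∑ i, (χ i - c) * y i = Q S
      have hexpand : ∑ i, (χ i - c) * y i =
          ∑ i, ∑ j, (A i j * (χ i * χ j) - c * (A i j * χ j) - c * (A i j * χ i)
            + c * c * A i j) := by
        refine Finset.sum_congr rfl fun i _ => ?_
        rw [hy_def]
        simp only [mulVec, dotProduct]
        rw [Finset.mul_sum]
        refine Finset.sum_congr rfl fun j _ => ?_
        ring
      rw [hexpand]
      simp only [Finset.sum_add_distrib, Finset.sum_sub_distrib, ← Finset.mul_sum]
      have h1 : ∑ i, ∑ j, A i j * (χ i * χ j) = ∑ i ∈ S, ∑ j ∈ S, A i j := by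
        rw [← hsel (fun i => ∑ j ∈ S, A i j)]
        refine Finset.sum_congr rfl fun i _ => ?_
        rw [← hsel (fun j => A i j), Finset.mul_sum]
        refine Finset.sum_congr rfl fun j _ => ?_
        ring
      have h2 : ∑ i, ∑ j, A i j * χ i = s := by
        rw [hs_def, ← hsel d]
        refine Finset.sum_congr rfl fun i _ => ?_
        rw [hd]
        simp only
        rw [Finset.mul_sum]
        refine Finset.sum_congr rfl fun j _ => ?_
        ring
      have h3 : ∑ i, ∑ j, A i j * χ j = s := by
        rw [Finset.sum_comm, hs_def, ← hsel d]
        refine Finset.sum_congr rfl fun j _ => ?_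
        rw [← Finset.sum_mul]
        have : ∑ i, A i j = d j := by
          rw [hd]; simp only
          exact Finset.sum_congr rfl fun i _ => hsym i j
        rw [this]; ring
      have h4 : ∑ i, ∑ j, A i j = vol := by
        rw [hvol, hd]
      rw [h1, h2, h3, h4, hQ]
      rw [hc_def]
      field_simp
      try ring
    refine ⟨⟨hdot1, hdot2, ?_⟩, ?_, hform⟩
    · rw [hform, hdot2]
      rw [div_div_eq_mul_div]
    · intro h0
      have : (vs S) ⬝ᵥ (vs S) = 0 := by rw [h0]; simp
      rw [hdot2] at this
      have : s * t / vol > 0 := by positivity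
      linarith
  refine ⟨fun S hS hS' => (key S hS hS').1, ?_⟩
  obtain ⟨S, hS, hS', hq⟩ := hqN.1
  obtain ⟨⟨hdot1, hdot2, hquot⟩, hne, hform⟩ := key S hS hS'
  refine hμG.2 ⟨vs S, hne, ?_, ?_⟩
  · rw [dotProduct_comm]; exact hdot1
  · rw [hq, ← hquot]
end

section
/- Let G be a finite simple connected graph which is not a star, and let μ₁ be the rightmost (largest) eigenvalue of its normalized modularity matrix 𝓜. Then 1 - 2√(1 - μ₁²) ≤ q_G^{NCut} ≤ μ₁, where q_G^{NCut} is the normalized cut-modularity of G. -/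
open Matrix Finset

lemma rayleigh_bound {n : ℕ} (M : Matrix (Fin n) (Fin n) ℝ) (hM : M.IsHermitian) (μ : ℝ)
    (hub : ∀ ν : ℝ, (∃ v : Fin n → ℝ, v ≠ 0 ∧ M.mulVec v = ν • v) → ν ≤ μ)
    (y : Fin n → ℝ) : y ⬝ᵥ M.mulVec y ≤ μ * (y ⬝ᵥ y) := by
  classical
  have heig : ∀ i, hM.eigenvalues i ≤ μ := by
    intro i
    apply hub
    refine ⟨_, ?_, hM.mulVec_eigenvectorBasis i⟩
    intro h
    exact hM.eigenvectorBasis.toBasis.ne_zero i ((WithLp.equiv 2 _).injective (by simpa using h))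
  set U : Matrix (Fin n) (Fin n) ℝ := (hM.eigenvectorUnitary : Matrix (Fin n) (Fin n) ℝ) with hU
  have hstar : star U = Uᵀ := by
    ext i j; simp [Matrix.star_apply]
  have hUU : U * Uᵀ = 1 := by
    rw [← hstar]; exact Unitary.mul_star_self_of_mem hM.eigenvectorUnitary.2
  have hspec : M = U * diagonal hM.eigenvalues * Uᵀ := by
    rw [← hstar]
    simpa using hM.spectral_theorem
  set w : Fin n → ℝ := Uᵀ *ᵥ y with hw
  have hdot : ∀ z : Fin n → ℝ, y ⬝ᵥ (U *ᵥ z) = w ⬝ᵥ z := by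
    intro z
    rw [dotProduct_mulVec, hw, mulVec_transpose]
  have h1 : y ⬝ᵥ M.mulVec y = ∑ i, hM.eigenvalues i * (w i)^2 := by
    calc y ⬝ᵥ M.mulVec y = y ⬝ᵥ ((U * diagonal hM.eigenvalues * Uᵀ) *ᵥ y) := by rw [← hspec]
    _ = y ⬝ᵥ (U *ᵥ (diagonal hM.eigenvalues *ᵥ w)) := by
          rw [← mulVec_mulVec, ← mulVec_mulVec]
    _ = w ⬝ᵥ (diagonal hM.eigenvalues *ᵥ w) := hdot _
    _ = ∑ i, hM.eigenvalues i * (w i)^2 := by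
          simp [dotProduct, mulVec_diagonal]
          exact Finset.sum_congr rfl fun i _ => by ring
  have h2 : y ⬝ᵥ y = ∑ i, (w i)^2 := by
    have : w ⬝ᵥ w = y ⬝ᵥ y := by
      calc w ⬝ᵥ w = (w ᵥ* Uᵀ) ⬝ᵥ y := by rw [← dotProduct_mulVec]
      _ = (U *ᵥ (Uᵀ *ᵥ y)) ⬝ᵥ y := by rw [vecMul_transpose, hw]
      _ = ((U * Uᵀ) *ᵥ y) ⬝ᵥ y := by rw [mulVec_mulVec]
      _ = y ⬝ᵥ y := by rw [hUU, one_mulVec]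
    rw [← this]; simp [dotProduct, sq]
  rw [h1, h2, Finset.mul_sum]
  apply Finset.sum_le_sum
  intro i _
  exact mul_le_mul_of_nonneg_right (heig i) (sq_nonneg _)

lemma sweep_lemma {n : ℕ} (A : Matrix (Fin n) (Fin n) ℝ)
    (hAsym : ∀ i j, A i j = A j i) (hA0 : ∀ i j, 0 ≤ A i j)
    (d : Fin n → ℝ)
    (g : Fin n → ℝ) (hg : ∀ i, 0 ≤ g i) (hgmin : ∃ i, g i = 0)
    (c : ℝ) (hc : 0 ≤ c)
    (hcut : ∀ C : Finset (Fin n), C.Nonempty → C ≠ univ → (∀ i ∈ C, 0 < g i) →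
      c * ∑ i ∈ C, d i ≤ ∑ i ∈ C, ∑ j ∈ Cᶜ, A i j) :
    2 * c * (∑ i, d i * g i ^ 2) ≤ ∑ i, ∑ j, A i j * |g i ^ 2 - g j ^ 2| := by
  classical
  rcases Nat.eq_zero_or_pos n with hn | hpos
  · subst hn; simp
  set w : Fin n → ℝ := fun i => g i ^ 2 with hwdef
  have hw0 : ∀ i, 0 ≤ w i := fun i => sq_nonneg _
  set e : Equiv.Perm (Fin n) := Fin.revPerm.trans (Tuple.sort w) with hedef
  set W : Fin n → ℝ := fun p => w (e p) with hWdef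
  have hWanti : Antitone W := by
    intro p q hpq
    have : (q : Fin n).rev ≤ p.rev := by rwa [Fin.rev_le_rev]
    exact Tuple.monotone_sort w this
  have hW0 : ∀ p, 0 ≤ W p := fun p => hw0 _
  have hWlast : W ⟨n-1, by omega⟩ = 0 := by
    obtain ⟨i, hi⟩ := hgmin
    have hwi : W (e.symm i) = 0 := by simp [hWdef, hwdef, hi]
    have h1 : W ⟨n-1, by omega⟩ ≤ W (e.symm i) := by
      apply hWanti
      have h2 := (e.symm i).isLt
      rw [Fin.le_def]
      simp only []
      omega
    exact le_antisymm (hwi ▸ h1) (hW0 _)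
  have hcl : ∀ k : ℕ, min k (n-1) < n := fun k => by omega
  set u : ℕ → ℝ := fun k => W ⟨min k (n-1), hcl k⟩ with hudef
  have hu_anti : ∀ a b : ℕ, a ≤ b → u b ≤ u a := by
    intro a b hab
    apply hWanti
    rw [Fin.mk_le_mk]
    omega
  have hu0 : ∀ k, 0 ≤ u k := fun k => hW0 _
  have hup : ∀ p : Fin n, u p = W p := by
    intro p
    have := p.isLt
    show W _ = W p
    congr 1
    exact Fin.ext (by show min (p:ℕ) (n-1) = (p:ℕ); omega)
  have hulast : u (n-1) = 0 := by
    show W _ = 0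
    rw [← hWlast]
    congr 1
    exact Fin.ext (by show min (n-1) (n-1) = n-1; omega)
  set Δ : ℕ → ℝ := fun k => u k - u (k+1) with hΔdef
  have hΔ0 : ∀ k, 0 ≤ Δ k := fun k => sub_nonneg.2 (hu_anti k (k+1) (by omega))
  set χ : Fin n → ℕ → ℝ := fun p k => if (p : ℕ) ≤ k then 1 else 0 with hχdef
  have htel : ∀ p : Fin n, ∑ k ∈ range (n-1), Δ k * χ p k = W p := by
    intro p
    have hterm : ∀ k, Δ k * χ p k = u (max k (p:ℕ)) - u (max (k+1) (p:ℕ)) := by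
      intro k
      by_cases hpk : (p:ℕ) ≤ k
      · have h1 : max k (p:ℕ) = k := by omega
        have h2 : max (k+1) (p:ℕ) = k+1 := by omega
        simp [hχdef, hΔdef, hpk, h1, h2]
      · have h1 : max k (p:ℕ) = (p:ℕ) := by omega
        have h2 : max (k+1) (p:ℕ) = (p:ℕ) := by omega
        simp [hχdef, hpk, h1, h2]
    calc ∑ k ∈ range (n-1), Δ k * χ p k
        = ∑ k ∈ range (n-1), ((fun k => u (max k (p:ℕ))) k - (fun k => u (max k (p:ℕ))) (k+1)) := by
          exact Finset.sum_congr rfl fun k _ => hterm k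
      _ = u (max 0 (p:ℕ)) - u (max (n-1) (p:ℕ)) := Finset.sum_range_sub' _ _
      _ = W p := by
          have hp : (p:ℕ) < n := p.isLt
          have h1 : max 0 (p:ℕ) = (p:ℕ) := by omega
          have h2 : max (n-1) (p:ℕ) = n-1 := by omega
          rw [h1, h2, hulast, hup]
          ring
  have habs2 : ∀ p q : Fin n, p ≤ q → |W p - W q| = ∑ k ∈ range (n-1), Δ k * |χ p k - χ q k| := by
    intro p q hpq
    have hpq' : (p:ℕ) ≤ (q:ℕ) := hpq
    have hχle : ∀ k, χ q k ≤ χ p k := by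
      intro k
      by_cases h : (q:ℕ) ≤ k
      · have h2 : (p:ℕ) ≤ k := le_trans hpq' h
        simp [hχdef, h, h2]
      · simp only [hχdef, h, if_false]
        by_cases h2 : (p:ℕ) ≤ k <;> simp [h2]
    rw [abs_of_nonneg (sub_nonneg.2 (hWanti hpq))]
    rw [← htel p, ← htel q, ← Finset.sum_sub_distrib]
    refine Finset.sum_congr rfl fun k _ => ?_
    rw [abs_of_nonneg (sub_nonneg.2 (hχle k)), mul_sub]
  have habs : ∀ p q : Fin n, |W p - W q| = ∑ k ∈ range (n-1), Δ k * |χ p k - χ q k| := by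
    intro p q
    rcases le_total p q with h | h
    · exact habs2 p q h
    · rw [abs_sub_comm, habs2 q p h]
      exact Finset.sum_congr rfl fun k _ => by rw [abs_sub_comm]
  set C : ℕ → Finset (Fin n) := fun k => univ.filter (fun i => ((e.symm i : Fin n) : ℕ) ≤ k) with hCdef
  have hPc : ∀ k, (C k)ᶜ = univ.filter (fun j => ¬ ((e.symm j : Fin n) : ℕ) ≤ k) := by
    intro k; ext j; simp [hCdef]
  have hcutC : ∀ k, ∑ p : Fin n, ∑ q : Fin n, A (e p) (e q) * |χ p k - χ q k|
      = 2 * ∑ i ∈ C k, ∑ j ∈ (C k)ᶜ, A i j := by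
    intro k
    have inner : ∀ i, ∑ j ∈ (C k)ᶜ, A i j = ∑ q : Fin n, (if ¬ (q:ℕ) ≤ k then A i (e q) else 0) := by
      intro i
      rw [hPc, Finset.sum_filter]
      rw [← Equiv.sum_comp e (fun j => if ¬ ((e.symm j : Fin n):ℕ) ≤ k then A i j else 0)]
      exact Finset.sum_congr rfl fun q _ => by simp
    have outer : ∑ i ∈ C k, ∑ j ∈ (C k)ᶜ, A i j
        = ∑ p : Fin n, ∑ q : Fin n, (if (p:ℕ) ≤ k ∧ ¬ (q:ℕ) ≤ k then A (e p) (e q) else 0) := by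
      calc ∑ i ∈ C k, ∑ j ∈ (C k)ᶜ, A i j
          = ∑ i, (if ((e.symm i : Fin n):ℕ) ≤ k then ∑ j ∈ (C k)ᶜ, A i j else 0) := by
            rw [hCdef, Finset.sum_filter]
        _ = ∑ p : Fin n, (if (p:ℕ) ≤ k then ∑ q : Fin n, (if ¬ (q:ℕ) ≤ k then A (e p) (e q) else 0) else 0) := by
            rw [← Equiv.sum_comp e
              (fun i => if ((e.symm i : Fin n):ℕ) ≤ k then ∑ j ∈ (C k)ᶜ, A i j else 0)]
            refine Finset.sum_congr rfl fun p _ => ?_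
            rw [inner]
            simp
        _ = ∑ p : Fin n, ∑ q : Fin n, (if (p:ℕ) ≤ k ∧ ¬ (q:ℕ) ≤ k then A (e p) (e q) else 0) := by
            refine Finset.sum_congr rfl fun p _ => ?_
            by_cases hp : (p:ℕ) ≤ k <;> simp [hp]
    have outer2 : ∑ p : Fin n, ∑ q : Fin n, (if (q:ℕ) ≤ k ∧ ¬ (p:ℕ) ≤ k then A (e p) (e q) else 0)
        = ∑ i ∈ C k, ∑ j ∈ (C k)ᶜ, A i j := by
      rw [outer, Finset.sum_comm]
      refine Finset.sum_congr rfl fun p _ => Finset.sum_congr rfl fun q _ => ?_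
      rw [hAsym (e p) (e q)]
    have hsplit : ∀ p q : Fin n, A (e p) (e q) * |χ p k - χ q k| =
        (if (p:ℕ) ≤ k ∧ ¬ (q:ℕ) ≤ k then A (e p) (e q) else 0)
        + (if (q:ℕ) ≤ k ∧ ¬ (p:ℕ) ≤ k then A (e p) (e q) else 0) := by
      intro p q
      by_cases hp : (p:ℕ) ≤ k <;> by_cases hq : (q:ℕ) ≤ k <;>
        simp [hχdef, hp, hq]
    calc ∑ p : Fin n, ∑ q : Fin n, A (e p) (e q) * |χ p k - χ q k|
        = ∑ p : Fin n, ∑ q : Fin n, ((if (p:ℕ) ≤ k ∧ ¬ (q:ℕ) ≤ k then A (e p) (e q) else 0)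
            + (if (q:ℕ) ≤ k ∧ ¬ (p:ℕ) ≤ k then A (e p) (e q) else 0)) := by
          exact Finset.sum_congr rfl fun p _ => Finset.sum_congr rfl fun q _ => hsplit p q
      _ = (∑ p : Fin n, ∑ q : Fin n, (if (p:ℕ) ≤ k ∧ ¬ (q:ℕ) ≤ k then A (e p) (e q) else 0))
          + ∑ p : Fin n, ∑ q : Fin n, (if (q:ℕ) ≤ k ∧ ¬ (p:ℕ) ≤ k then A (e p) (e q) else 0) := by
          rw [← Finset.sum_add_distrib]
          exact Finset.sum_congr rfl fun p _ => Finset.sum_add_distrib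
      _ = 2 * ∑ i ∈ C k, ∑ j ∈ (C k)ᶜ, A i j := by
          rw [← outer, outer2]; ring
  have hT : ∑ i, ∑ j, A i j * |w i - w j|
      = ∑ k ∈ range (n-1), Δ k * (∑ p : Fin n, ∑ q : Fin n, A (e p) (e q) * |χ p k - χ q k|) := by
    calc ∑ i, ∑ j, A i j * |w i - w j|
        = ∑ p : Fin n, ∑ q : Fin n, A (e p) (e q) * |W p - W q| := by
          rw [← Equiv.sum_comp e (fun i => ∑ j, A i j * |w i - w j|)]
          refine Finset.sum_congr rfl fun p _ => ?_
          rw [← Equiv.sum_comp e (fun j => A (e p) j * |w (e p) - w j|)]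
      _ = ∑ p : Fin n, ∑ q : Fin n, ∑ k ∈ range (n-1), Δ k * (A (e p) (e q) * |χ p k - χ q k|) := by
          refine Finset.sum_congr rfl fun p _ => Finset.sum_congr rfl fun q _ => ?_
          rw [habs p q, Finset.mul_sum]
          exact Finset.sum_congr rfl fun k _ => by ring
      _ = ∑ p : Fin n, ∑ k ∈ range (n-1), ∑ q : Fin n, Δ k * (A (e p) (e q) * |χ p k - χ q k|) :=
          Finset.sum_congr rfl fun p _ => Finset.sum_comm
      _ = ∑ k ∈ range (n-1), ∑ p : Fin n, ∑ q : Fin n, Δ k * (A (e p) (e q) * |χ p k - χ q k|) :=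
          Finset.sum_comm
      _ = ∑ k ∈ range (n-1), Δ k * (∑ p : Fin n, ∑ q : Fin n, A (e p) (e q) * |χ p k - χ q k|) := by
          refine Finset.sum_congr rfl fun k _ => ?_
          rw [Finset.mul_sum]
          refine Finset.sum_congr rfl fun p _ => ?_
          rw [Finset.mul_sum]
  have hbound : ∀ k ∈ range (n-1), Δ k * (2 * c * ∑ i ∈ C k, d i)
      ≤ Δ k * (∑ p : Fin n, ∑ q : Fin n, A (e p) (e q) * |χ p k - χ q k|) := by
    intro k hk
    rcases (hΔ0 k).eq_or_lt with h0 | hpos'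
    · rw [← h0]; simp
    apply mul_le_mul_of_nonneg_left _ (hΔ0 k)
    rw [hcutC k]
    have hk' : k < n - 1 := Finset.mem_range.1 hk
    have hne : (C k).Nonempty := by
      refine ⟨e ⟨0, hpos⟩, ?_⟩
      simp [hCdef]
    have hnuniv : C k ≠ univ := by
      intro hC
      have hmem : e ⟨n-1, by omega⟩ ∈ C k := hC ▸ mem_univ _
      rw [hCdef] at hmem
      simp only [Finset.mem_filter, Finset.mem_univ, true_and, Equiv.symm_apply_apply] at hmem
      omega
    have hposg : ∀ i ∈ C k, 0 < g i := by
      intro i hi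
      rw [hCdef] at hi
      simp only [Finset.mem_filter, Finset.mem_univ, true_and] at hi
      have h1 : u k ≤ u ((e.symm i : Fin n) : ℕ) := hu_anti _ _ hi
      rw [hup] at h1
      have h2 : 0 < u k := lt_of_le_of_lt (hu0 (k+1)) (by simp only [hΔdef] at hpos'; linarith)
      have h3 : 0 < w i := by
        have hWi : W (e.symm i) = w i := by simp [hWdef]
        linarith
      rcases (hg i).lt_or_eq with h | h
      · exact h
      · exfalso
        rw [hwdef] at h3
        simp only [← h] at h3
        simp at h3
    have hc2 := hcut (C k) hne hnuniv hposg
    linarith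
  have hvolCk : ∀ k, ∑ i ∈ C k, d i = ∑ p : Fin n, d (e p) * χ p k := by
    intro k
    rw [hCdef, Finset.sum_filter,
      ← Equiv.sum_comp e (fun i => if ((e.symm i : Fin n):ℕ) ≤ k then d i else 0)]
    refine Finset.sum_congr rfl fun p _ => ?_
    simp only [Equiv.symm_apply_apply, hχdef, mul_ite, mul_one, mul_zero]
  have hvol : ∑ k ∈ range (n-1), Δ k * (2 * c * ∑ i ∈ C k, d i) = 2 * c * ∑ i, d i * w i := by
    calc ∑ k ∈ range (n-1), Δ k * (2 * c * ∑ i ∈ C k, d i)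
        = ∑ k ∈ range (n-1), ∑ p : Fin n, (2 * c) * (d (e p) * (Δ k * χ p k)) := by
          refine Finset.sum_congr rfl fun k _ => ?_
          rw [hvolCk k, Finset.mul_sum, Finset.mul_sum]
          exact Finset.sum_congr rfl fun p _ => by ring
      _ = ∑ p : Fin n, ∑ k ∈ range (n-1), (2 * c) * (d (e p) * (Δ k * χ p k)) := Finset.sum_comm
      _ = ∑ p : Fin n, (2 * c) * (d (e p) * W p) := by
          refine Finset.sum_congr rfl fun p _ => ?_
          rw [← htel p, Finset.mul_sum, Finset.mul_sum]
      _ = 2 * c * ∑ i, d i * w i := by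
          simp only [hWdef]
          rw [Equiv.sum_comp e (fun i => (2*c) * (d i * w i)), ← Finset.mul_sum]
  calc 2 * c * (∑ i, d i * g i ^ 2) = ∑ k ∈ range (n-1), Δ k * (2 * c * ∑ i ∈ C k, d i) := hvol.symm
    _ ≤ ∑ k ∈ range (n-1), Δ k * (∑ p : Fin n, ∑ q : Fin n, A (e p) (e q) * |χ p k - χ q k|) :=
        Finset.sum_le_sum hbound
    _ = ∑ i, ∑ j, A i j * |g i ^ 2 - g j ^ 2| := hT.symm


/-- Cheeger-type inequality: If `G` is not a star and `μ₁` is the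
rightmost eigenvalue of the normalized modularity matrix `𝓜`, then
`1 - 2√(1 - μ₁²) ≤ q_G^{NCut} ≤ μ₁`. -/
theorem cheeger_type_inequality_for_normalized_cut_modularity
    {n : ℕ} (hn : 0 < n) (G : SimpleGraph (Fin n)) [DecidableRel G.Adj]
    (hconn : G.Connected)
    (hnotstar : ¬ (2 ≤ n ∧
      ∃ c : Fin n, ∀ i j : Fin n, G.Adj i j ↔ (i ≠ j ∧ (i = c ∨ j = c))))
    (A : Matrix (Fin n) (Fin n) ℝ) (hA : A = G.adjMatrix ℝ)
    (d : Fin n → ℝ) (hd : d = fun i => ∑ j, A i j)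
    (vol : ℝ) (hvol : vol = ∑ i, d i)
    (δ : Fin n → ℝ) (hδ : δ = fun i => Real.sqrt (d i))
    (NM : Matrix (Fin n) (Fin n) ℝ)
    (hNM : NM = diagonal (fun i => (Real.sqrt (d i))⁻¹) * A *
                diagonal (fun i => (Real.sqrt (d i))⁻¹) - (1 / vol) • vecMulVec δ δ)
    (μ₁ : ℝ)
    (hμ₁ : IsGreatest {μ : ℝ | ∃ v : Fin n → ℝ, v ≠ 0 ∧ NM.mulVec v = μ • v} μ₁)
    (Q : Finset (Fin n) → ℝ)
    (hQ : ∀ S, Q S = (∑ i ∈ S, ∑ j ∈ S, A i j) - (∑ i ∈ S, d i) ^ 2 / vol)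
    (qN : ℝ)
    (hqN : IsGreatest {q : ℝ | ∃ S : Finset (Fin n), S.Nonempty ∧ S ≠ univ ∧
            q = Q S * vol / ((∑ i ∈ S, d i) * (∑ i ∈ Sᶜ, d i))} qN) :
    1 - 2 * Real.sqrt (1 - μ₁ ^ 2) ≤ qN ∧ qN ≤ μ₁ := by
  classical
  -- exclude n = 1
  rcases Nat.lt_or_ge n 2 with hn1 | hn2
  · exfalso
    obtain ⟨S, hS1, hS2, _⟩ := hqN.1
    apply hS2
    apply Finset.eq_univ_iff_forall.2
    intro j
    obtain ⟨i, hi⟩ := hS1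
    have hji : j = i := Fin.ext (by omega)
    rwa [hji]
  -- basic adjacency facts
  have hdi : ∀ i, d i = ∑ j, A i j := fun i => by rw [hd]
  have hAap : ∀ i j, A i j = if G.Adj i j then 1 else 0 := fun i j => by
    rw [hA]; simp [SimpleGraph.adjMatrix]
  have hA0 : ∀ i j, 0 ≤ A i j := fun i j => by
    rw [hAap]; split_ifs <;> norm_num
  have hAsym : ∀ i j, A i j = A j i := fun i j => by
    rw [hAap, hAap]; simp [SimpleGraph.adj_comm]
  have hAsq : ∀ i j, A i j * A i j = A i j := fun i j => by
    rw [hAap]; split_ifs <;> norm_num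
  have hd1 : ∀ i, (1:ℝ) ≤ d i := by
    intro i
    have hnb : ∃ j, G.Adj i j := by
      have hex : ∃ j : Fin n, j ≠ i := by
        refine ⟨if i = ⟨0, by omega⟩ then ⟨1, by omega⟩ else ⟨0, by omega⟩, ?_⟩
        split_ifs with h
        · rw [h]; intro hc; simpa using congrArg Fin.val hc
        · exact Ne.symm h
      obtain ⟨j, hj⟩ := hex
      obtain ⟨w⟩ := hconn.preconnected i j
      cases w with
      | nil => exact absurd rfl (Ne.symm hj)
      | cons h p => exact ⟨_, h⟩
    obtain ⟨j, hj⟩ := hnb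
    rw [hdi]
    have h1 : A i j = 1 := by rw [hAap]; simp [hj]
    calc (1:ℝ) = A i j := h1.symm
    _ ≤ ∑ k, A i k := Finset.single_le_sum (fun k _ => hA0 i k) (mem_univ j)
  have hdpos : ∀ i, (0:ℝ) < d i := fun i => lt_of_lt_of_le one_pos (hd1 i)
  have hvolpos : 0 < vol := by
    rw [hvol]
    exact Finset.sum_pos (fun i _ => hdpos i) ⟨⟨0, hn⟩, mem_univ _⟩
  have hvolne : vol ≠ 0 := ne_of_gt hvolpos
  have hsqpos : ∀ i, 0 < Real.sqrt (d i) := fun i => Real.sqrt_pos.2 (hdpos i)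
  have hsqne : ∀ i, Real.sqrt (d i) ≠ 0 := fun i => ne_of_gt (hsqpos i)
  have hδa : ∀ i, δ i = Real.sqrt (d i) := fun i => by rw [hδ]
  have hsqmul : ∀ i, Real.sqrt (d i) * Real.sqrt (d i) = d i :=
    fun i => Real.mul_self_sqrt (le_of_lt (hdpos i))
  have hNMap : ∀ i j, NM i j =
      (Real.sqrt (d i))⁻¹ * A i j * (Real.sqrt (d j))⁻¹ - 1/vol * (δ i * δ j) := by
    intro i j
    rw [hNM]
    simp [Matrix.sub_apply, Matrix.smul_apply, Matrix.vecMulVec_apply, Matrix.diagonal_mul,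
      Matrix.mul_diagonal, smul_eq_mul]
  have hNMsym : ∀ i j, NM i j = NM j i := by
    intro i j; rw [hNMap, hNMap, hAsym]; ring
  have hNMherm : NM.IsHermitian := by
    apply Matrix.ext
    intro i j
    rw [Matrix.conjTranspose_apply, star_trivial]
    exact hNMsym j i
  have hmv : ∀ (M : Matrix (Fin n) (Fin n) ℝ) (x : Fin n → ℝ) (i : Fin n),
      M.mulVec x i = ∑ j, M i j * x j := fun M x i => rfl
  have hδd : ∀ i, δ i * δ i = d i := fun i => by rw [hδa, hsqmul]
  have hNMδ : NM.mulVec δ = (0:ℝ) • δ := by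
    funext i
    rw [hmv]
    have hterm : ∀ j, NM i j * δ j = (Real.sqrt (d i))⁻¹ * A i j - 1/vol * δ i * d j := by
      intro j
      rw [hNMap]
      have h2 : δ j * Real.sqrt (d j) = d j := by rw [hδa j, hsqmul j]
      calc ((Real.sqrt (d i))⁻¹ * A i j * (Real.sqrt (d j))⁻¹ - 1/vol * (δ i * δ j)) * δ j
          = (Real.sqrt (d i))⁻¹ * A i j * ((Real.sqrt (d j))⁻¹ * Real.sqrt (d j))
            - 1/vol * δ i * (δ j * Real.sqrt (d j)) := by rw [hδa j]; ring
        _ = (Real.sqrt (d i))⁻¹ * A i j - 1/vol * δ i * d j := by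
            rw [inv_mul_cancel₀ (hsqne j), mul_one, h2]
    have hsd : (Real.sqrt (d i))⁻¹ * d i = Real.sqrt (d i) := by
      rw [inv_mul_eq_div, div_eq_iff (hsqne i)]
      exact (hsqmul i).symm
    calc ∑ j, NM i j * δ j
        = ∑ j, ((Real.sqrt (d i))⁻¹ * A i j - 1/vol * δ i * d j) :=
          Finset.sum_congr rfl fun j _ => hterm j
      _ = (Real.sqrt (d i))⁻¹ * (∑ j, A i j) - 1/vol * δ i * (∑ j, d j) := by
          rw [Finset.sum_sub_distrib, Finset.mul_sum, Finset.mul_sum]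
      _ = Real.sqrt (d i) - δ i := by
          rw [← hdi, ← hvol, hsd]
          field_simp
      _ = ((0:ℝ) • δ) i := by rw [hδa i]; simp
  have hδne : δ ≠ 0 := by
    intro h0
    have := congrFun h0 ⟨0, hn⟩
    rw [hδa] at this
    exact hsqne _ (by simpa using this)
  have hμnonneg : 0 ≤ μ₁ := hμ₁.2 ⟨δ, hδne, hNMδ⟩
  -- per-set facts
  have keyS : ∀ S : Finset (Fin n), S.Nonempty → S ≠ univ →
      0 < (∑ i ∈ S, d i) ∧ 0 < (∑ i ∈ Sᶜ, d i) ∧ (∑ i ∈ S, d i) + (∑ i ∈ Sᶜ, d i) = vol ∧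
      Q S * vol = (∑ i ∈ S, d i) * (∑ i ∈ Sᶜ, d i) - (∑ i ∈ S, ∑ j ∈ Sᶜ, A i j) * vol ∧
      0 ≤ (∑ i ∈ S, ∑ j ∈ Sᶜ, A i j) ∧
      (∑ i ∈ S, ∑ j ∈ Sᶜ, A i j) * vol ≤ 2 * ((∑ i ∈ S, d i) * (∑ i ∈ Sᶜ, d i)) := by
    intro S hSne hSuniv
    have hvolS : 0 < ∑ i ∈ S, d i := Finset.sum_pos (fun i _ => hdpos i) hSne
    have hScne : Sᶜ.Nonempty := by
      rw [← Finset.card_pos]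
      have hcc := Finset.card_compl S
      have h2 : S.card < Fintype.card (Fin n) :=
        Finset.card_lt_card (lt_of_le_of_ne (Finset.subset_univ S) hSuniv)
      omega
    have hvolSc : 0 < ∑ i ∈ Sᶜ, d i := Finset.sum_pos (fun i _ => hdpos i) hScne
    have hsum : (∑ i ∈ S, d i) + (∑ i ∈ Sᶜ, d i) = vol := by
      rw [hvol, Finset.sum_add_sum_compl]
    have hrow : ∀ i, (∑ j ∈ S, A i j) + (∑ j ∈ Sᶜ, A i j) = d i := fun i => by
      rw [Finset.sum_add_sum_compl, hdi]
    have hein : (∑ i ∈ S, ∑ j ∈ S, A i j) + (∑ i ∈ S, ∑ j ∈ Sᶜ, A i j) = ∑ i ∈ S, d i := by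
      rw [← Finset.sum_add_distrib]
      exact Finset.sum_congr rfl fun i _ => hrow i
    have hcut0 : 0 ≤ ∑ i ∈ S, ∑ j ∈ Sᶜ, A i j :=
      Finset.sum_nonneg fun i _ => Finset.sum_nonneg fun j _ => hA0 i j
    have hein0 : 0 ≤ ∑ i ∈ S, ∑ j ∈ S, A i j :=
      Finset.sum_nonneg fun i _ => Finset.sum_nonneg fun j _ => hA0 i j
    have hcut_le1 : (∑ i ∈ S, ∑ j ∈ Sᶜ, A i j) ≤ ∑ i ∈ S, d i := by linarith
    have hcut_le2 : (∑ i ∈ S, ∑ j ∈ Sᶜ, A i j) ≤ ∑ j ∈ Sᶜ, d j := by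
      refine Finset.sum_comm.trans_le ?_
      apply Finset.sum_le_sum
      intro j _
      calc ∑ i ∈ S, A i j ≤ ∑ i, A i j :=
            Finset.sum_le_sum_of_subset_of_nonneg (Finset.subset_univ S) (fun i _ _ => hA0 i j)
        _ = ∑ i, A j i := Finset.sum_congr rfl fun i _ => hAsym i j
        _ = d j := (hdi j).symm
    have hQid : Q S * vol = (∑ i ∈ S, d i) * (∑ i ∈ Sᶜ, d i) - (∑ i ∈ S, ∑ j ∈ Sᶜ, A i j) * vol := by
      rw [hQ]
      have h1 : ∑ i ∈ S, ∑ j ∈ S, A i j = (∑ i ∈ S, d i) - ∑ i ∈ S, ∑ j ∈ Sᶜ, A i j := by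
        linarith
      have h2 : ∑ i ∈ Sᶜ, d i = vol - ∑ i ∈ S, d i := by linarith
      rw [h1, h2]
      field_simp
      ring
    refine ⟨hvolS, hvolSc, hsum, hQid, hcut0, ?_⟩
    nlinarith [mul_le_mul_of_nonneg_right hcut_le2 (le_of_lt hvolS),
      mul_le_mul_of_nonneg_right hcut_le1 (le_of_lt hvolSc)]
  -- crude bounds on qN
  have hqN1 : qN ≤ 1 := by
    obtain ⟨S, hSne, hSuniv, hq⟩ := hqN.1
    obtain ⟨h1, h2, h3, h4, h5, h6⟩ := keyS S hSne hSuniv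
    have hX : 0 < (∑ i ∈ S, d i) * (∑ i ∈ Sᶜ, d i) := mul_pos h1 h2
    rw [hq, div_le_one hX, h4]
    nlinarith [mul_nonneg h5 (le_of_lt hvolpos)]
  have hqNm1 : -1 ≤ qN := by
    obtain ⟨S, hSne, hSuniv, hq⟩ := hqN.1
    obtain ⟨h1, h2, h3, h4, h5, h6⟩ := keyS S hSne hSuniv
    have hX : 0 < (∑ i ∈ S, d i) * (∑ i ∈ Sᶜ, d i) := mul_pos h1 h2
    rw [hq, le_div_iff₀ hX, h4]
    linarith
  -- generic split of a double sum by S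
  have hsplit2 : ∀ (S : Finset (Fin n)) (F : Fin n → Fin n → ℝ), ∑ i, ∑ j, F i j =
      ((∑ i ∈ S, ∑ j ∈ S, F i j) + (∑ i ∈ S, ∑ j ∈ Sᶜ, F i j)) +
      ((∑ i ∈ Sᶜ, ∑ j ∈ S, F i j) + ∑ i ∈ Sᶜ, ∑ j ∈ Sᶜ, F i j) := by
    intro S F
    rw [← Finset.sum_add_sum_compl S (fun i => ∑ j, F i j)]
    congr 1
    · rw [← Finset.sum_add_distrib]
      exact Finset.sum_congr rfl fun i _ => (Finset.sum_add_sum_compl S (F i)).symm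
    · rw [← Finset.sum_add_distrib]
      exact Finset.sum_congr rfl fun i _ => (Finset.sum_add_sum_compl S (F i)).symm
  have hfac : ∀ (T U : Finset (Fin n)) (K : ℝ), (∑ i ∈ T, ∑ j ∈ U, A i j * K)
      = (∑ i ∈ T, ∑ j ∈ U, A i j) * K := by
    intro T U K
    rw [Finset.sum_mul]
    exact Finset.sum_congr rfl fun i _ => by rw [Finset.sum_mul]
  have hcutsym : ∀ S : Finset (Fin n), (∑ i ∈ Sᶜ, ∑ j ∈ S, A i j) = ∑ i ∈ S, ∑ j ∈ Sᶜ, A i j := by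
    intro S
    refine Finset.sum_comm.trans ?_
    exact Finset.sum_congr rfl fun i _ => Finset.sum_congr rfl fun j _ => hAsym j i
  -- upper bound
  have hupper : qN ≤ μ₁ := by
    obtain ⟨S, hSne, hSuniv, hq⟩ := hqN.1
    obtain ⟨h1, h2, h3, h4, h5, h6⟩ := keyS S hSne hSuniv
    set volS := ∑ i ∈ S, d i with hvolS
    set volSc := ∑ i ∈ Sᶜ, d i with hvolSc
    set c := volS / vol with hc
    set z : Fin n → ℝ := fun i => (if i ∈ S then (1:ℝ) else 0) - c with hz
    set y : Fin n → ℝ := fun i => Real.sqrt (d i) * z i with hy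
    have hzS : ∀ i ∈ S, z i = 1 - c := fun i hi => by simp [hz, hi]
    have hzSc : ∀ i ∈ Sᶜ, z i = -c := fun i hi => by
      have : i ∉ S := Finset.mem_compl.1 hi
      simp [hz, this]
    have hyi : ∀ i, y i = Real.sqrt (d i) * z i := fun i => rfl
    have hδy : ∀ i, δ i * y i = d i * z i := by
      intro i
      rw [hyi, hδa i, ← mul_assoc, hsqmul i]
    have hδysum : ∑ i, δ i * y i = 0 := by
      have : ∀ i, δ i * y i = (if i ∈ S then d i * (1-c) else 0) + (if i ∈ Sᶜ then d i * (-c) else 0) := by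
        intro i
        by_cases hi : i ∈ S
        · rw [hδy i, hzS i hi]; simp [hi]
        · rw [hδy i, hzSc i (Finset.mem_compl.2 hi)]; simp [hi]
      rw [Finset.sum_congr rfl fun i _ => this i, Finset.sum_add_distrib,
        Finset.sum_ite_mem, Finset.sum_ite_mem, Finset.univ_inter, Finset.univ_inter,
        ← Finset.sum_mul, ← Finset.sum_mul, ← hvolS, ← hvolSc]
      have hVc : volSc = vol - volS := by linarith
      rw [hVc, hc]
      field_simp
      ring
    -- numerator
    have hein : (∑ i ∈ S, ∑ j ∈ S, A i j) + (∑ i ∈ S, ∑ j ∈ Sᶜ, A i j) = volS := by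
      rw [← Finset.sum_add_distrib]
      exact Finset.sum_congr rfl fun i _ => by rw [Finset.sum_add_sum_compl, hdi]
    have heinc : (∑ i ∈ Sᶜ, ∑ j ∈ Sᶜ, A i j) + (∑ i ∈ Sᶜ, ∑ j ∈ S, A i j) = volSc := by
      rw [← Finset.sum_add_distrib]
      refine Finset.sum_congr rfl fun i _ => ?_
      rw [add_comm, Finset.sum_add_sum_compl, hdi]
    have hAzz : ∑ i, ∑ j, A i j * (z i * z j) = Q S := by
      rw [hsplit2 S (fun i j => A i j * (z i * z j))]
      have e11 : ∑ i ∈ S, ∑ j ∈ S, A i j * (z i * z j)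
          = (∑ i ∈ S, ∑ j ∈ S, A i j) * ((1-c)*(1-c)) := by
        rw [← hfac]
        exact Finset.sum_congr rfl fun i hi => Finset.sum_congr rfl fun j hj => by
          rw [hzS i hi, hzS j hj]
      have e12 : ∑ i ∈ S, ∑ j ∈ Sᶜ, A i j * (z i * z j)
          = (∑ i ∈ S, ∑ j ∈ Sᶜ, A i j) * ((1-c)*(-c)) := by
        rw [← hfac]
        exact Finset.sum_congr rfl fun i hi => Finset.sum_congr rfl fun j hj => by
          rw [hzS i hi, hzSc j hj]
      have e21 : ∑ i ∈ Sᶜ, ∑ j ∈ S, A i j * (z i * z j)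
          = (∑ i ∈ Sᶜ, ∑ j ∈ S, A i j) * ((-c)*(1-c)) := by
        rw [← hfac]
        exact Finset.sum_congr rfl fun i hi => Finset.sum_congr rfl fun j hj => by
          rw [hzSc i hi, hzS j hj]
      have e22 : ∑ i ∈ Sᶜ, ∑ j ∈ Sᶜ, A i j * (z i * z j)
          = (∑ i ∈ Sᶜ, ∑ j ∈ Sᶜ, A i j) * ((-c)*(-c)) := by
        rw [← hfac]
        exact Finset.sum_congr rfl fun i hi => Finset.sum_congr rfl fun j hj => by
          rw [hzSc i hi, hzSc j hj]
      rw [e11, e12, e21, e22, hcutsym S, hQ]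
      have hE1 : ∑ i ∈ S, ∑ j ∈ S, A i j = volS - ∑ i ∈ S, ∑ j ∈ Sᶜ, A i j := by linarith
      have hE2 : ∑ i ∈ Sᶜ, ∑ j ∈ Sᶜ, A i j = volSc - ∑ i ∈ S, ∑ j ∈ Sᶜ, A i j := by
        rw [← hcutsym S]; linarith
      have hVc : volSc = vol - volS := by linarith
      rw [hE1, hE2, hVc, hc, ← hvolS]
      field_simp
      ring
    have hyNM : y ⬝ᵥ NM.mulVec y = Q S := by
      have hterm : ∀ i j, y i * (NM i j * y j)
          = A i j * (z i * z j) - 1/vol * ((δ i * y i) * (δ j * y j)) := by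
        intro i j
        rw [hNMap i j, hyi i, hyi j]
        have hii : Real.sqrt (d i) * (Real.sqrt (d i))⁻¹ = 1 := mul_inv_cancel₀ (hsqne i)
        have hjj : (Real.sqrt (d j))⁻¹ * Real.sqrt (d j) = 1 := inv_mul_cancel₀ (hsqne j)
        calc (Real.sqrt (d i) * z i) *
              (((Real.sqrt (d i))⁻¹ * A i j * (Real.sqrt (d j))⁻¹ - 1/vol * (δ i * δ j)) *
                (Real.sqrt (d j) * z j))
            = (Real.sqrt (d i) * (Real.sqrt (d i))⁻¹) * ((Real.sqrt (d j))⁻¹ * Real.sqrt (d j))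
                * (A i j * (z i * z j))
              - 1/vol * ((δ i * (Real.sqrt (d i) * z i)) * (δ j * (Real.sqrt (d j) * z j))) := by
              ring
          _ = A i j * (z i * z j)
              - 1/vol * ((δ i * (Real.sqrt (d i) * z i)) * (δ j * (Real.sqrt (d j) * z j))) := by
              rw [hii, hjj]; ring
      calc y ⬝ᵥ NM.mulVec y = ∑ i, y i * (∑ j, NM i j * y j) := by
            refine Finset.sum_congr rfl fun i _ => ?_
            rw [hmv]
        _ = ∑ i, ∑ j, y i * (NM i j * y j) := by
            refine Finset.sum_congr rfl fun i _ => ?_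
            rw [Finset.mul_sum]
        _ = ∑ i, ∑ j, (A i j * (z i * z j) - 1/vol * ((δ i * y i) * (δ j * y j))) := by
            exact Finset.sum_congr rfl fun i _ => Finset.sum_congr rfl fun j _ => hterm i j
        _ = (∑ i, ∑ j, A i j * (z i * z j))
            - 1/vol * ((∑ i, δ i * y i) * (∑ j, δ j * y j)) := by
            rw [Finset.sum_mul_sum, Finset.mul_sum, ← Finset.sum_sub_distrib]
            refine Finset.sum_congr rfl fun i _ => ?_
            rw [Finset.mul_sum, ← Finset.sum_sub_distrib]
        _ = Q S := by rw [hAzz, hδysum]; ring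
    have hyy : y ⬝ᵥ y = volS * volSc / vol := by
      have hterm : ∀ i, y i * y i = d i * (z i * z i) := by
        intro i
        rw [hyi i]
        calc Real.sqrt (d i) * z i * (Real.sqrt (d i) * z i)
            = Real.sqrt (d i) * Real.sqrt (d i) * (z i * z i) := by ring
          _ = d i * (z i * z i) := by rw [hsqmul i]
      have : ∀ i, y i * y i = (if i ∈ S then d i * ((1-c)*(1-c)) else 0)
          + (if i ∈ Sᶜ then d i * ((-c)*(-c)) else 0) := by
        intro i
        by_cases hi : i ∈ S
        · rw [hterm i, hzS i hi]; simp [hi]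
        · rw [hterm i, hzSc i (Finset.mem_compl.2 hi)]; simp [hi]
      calc y ⬝ᵥ y = ∑ i, y i * y i := rfl
        _ = volS * ((1-c)*(1-c)) + volSc * ((-c)*(-c)) := by
            rw [Finset.sum_congr rfl fun i _ => this i, Finset.sum_add_distrib,
              Finset.sum_ite_mem, Finset.sum_ite_mem, Finset.univ_inter, Finset.univ_inter,
              ← Finset.sum_mul, ← Finset.sum_mul, ← hvolS, ← hvolSc]
        _ = volS * volSc / vol := by
            have hVc : volSc = vol - volS := by linarith
            rw [hVc, hc]
            field_simp
            ring
    have hray := rayleigh_bound NM hNMherm μ₁ (fun ν hv => hμ₁.2 hv) y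
    rw [hyNM, hyy] at hray
    rw [hq, div_le_iff₀ (mul_pos h1 h2)]
    calc Q S * vol ≤ (μ₁ * (volS * volSc / vol)) * vol := by
          apply mul_le_mul_of_nonneg_right hray (le_of_lt hvolpos)
      _ = μ₁ * (volS * volSc) := by field_simp
  refine ⟨?_, hupper⟩
  -- lower bound
  rcases hμnonneg.eq_or_lt with hμ0 | hμpos
  · rw [← hμ0]
    simp only [ne_eq, OfNat.ofNat_ne_zero, not_false_eq_true, zero_pow, sub_zero, Real.sqrt_one]
    linarith
  -- μ₁ > 0 : get eigenvector
  obtain ⟨v, hv0, hveq⟩ := hμ₁.1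
  have hδv : ∑ i, δ i * v i = 0 := by
    have h1 : ∑ i, δ i * NM.mulVec v i = μ₁ * ∑ i, δ i * v i := by
      rw [hveq, Finset.mul_sum]
      exact Finset.sum_congr rfl fun i _ => by
        simp only [Pi.smul_apply, smul_eq_mul]; ring
    have h2 : ∑ i, δ i * NM.mulVec v i = 0 := by
      calc ∑ i, δ i * NM.mulVec v i = ∑ i, ∑ j, δ i * (NM i j * v j) := by
            refine Finset.sum_congr rfl fun i _ => ?_
            rw [hmv, Finset.mul_sum]
        _ = ∑ j, ∑ i, δ i * (NM i j * v j) := Finset.sum_comm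
        _ = ∑ j, (∑ i, NM j i * δ i) * v j := by
            refine Finset.sum_congr rfl fun j _ => ?_
            rw [Finset.sum_mul]
            exact Finset.sum_congr rfl fun i _ => by rw [hNMsym j i]; ring
        _ = ∑ j, (NM.mulVec δ j) * v j := by
            exact Finset.sum_congr rfl fun j _ => by rw [hmv]
        _ = 0 := by
            rw [hNMδ]
            refine Finset.sum_eq_zero fun j _ => ?_
            simp
    rw [h2] at h1
    rcases mul_eq_zero.1 h1.symm with h | h
    · exact absurd h (ne_of_gt hμpos)
    · exact h
  set f : Fin n → ℝ := fun i => (Real.sqrt (d i))⁻¹ * v i with hfd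
  have hvf : ∀ i, v i = Real.sqrt (d i) * f i := by
    intro i
    show v i = Real.sqrt (d i) * ((Real.sqrt (d i))⁻¹ * v i)
    rw [← mul_assoc, mul_inv_cancel₀ (hsqne i), one_mul]
  have hfe : ∀ i, ∑ j, A i j * f j = μ₁ * (d i * f i) := by
    intro i
    have h1 : ∑ j, NM i j * v j = μ₁ * v i := by
      have h := congrFun hveq i
      rw [hmv] at h
      simpa [Pi.smul_apply, smul_eq_mul] using h
    have h2 : ∀ j, NM i j * v j
        = (Real.sqrt (d i))⁻¹ * (A i j * f j) - 1/vol * δ i * (δ j * v j) := by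
      intro j
      rw [hNMap i j]
      show _ = (Real.sqrt (d i))⁻¹ * (A i j * ((Real.sqrt (d j))⁻¹ * v j)) - _
      ring
    have h3 : (Real.sqrt (d i))⁻¹ * (∑ j, A i j * f j) = μ₁ * v i := by
      rw [← h1]
      rw [Finset.sum_congr rfl fun j _ => h2 j, Finset.sum_sub_distrib, ← Finset.mul_sum]
      rw [← Finset.mul_sum, hδv]
      ring
    have h4 := congrArg (fun t => Real.sqrt (d i) * t) h3
    simp only [← mul_assoc, mul_inv_cancel₀ (hsqne i), one_mul] at h4
    rw [h4, hvf i]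
    linear_combination μ₁ * f i * hsqmul i
  have hdf0 : ∑ i, d i * f i = 0 := by
    rw [← hδv]
    refine Finset.sum_congr rfl fun i _ => ?_
    rw [hvf i, hδa i]
    linear_combination (-(f i)) * hsqmul i
  have hfne : ∃ i, f i ≠ 0 := by
    by_contra h
    push_neg at h
    apply hv0
    funext i
    rw [hvf i, h i, mul_zero]
    rfl
  have hfpos : ∃ i, 0 < f i := by
    by_contra h
    push_neg at h
    have hz : ∀ i ∈ univ, d i * f i = 0 := by
      apply (Finset.sum_eq_zero_iff_of_nonpos ?_).1 hdf0
      intro i _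
      exact mul_nonpos_of_nonneg_of_nonpos (hdpos i).le (h i)
    obtain ⟨i, hi⟩ := hfne
    have := hz i (mem_univ i)
    rcases mul_eq_zero.1 this with h' | h'
    · exact absurd h' (ne_of_gt (hdpos i))
    · exact hi h'
  have hfneg : ∃ i, f i < 0 := by
    by_contra h
    push_neg at h
    have hz : ∀ i ∈ univ, d i * f i = 0 := by
      apply (Finset.sum_eq_zero_iff_of_nonneg ?_).1 hdf0
      intro i _
      exact mul_nonneg (hdpos i).le (h i)
    obtain ⟨i, hi⟩ := hfne
    have := hz i (mem_univ i)
    rcases mul_eq_zero.1 this with h' | h'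
    · exact absurd h' (ne_of_gt (hdpos i))
    · exact hi h'
  -- abstract main step
  have main : ∀ F : Fin n → ℝ, (∀ i, ∑ j, A i j * F j = μ₁ * (d i * F i)) →
      (∃ i, 0 < F i) → (∃ i, F i < 0) →
      ((∑ i ∈ univ.filter (fun i => 0 < F i), d i) ≤ vol/2) →
      μ₁^2 ≤ 1 - (1-qN)^2/4 := by
    intro F hFe hFpos hFneg hvolP
    set g : Fin n → ℝ := fun i => max (F i) 0 with hgd
    have hg0 : ∀ i, 0 ≤ g i := fun i => le_max_right _ _
    have hgF : ∀ i, F i ≤ g i := fun i => le_max_left _ _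
    have hgmin : ∃ i, g i = 0 := by
      obtain ⟨i, hi⟩ := hFneg
      exact ⟨i, max_eq_right hi.le⟩
    set s := ∑ i, d i * g i ^ 2 with hs
    have hspos : 0 < s := by
      obtain ⟨i, hi⟩ := hFpos
      have hgi : 0 < g i := lt_of_lt_of_le hi (hgF i)
      refine Finset.sum_pos' (fun j _ => mul_nonneg (hdpos j).le (sq_nonneg _))
        ⟨i, mem_univ i, mul_pos (hdpos i) (pow_pos hgi 2)⟩
    set Wq := ∑ i, ∑ j, A i j * (g i * g j) with hWq
    have hμW : μ₁ * s ≤ Wq := by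
      rw [hs, Finset.mul_sum, hWq]
      apply Finset.sum_le_sum
      intro i _
      by_cases hFi : 0 < F i
      · have hgi : g i = F i := max_eq_left hFi.le
        have h1 : ∑ j, A i j * F j ≤ ∑ j, A i j * g j :=
          Finset.sum_le_sum fun j _ => mul_le_mul_of_nonneg_left (hgF j) (hA0 i j)
        calc μ₁ * (d i * g i^2) = F i * (μ₁ * (d i * F i)) := by rw [hgi]; ring
          _ = F i * ∑ j, A i j * F j := by rw [hFe i]
          _ ≤ F i * ∑ j, A i j * g j := mul_le_mul_of_nonneg_left h1 hFi.le
          _ = ∑ j, A i j * (g i * g j) := by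
              rw [hgi, Finset.mul_sum]
              exact Finset.sum_congr rfl fun j _ => by ring
      · have hgi : g i = 0 := max_eq_right (not_lt.1 hFi)
        calc μ₁ * (d i * g i ^2) = 0 := by rw [hgi]; ring
          _ ≤ ∑ j, A i j * (g i * g j) :=
            Finset.sum_nonneg fun j _ =>
              mul_nonneg (hA0 i j) (mul_nonneg (hg0 i) (hg0 j))
    have hcuth : ∀ C : Finset (Fin n), C.Nonempty → C ≠ univ → (∀ i ∈ C, 0 < g i) →
        ((1 - qN)/2) * ∑ i ∈ C, d i ≤ ∑ i ∈ C, ∑ j ∈ Cᶜ, A i j := by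
      intro C hCne hCuniv hCpos
      obtain ⟨k1, k2, k3, k4, k5, k6⟩ := keyS C hCne hCuniv
      have helem : Q C * vol / ((∑ i ∈ C, d i) * (∑ i ∈ Cᶜ, d i)) ≤ qN :=
        hqN.2 ⟨C, hCne, hCuniv, rfl⟩
      have hX : 0 < (∑ i ∈ C, d i) * (∑ i ∈ Cᶜ, d i) := mul_pos k1 k2
      rw [div_le_iff₀ hX] at helem
      have hcutC : (1 - qN) * ((∑ i ∈ C, d i) * (∑ i ∈ Cᶜ, d i))
          ≤ (∑ i ∈ C, ∑ j ∈ Cᶜ, A i j) * vol := by linarith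
      have hCP : C ⊆ univ.filter (fun i => 0 < F i) := by
        intro i hi
        simp only [Finset.mem_filter, Finset.mem_univ, true_and]
        by_contra hneg
        have hgi : g i = 0 := max_eq_right (not_lt.1 hneg)
        exact absurd (hCpos i hi) (by rw [hgi]; exact lt_irrefl 0)
      have hvolC : ∑ i ∈ C, d i ≤ vol/2 :=
        le_trans (Finset.sum_le_sum_of_subset_of_nonneg hCP (fun i _ _ => (hdpos i).le)) hvolP
      have hvolCc : vol/2 ≤ ∑ i ∈ Cᶜ, d i := by linarith
      have h1q : 0 ≤ 1 - qN := by linarith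
      have step : (((1-qN)/2) * ∑ i ∈ C, d i) * vol ≤ (∑ i ∈ C, ∑ j ∈ Cᶜ, A i j) * vol := by
        calc (((1-qN)/2) * ∑ i ∈ C, d i) * vol = (1-qN) * ((∑ i ∈ C, d i) * (vol/2)) := by ring
          _ ≤ (1-qN) * ((∑ i ∈ C, d i) * (∑ i ∈ Cᶜ, d i)) := by
              apply mul_le_mul_of_nonneg_left _ h1q
              exact mul_le_mul_of_nonneg_left hvolCc k1.le
          _ ≤ _ := hcutC
      exact (mul_le_mul_iff_of_pos_right hvolpos).1 step
    have hsweep := sweep_lemma A hAsym hA0 d g hg0 hgmin ((1-qN)/2) (by linarith) hcuth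
    set T := ∑ i, ∑ j, A i j * |g i ^2 - g j ^2| with hTd
    -- row/column sum identities
    have hS1 : ∑ i, ∑ j, A i j * (g i)^2 = s := by
      rw [hs]
      refine Finset.sum_congr rfl fun i _ => ?_
      rw [← Finset.sum_mul, ← hdi i]
    have hS2 : ∑ i, ∑ j, A i j * (g j)^2 = s := by
      rw [Finset.sum_comm, hs]
      refine Finset.sum_congr rfl fun j _ => ?_
      rw [← Finset.sum_mul]
      have : ∑ i, A i j = d j := by
        rw [hdi j]
        exact Finset.sum_congr rfl fun i _ => hAsym i j
      rw [this]
    have hx2 : ∑ i, ∑ j, A i j * (g i - g j)^2 = 2*s - 2*Wq := by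
      have expand : ∀ i j, A i j * (g i - g j)^2
          = A i j * (g i)^2 + A i j * (g j)^2 - 2 * (A i j * (g i * g j)) := by
        intro i j; ring
      calc ∑ i, ∑ j, A i j * (g i - g j)^2
          = ∑ i, (∑ j, A i j * (g i)^2 + ∑ j, A i j * (g j)^2
              - 2 * ∑ j, A i j * (g i * g j)) := by
            refine Finset.sum_congr rfl fun i _ => ?_
            rw [Finset.sum_congr rfl fun j _ => expand i j, Finset.sum_sub_distrib,
              Finset.sum_add_distrib, Finset.mul_sum]
        _ = (∑ i, ∑ j, A i j * (g i)^2) + (∑ i, ∑ j, A i j * (g j)^2)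
            - 2 * ∑ i, ∑ j, A i j * (g i * g j) := by
            rw [Finset.sum_sub_distrib, Finset.sum_add_distrib, Finset.mul_sum]
        _ = 2*s - 2*Wq := by rw [hS1, hS2, ← hWq]; ring
    have hy2 : ∑ i, ∑ j, A i j * (g i + g j)^2 = 2*s + 2*Wq := by
      have expand : ∀ i j, A i j * (g i + g j)^2
          = A i j * (g i)^2 + A i j * (g j)^2 + 2 * (A i j * (g i * g j)) := by
        intro i j; ring
      calc ∑ i, ∑ j, A i j * (g i + g j)^2
          = ∑ i, (∑ j, A i j * (g i)^2 + ∑ j, A i j * (g j)^2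
              + 2 * ∑ j, A i j * (g i * g j)) := by
            refine Finset.sum_congr rfl fun i _ => ?_
            rw [Finset.sum_congr rfl fun j _ => expand i j, Finset.sum_add_distrib,
              Finset.sum_add_distrib, Finset.mul_sum]
        _ = ((∑ i, ∑ j, A i j * (g i)^2) + (∑ i, ∑ j, A i j * (g j)^2))
            + 2 * ∑ i, ∑ j, A i j * (g i * g j) := by
            rw [Finset.sum_add_distrib, Finset.sum_add_distrib, Finset.mul_sum]
        _ = 2*s + 2*Wq := by rw [hS1, hS2, ← hWq]; ring
    -- Cauchy-Schwarz
    have hCS : T^2 ≤ (2*s - 2*Wq) * (2*s + 2*Wq) := by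
      have habs : ∀ i j, |g i - g j| * (g i + g j) = |g i ^2 - g j ^2| := by
        intro i j
        rw [← abs_of_nonneg (add_nonneg (hg0 i) (hg0 j)), ← abs_mul]
        congr 1
        ring
      have hTsum : T = ∑ p : Fin n × Fin n,
          (A p.1 p.2 * |g p.1 - g p.2|) * (A p.1 p.2 * (g p.1 + g p.2)) := by
        rw [hTd, Fintype.sum_prod_type]
        refine Finset.sum_congr rfl fun i _ => Finset.sum_congr rfl fun j _ => ?_
        calc A i j * |g i ^2 - g j ^2|
            = (A i j * A i j) * (|g i - g j| * (g i + g j)) := by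
              rw [hAsq, habs]
          _ = (A i j * |g i - g j|) * (A i j * (g i + g j)) := by ring
      have hcs := Finset.sum_mul_sq_le_sq_mul_sq Finset.univ
        (fun p : Fin n × Fin n => A p.1 p.2 * |g p.1 - g p.2|)
        (fun p : Fin n × Fin n => A p.1 p.2 * (g p.1 + g p.2))
      rw [hTsum]
      have e1 : ∑ p : Fin n × Fin n, (A p.1 p.2 * |g p.1 - g p.2|)^2 = 2*s - 2*Wq := by
        rw [← hx2, Fintype.sum_prod_type]
        refine Finset.sum_congr rfl fun i _ => Finset.sum_congr rfl fun j _ => ?_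
        rw [mul_pow, sq_abs]
        linear_combination (g i - g j)^2 * hAsq i j
      have e2 : ∑ p : Fin n × Fin n, (A p.1 p.2 * (g p.1 + g p.2))^2 = 2*s + 2*Wq := by
        rw [← hy2, Fintype.sum_prod_type]
        refine Finset.sum_congr rfl fun i _ => Finset.sum_congr rfl fun j _ => ?_
        rw [mul_pow]
        linear_combination (g i + g j)^2 * hAsq i j
      calc (∑ p : Fin n × Fin n, (A p.1 p.2 * |g p.1 - g p.2|) * (A p.1 p.2 * (g p.1 + g p.2)))^2
          ≤ (∑ p : Fin n × Fin n, (A p.1 p.2 * |g p.1 - g p.2|)^2) *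
            (∑ p : Fin n × Fin n, (A p.1 p.2 * (g p.1 + g p.2))^2) := hcs
        _ = (2*s - 2*Wq) * (2*s + 2*Wq) := by rw [e1, e2]
    -- combine
    have hsw : (1-qN) * s ≤ T := by
      have : 2 * ((1-qN)/2) = 1 - qN := by ring
      calc (1-qN) * s = 2 * ((1-qN)/2) * s := by rw [this]
        _ ≤ T := hsweep
    have h1q : 0 ≤ 1 - qN := by linarith
    have hsq1 : ((1-qN) * s)^2 ≤ T^2 := by
      apply pow_le_pow_left₀ (mul_nonneg h1q hspos.le) hsw
    have hsq2 : (μ₁ * s)^2 ≤ Wq^2 := by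
      apply pow_le_pow_left₀ (mul_nonneg hμpos.le hspos.le) hμW
    have hss : 0 < s^2 := by positivity
    have e3 : (2*s - 2*Wq) * (2*s + 2*Wq) = 4*s^2 - 4*Wq^2 := by ring
    have e4 : ((1-qN)*s)^2 = (1-qN)^2 * s^2 := by ring
    have e5 : (μ₁*s)^2 = μ₁^2 * s^2 := by ring
    have e7 : (1 - (1-qN)^2/4) * s^2 = s^2 - ((1-qN)^2 * s^2)/4 := by ring
    have hfin : μ₁^2 * s^2 ≤ (1 - (1-qN)^2/4) * s^2 := by
      linarith [hsq1, hsq2, hCS, e3, e4, e5, e7]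
    exact (mul_le_mul_iff_of_pos_right hss).1 hfin
  -- apply main with correct sign
  have habssum : (∑ i ∈ univ.filter (fun i => 0 < f i), d i)
      + (∑ i ∈ univ.filter (fun i => f i < 0), d i) ≤ vol := by
    have hdisj : Disjoint (univ.filter (fun i => 0 < f i)) (univ.filter (fun i => f i < 0)) := by
      rw [Finset.disjoint_filter]
      intro i _ h1
      exact not_lt.2 (le_of_lt h1)
    rw [← Finset.sum_union hdisj, hvol]
    exact Finset.sum_le_sum_of_subset_of_nonneg (Finset.subset_univ _) fun i _ _ => (hdpos i).le
  have hkey : μ₁^2 ≤ 1 - (1-qN)^2/4 := by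
    rcases le_or_gt (∑ i ∈ univ.filter (fun i => 0 < f i), d i) (vol/2) with hle | hgt
    · exact main f hfe hfpos hfneg hle
    · have hNle : (∑ i ∈ univ.filter (fun i => f i < 0), d i) ≤ vol/2 := by linarith
      refine main (fun i => -f i) ?_ ?_ ?_ ?_
      · intro i
        have := hfe i
        calc ∑ j, A i j * (-f j) = -(∑ j, A i j * f j) := by
              rw [← Finset.sum_neg_distrib]
              exact Finset.sum_congr rfl fun j _ => by ring
          _ = μ₁ * (d i * (-f i)) := by rw [this]; ring
      · obtain ⟨i, hi⟩ := hfneg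
        exact ⟨i, by show (0:ℝ) < -f i; linarith⟩
      · obtain ⟨i, hi⟩ := hfpos
        exact ⟨i, by show -f i < (0:ℝ); linarith⟩
      · have : (univ.filter (fun i => 0 < -f i)) = (univ.filter (fun i => f i < 0)) := by
          ext i
          simp [neg_pos]
        rw [this]
        exact hNle
  -- finish
  have h1q : 0 ≤ 1 - qN := by linarith
  have hhalf : (1-qN)/2 ≤ Real.sqrt (1 - μ₁^2) := by
    have hsq : ((1-qN)/2)^2 ≤ 1 - μ₁^2 := by
      have : ((1-qN)/2)^2 = (1-qN)^2/4 := by ring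
      linarith [hkey]
    calc (1-qN)/2 = Real.sqrt (((1-qN)/2)^2) := (Real.sqrt_sq (by linarith)).symm
      _ ≤ Real.sqrt (1-μ₁^2) := Real.sqrt_le_sqrt hsq
  linarith
end

section
/- Let G be a finite simple connected graph and let v be an eigenvector of the normalized modularity matrix 𝓜 corresponding to its rightmost eigenvalue μ₁, with all entries of z = D^{-1/2}v nonzero. Let S = { i : v_i ≥ 0 }, c = Σ_{i∈S} d_i z_i, p = c/vol S, q = -c/vol S̄, and let x = p𝟙_S + q𝟙_{S̄}. Suppose r ≥ 1 is such that r^{-1} ≤ z_i/x_i ≤ r for all i. Then 1 - μ₁ ≥ (1 - q_G^{NCut})/(4r⁴); equivalently, 1 - 4r⁴(1 - μ₁) ≤ q_G^{NCut}. -/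
open Matrix Finset

set_option maxHeartbeats 1000000 in
/-- Let `v` be an eigenvector of the normalized modularity matrix `𝓜`
for its rightmost eigenvalue `μ₁`, with all entries of `z = D^{-1/2}v` nonzero. Let
`S = {i : v_i ≥ 0}`, `c = Σ_{i∈S} d_i z_i`, `p = c/vol S`, `q = -c/vol S̄`,
`x = p𝟙_S + q𝟙_{S̄}`, and let `r ≥ 1` satisfy `r⁻¹ ≤ z_i/x_i ≤ r` for all `i`. Then
`1 - μ₁ ≥ (1 - q_G^{NCut})/(4r⁴)`. -/
theorem improved_cheeger_lower_bound
    {n : ℕ} (hn : 0 < n) (G : SimpleGraph (Fin n)) [DecidableRel G.Adj]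
    (hconn : G.Connected)
    (A : Matrix (Fin n) (Fin n) ℝ) (hA : A = G.adjMatrix ℝ)
    (d : Fin n → ℝ) (hd : d = fun i => ∑ j, A i j)
    (vol : ℝ) (hvol : vol = ∑ i, d i)
    (δ : Fin n → ℝ) (hδ : δ = fun i => Real.sqrt (d i))
    (NM : Matrix (Fin n) (Fin n) ℝ)
    (hNM : NM = diagonal (fun i => (Real.sqrt (d i))⁻¹) * A *
                diagonal (fun i => (Real.sqrt (d i))⁻¹) - (1 / vol) • vecMulVec δ δ)
    (μ₁ : ℝ)
    (hμ₁ : IsGreatest {μ : ℝ | ∃ w : Fin n → ℝ, w ≠ 0 ∧ NM.mulVec w = μ • w} μ₁)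
    (v : Fin n → ℝ) (hv : v ≠ 0) (hvev : NM.mulVec v = μ₁ • v)
    (z : Fin n → ℝ) (hz : z = fun i => v i / Real.sqrt (d i))
    (hznz : ∀ i, z i ≠ 0)
    (S : Finset (Fin n)) (hS : S = univ.filter (fun i => 0 ≤ v i))
    (c : ℝ) (hc : c = ∑ i ∈ S, d i * z i)
    (p q : ℝ) (hp : p = c / ∑ i ∈ S, d i) (hq : q = -c / ∑ i ∈ Sᶜ, d i)
    (x : Fin n → ℝ) (hx : x = fun i => if i ∈ S then p else q)
    (r : ℝ) (hr : 1 ≤ r)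
    (hrz : ∀ i, r⁻¹ ≤ z i / x i ∧ z i / x i ≤ r)
    (Q : Finset (Fin n) → ℝ)
    (hQ : ∀ T, Q T = (∑ i ∈ T, ∑ j ∈ T, A i j) - (∑ i ∈ T, d i) ^ 2 / vol)
    (qN : ℝ)
    (hqN : IsGreatest {t : ℝ | ∃ T : Finset (Fin n), T.Nonempty ∧ T ≠ univ ∧
            t = Q T * vol / ((∑ i ∈ T, d i) * (∑ i ∈ Tᶜ, d i))} qN) :
    (1 - qN) / (4 * r ^ 4) ≤ 1 - μ₁ := by
  classical
  -- basic facts about A and degrees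
  have hAsymm : ∀ i j, A i j = A j i := by
    intro i j; simp only [hA, SimpleGraph.adjMatrix_apply]
    by_cases h : G.Adj i j
    · rw [if_pos h, if_pos h.symm]
    · rw [if_neg h, if_neg (fun hh : G.Adj j i => h hh.symm)]
  have hA0 : ∀ i j, 0 ≤ A i j := by
    intro i j; simp only [hA, SimpleGraph.adjMatrix_apply]
    split <;> norm_num
  have hAdiag : ∀ i, A i i = 0 := by intro i; simp [hA]
  have hr0 : (0:ℝ) < r := lt_of_lt_of_le one_pos hr
  have hrinv : (0:ℝ) < r⁻¹ := inv_pos.mpr hr0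
  have hn2 : 1 < n := by
    by_contra h
    push_neg at h
    have hn1 : n = 1 := le_antisymm h hn
    subst hn1
    have hd0 : d 0 = 0 := by rw [hd]; simpa using hAdiag 0
    have : z 0 = 0 := by simp only [hz, hd0, Real.sqrt_zero, div_zero]
    exact hznz 0 this
  have hdpos : ∀ i, 0 < d i := by
    intro i
    have hnt : Nontrivial (Fin n) := Fin.nontrivial_iff_two_le.mpr hn2
    obtain ⟨j, hj⟩ := exists_ne i
    obtain ⟨w⟩ := hconn.preconnected i j
    obtain ⟨k, hik⟩ : ∃ k, G.Adj i k := by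
      cases w with
      | nil => exact absurd rfl hj.symm
      | cons h _ => exact ⟨_, h⟩
    have h1 : (0:ℝ) < A i k := by simp [hA, SimpleGraph.adjMatrix_apply, hik]
    rw [hd]
    exact lt_of_lt_of_le h1 (Finset.single_le_sum (fun m _ => hA0 i m) (mem_univ k))
  have hdcol : ∀ j, ∑ i, A i j = d j := by
    intro j; rw [hd]
    exact Finset.sum_congr rfl fun i _ => hAsymm i j
  have hvolpos : 0 < vol := by
    rw [hvol]
    have : Nonempty (Fin n) := ⟨⟨0, hn⟩⟩
    exact Finset.sum_pos (fun i _ => hdpos i) Finset.univ_nonempty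
  have hsq : ∀ i, 0 < Real.sqrt (d i) := fun i => Real.sqrt_pos.mpr (hdpos i)
  have hvz : ∀ i, v i = Real.sqrt (d i) * z i := by
    intro i; simp only [hz]; rw [mul_comm, div_mul_cancel₀ _ (hsq i).ne']
  -- sign of z on S and Sᶜ
  have hzSpos : ∀ i ∈ S, 0 < z i := by
    intro i hi
    rw [hS, Finset.mem_filter] at hi
    have hzge : 0 ≤ z i := by simp only [hz]; exact div_nonneg hi.2 (hsq i).le
    exact lt_of_le_of_ne hzge (Ne.symm (hznz i))
  have hzSneg : ∀ i ∉ S, z i < 0 := by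
    intro i hi
    rw [hS, Finset.mem_filter] at hi
    push_neg at hi
    have hvi : v i < 0 := hi (mem_univ i)
    simp only [hz]
    exact div_neg_of_neg_of_pos hvi (hsq i)
  -- S is nonempty
  have hSne : S.Nonempty := by
    rw [Finset.nonempty_iff_ne_empty]
    intro hSe
    have hc0 : c = 0 := by rw [hc, hSe]; simp
    have hq0 : q = 0 := by rw [hq, hc0]; simp
    have hx0 : x ⟨0, hn⟩ = 0 := by rw [hx]; simp [hSe, hq0]
    have h1 := (hrz ⟨0, hn⟩).1
    rw [hx0, div_zero] at h1
    linarith only [h1, hrinv]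
  -- the eigen-equation, componentwise
  have hNMapp : ∀ i j, NM i j = (Real.sqrt (d i))⁻¹ * A i j * (Real.sqrt (d j))⁻¹
      - (1/vol) * (Real.sqrt (d i) * Real.sqrt (d j)) := by
    intro i j
    rw [hNM, hδ]
    rw [Matrix.sub_apply, Matrix.smul_apply, Matrix.vecMulVec_apply,
      Matrix.mul_diagonal, Matrix.diagonal_mul, smul_eq_mul]
  have hE : ∀ i, (∑ j, A i j * z j) = μ₁ * (d i * z i) + d i * (∑ j, d j * z j) / vol := by
    intro i
    have h0 := congrFun hvev i
    have key : ∀ j, NM i j * v j = (Real.sqrt (d i))⁻¹ * (A i j * z j)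
        - Real.sqrt (d i) / vol * (d j * z j) := by
      intro j
      have h1 : Real.sqrt (d j) * Real.sqrt (d j) = d j := Real.mul_self_sqrt (hdpos j).le
      have h2 : Real.sqrt (d j) ≠ 0 := (hsq j).ne'
      calc NM i j * v j
          = (Real.sqrt (d i))⁻¹ * (A i j * z j) * ((Real.sqrt (d j))⁻¹ * Real.sqrt (d j))
            - Real.sqrt (d i) / vol * ((Real.sqrt (d j) * Real.sqrt (d j)) * z j) := by
            rw [hNMapp, hvz j]; ring
        _ = _ := by rw [inv_mul_cancel₀ h2, h1]; ring
    have hmv : (NM.mulVec v) i = (Real.sqrt (d i))⁻¹ * (∑ j, A i j * z j)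
        - Real.sqrt (d i) / vol * (∑ j, d j * z j) := by
      rw [Matrix.mulVec, dotProduct]
      rw [Finset.sum_congr rfl (fun j _ => key j), Finset.sum_sub_distrib, ← Finset.mul_sum,
        ← Finset.mul_sum]
    rw [hmv] at h0
    have h0' : (Real.sqrt (d i))⁻¹ * (∑ j, A i j * z j)
        - Real.sqrt (d i) / vol * (∑ j, d j * z j) = μ₁ * (Real.sqrt (d i) * z i) := by
      rw [← hvz i]; rw [h0]; simp [Pi.smul_apply, smul_eq_mul]
    have ha : Real.sqrt (d i) * Real.sqrt (d i) = d i := Real.mul_self_sqrt (hdpos i).le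
    have ha0 : Real.sqrt (d i) ≠ 0 := (hsq i).ne'
    have h3 : (Real.sqrt (d i) * (Real.sqrt (d i))⁻¹) * (∑ j, A i j * z j)
        - (Real.sqrt (d i) * Real.sqrt (d i))/vol * (∑ j, d j * z j)
        = μ₁ * ((Real.sqrt (d i) * Real.sqrt (d i)) * z i) := by
      linear_combination Real.sqrt (d i) * h0'
    rw [mul_inv_cancel₀ ha0, ha, one_mul] at h3
    linear_combination h3
  -- quadratic form identity
  have hquad : (∑ i, ∑ j, A i j * (z i * z j))
      = μ₁ * (∑ i, d i * z i^2) + (∑ j, d j * z j) * (∑ j, d j * z j) / vol := by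
    calc (∑ i, ∑ j, A i j * (z i * z j))
        = ∑ i, z i * (∑ j, A i j * z j) := by
          refine Finset.sum_congr rfl fun i _ => ?_
          rw [Finset.mul_sum]
          exact Finset.sum_congr rfl fun j _ => by ring
      _ = ∑ i, (μ₁ * (d i * z i^2) + (d i * z i) * ((∑ j, d j * z j) / vol)) := by
          refine Finset.sum_congr rfl fun i _ => ?_
          rw [hE i]; ring
      _ = _ := by
          rw [Finset.sum_add_distrib, ← Finset.mul_sum, ← Finset.sum_mul]
          ring
  -- Laplacian quadratic form identity
  have hlap : (∑ i, ∑ j, A i j * (z i - z j)^2)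
      = 2 * ((1 - μ₁) * (∑ i, d i * z i^2)
        - (∑ j, d j * z j) * (∑ j, d j * z j) / vol) := by
    have e1 : (∑ i, ∑ j, A i j * (z i - z j)^2)
        = (∑ i, ∑ j, A i j * z i^2) + (∑ i, ∑ j, A i j * z j^2)
          - 2 * (∑ i, ∑ j, A i j * (z i * z j)) := by
      calc (∑ i, ∑ j, A i j * (z i - z j)^2)
          = ∑ i, ∑ j, (A i j * z i^2 + A i j * z j^2 - 2*(A i j * (z i * z j))) :=
            Finset.sum_congr rfl fun i _ => Finset.sum_congr rfl fun j _ => by ring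
        _ = _ := by
            simp only [Finset.sum_add_distrib, Finset.sum_sub_distrib, ← Finset.mul_sum]
    have e2 : (∑ i, ∑ j, A i j * z i^2) = ∑ i, d i * z i^2 := by
      refine Finset.sum_congr rfl fun i _ => ?_
      rw [← Finset.sum_mul]
      simp only [hd]
    have e3 : (∑ i, ∑ j, A i j * z j^2) = ∑ i, d i * z i^2 := by
      rw [Finset.sum_comm]
      refine Finset.sum_congr rfl fun j _ => ?_
      rw [← Finset.sum_mul, hdcol]
    rw [e1, e2, e3, hquad]; ring
  have hSZpos : 0 < ∑ i, d i * z i^2 := by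
    have : Nonempty (Fin n) := ⟨⟨0, hn⟩⟩
    refine Finset.sum_pos (fun i _ => ?_) Finset.univ_nonempty
    exact mul_pos (hdpos i) (lt_of_le_of_ne (sq_nonneg _) (Ne.symm (pow_ne_zero 2 (hznz i))))
  have hr2 : 1 ≤ r^2 := by nlinarith only [hr]
  have hr4 : 1 ≤ r^4 := by nlinarith only [hr, hr2]
  have h4r : (0:ℝ) < 4 * r^4 := by linarith
  by_cases hSu : S = univ
  · -- degenerate case: all entries of v nonnegative; then μ₁ = 0
    have hμ0 : μ₁ = 0 := by
      have hsum : ∑ i, (∑ j, A i j * z j)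
          = ∑ i, (μ₁ * (d i * z i) + d i * (∑ j, d j * z j) / vol) :=
        Finset.sum_congr rfl fun i _ => hE i
      have hL : ∑ i, (∑ j, A i j * z j) = ∑ j, d j * z j := by
        rw [Finset.sum_comm]
        refine Finset.sum_congr rfl fun j _ => ?_
        rw [← Finset.sum_mul, hdcol]
      have hR : ∑ i, (μ₁ * (d i * z i) + d i * (∑ j, d j * z j) / vol)
          = μ₁ * (∑ j, d j * z j) + (∑ j, d j * z j) := by
        rw [Finset.sum_add_distrib, ← Finset.mul_sum, ← Finset.sum_div, ← Finset.sum_mul,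
          ← hvol, mul_div_cancel_left₀ _ hvolpos.ne']
      rw [hL, hR] at hsum
      have hspos : 0 < ∑ j, d j * z j := by
        have : Nonempty (Fin n) := ⟨⟨0, hn⟩⟩
        refine Finset.sum_pos (fun i _ => ?_) Finset.univ_nonempty
        exact mul_pos (hdpos i) (hzSpos i (hSu ▸ mem_univ i))
      have : μ₁ * (∑ j, d j * z j) = 0 := by linarith only [hsum]
      rcases mul_eq_zero.mp this with h | h
      · exact h
      · exact absurd h hspos.ne'
    -- bound qN from below by -1 using a singleton
    set i0 : Fin n := ⟨0, hn⟩ with hi0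
    set i1 : Fin n := ⟨1, hn2⟩ with hi1
    have hne : i1 ≠ i0 := by simp [hi0, hi1, Fin.ext_iff]
    set T : Finset (Fin n) := {i0} with hT
    have hTu : T ≠ univ := by
      intro h
      have : i1 ∈ T := h.symm ▸ mem_univ i1
      exact hne (Finset.mem_singleton.mp this)
    have hTc : i1 ∈ Tᶜ := by
      rw [Finset.mem_compl, hT, Finset.mem_singleton]; exact hne
    have hvolT : 0 < ∑ i ∈ T, d i := by
      rw [hT, Finset.sum_singleton]; exact hdpos i0
    have hvolTc : 0 < ∑ i ∈ Tᶜ, d i :=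
      Finset.sum_pos (fun i _ => hdpos i) ⟨i1, hTc⟩
    have hvolsumT : (∑ i ∈ T, d i) + (∑ i ∈ Tᶜ, d i) = vol := by
      rw [Finset.sum_add_sum_compl, hvol]
    have hcutnnT : 0 ≤ ∑ i ∈ T, ∑ j ∈ Tᶜ, A i j :=
      Finset.sum_nonneg fun i _ => Finset.sum_nonneg fun j _ => hA0 i j
    have hcut1 : (∑ i ∈ T, ∑ j ∈ Tᶜ, A i j) ≤ ∑ i ∈ T, d i := by
      refine Finset.sum_le_sum fun i _ => ?_
      have h1 : (∑ j ∈ Tᶜ, A i j) ≤ ∑ j, A i j :=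
        Finset.sum_le_sum_of_subset_of_nonneg (Finset.subset_univ _) fun j _ _ => hA0 i j
      calc (∑ j ∈ Tᶜ, A i j) ≤ ∑ j, A i j := h1
        _ = d i := by simp only [hd]
    have hcut2 : (∑ i ∈ T, ∑ j ∈ Tᶜ, A i j) ≤ ∑ j ∈ Tᶜ, d j := by
      refine (Finset.sum_comm (f := fun i j => A i j)).trans_le ?_
      refine Finset.sum_le_sum fun j _ => ?_
      have h1 : (∑ i ∈ T, A i j) ≤ ∑ i, A i j :=
        Finset.sum_le_sum_of_subset_of_nonneg (Finset.subset_univ _) fun i _ _ => hA0 i j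
      calc (∑ i ∈ T, A i j) ≤ ∑ i, A i j := h1
        _ = d j := hdcol j
    have heinT : (∑ i ∈ T, ∑ j ∈ T, A i j)
        = (∑ i ∈ T, d i) - (∑ i ∈ T, ∑ j ∈ Tᶜ, A i j) := by
      have h1 : ∑ i ∈ T, ((∑ j ∈ T, A i j) + ∑ j ∈ Tᶜ, A i j) = ∑ i ∈ T, d i := by
        refine Finset.sum_congr rfl fun i _ => ?_
        rw [Finset.sum_add_sum_compl]; simp only [hd]
      rw [Finset.sum_add_distrib] at h1
      linarith only [h1]
    have hvalT : -1 ≤ Q T * vol / ((∑ i ∈ T, d i) * (∑ i ∈ Tᶜ, d i)) := by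
      rw [le_div_iff₀ (mul_pos hvolT hvolTc)]
      have hexp : Q T * vol = (∑ i ∈ T, d i) * (∑ i ∈ Tᶜ, d i)
          - (∑ i ∈ T, ∑ j ∈ Tᶜ, A i j) * vol := by
        rw [hQ T, heinT]
        calc ((∑ i ∈ T, d i) - (∑ i ∈ T, ∑ j ∈ Tᶜ, A i j) - (∑ i ∈ T, d i)^2/vol) * vol
            = ((∑ i ∈ T, d i) - (∑ i ∈ T, ∑ j ∈ Tᶜ, A i j)) * vol
              - (∑ i ∈ T, d i)^2/vol * vol := by ring
          _ = ((∑ i ∈ T, d i) - (∑ i ∈ T, ∑ j ∈ Tᶜ, A i j)) * vol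
              - (∑ i ∈ T, d i)^2 := by rw [div_mul_cancel₀ _ hvolpos.ne']
          _ = _ := by rw [← hvolsumT]; ring
      rw [hexp]
      have e1 : (∑ i ∈ T, ∑ j ∈ Tᶜ, A i j) * vol
          = (∑ i ∈ T, ∑ j ∈ Tᶜ, A i j) * (∑ i ∈ T, d i)
            + (∑ i ∈ T, ∑ j ∈ Tᶜ, A i j) * (∑ i ∈ Tᶜ, d i) := by
        rw [← hvolsumT]; ring
      linarith only [e1, mul_le_mul_of_nonneg_right hcut1 hvolTc.le,
        mul_le_mul_of_nonneg_right hcut2 hvolT.le]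
    have hqNlb : -1 ≤ qN :=
      le_trans hvalT (hqN.2 ⟨T, Finset.singleton_nonempty i0, hTu, rfl⟩)
    rw [hμ0, sub_zero, div_le_iff₀ h4r]
    linarith only [hqNlb, hr4]
  · -- main case : S is a proper nonempty subset
    have hScne : Sᶜ.Nonempty := by
      have : ∃ i, i ∉ S := by
        by_contra h
        push_neg at h
        exact hSu (Finset.eq_univ_iff_forall.mpr h)
      obtain ⟨i, hi⟩ := this
      exact ⟨i, Finset.mem_compl.mpr hi⟩
    have hvolS : 0 < ∑ i ∈ S, d i := Finset.sum_pos (fun i _ => hdpos i) hSne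
    have hvolSc : 0 < ∑ i ∈ Sᶜ, d i := Finset.sum_pos (fun i _ => hdpos i) hScne
    have hvolsum : (∑ i ∈ S, d i) + (∑ i ∈ Sᶜ, d i) = vol := by
      rw [Finset.sum_add_sum_compl, hvol]
    have hcpos : 0 < c := by
      rw [hc]
      exact Finset.sum_pos (fun i hi => mul_pos (hdpos i) (hzSpos i hi)) hSne
    have hppos : 0 < p := by rw [hp]; exact div_pos hcpos hvolS
    have hqneg : q < 0 := by
      rw [hq]
      exact div_neg_of_neg_of_pos (neg_neg_iff_pos.mpr hcpos) hvolSc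
    have hpv : p * (∑ i ∈ S, d i) = c := by
      rw [hp]; exact div_mul_cancel₀ c hvolS.ne'
    have hqv : q * (∑ i ∈ Sᶜ, d i) = -c := by
      rw [hq]; exact div_mul_cancel₀ (-c) hvolSc.ne'
    -- bounds on z from the ratio hypothesis
    have hzb1 : ∀ i ∈ S, p * r⁻¹ ≤ z i ∧ z i ≤ r * p := by
      intro i hi
      have hxi : x i = p := by rw [hx]; simp [hi]
      obtain ⟨h1, h2⟩ := hrz i
      rw [hxi] at h1 h2
      constructor
      · have := (le_div_iff₀ hppos).mp h1
        linarith only [this]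
      · exact (div_le_iff₀ hppos).mp h2
    have hzb2 : ∀ i ∉ S, r * q ≤ z i ∧ z i ≤ r⁻¹ * q := by
      intro i hi
      have hxi : x i = q := by rw [hx]; simp [hi]
      obtain ⟨h1, h2⟩ := hrz i
      rw [hxi] at h1 h2
      constructor
      · exact (div_le_iff_of_neg hqneg).mp h2
      · exact (le_div_iff_of_neg hqneg).mp h1
    -- upper bound on ∑ d z²
    have hSZb : (∑ i, d i * z i^2)
        ≤ (∑ i ∈ S, d i) * (r*p)^2 + (∑ i ∈ Sᶜ, d i) * (-(r*q))^2 := by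
      have hb1 : (∑ i ∈ S, d i * z i^2) ≤ (∑ i ∈ S, d i) * (r*p)^2 := by
        rw [Finset.sum_mul]
        refine Finset.sum_le_sum fun i hi => ?_
        have hzb := hzb1 i hi
        have hsqb : z i ^ 2 ≤ (r*p)^2 := by
          refine sq_le_sq' ?_ hzb.2
          have hpr : 0 < p * r⁻¹ := mul_pos hppos hrinv
          linarith only [hzb.1, hpr, mul_pos hr0 hppos]
        exact mul_le_mul_of_nonneg_left hsqb (hdpos i).le
      have hb2 : (∑ i ∈ Sᶜ, d i * z i^2) ≤ (∑ i ∈ Sᶜ, d i) * (-(r*q))^2 := by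
        rw [Finset.sum_mul]
        refine Finset.sum_le_sum fun i hi => ?_
        have hzb := hzb2 i (Finset.mem_compl.mp hi)
        have hsqb : z i ^ 2 ≤ (-(r*q))^2 := by
          refine sq_le_sq' (by linarith only [hzb.1]) ?_
          have h1 : r⁻¹ * q < 0 := mul_neg_of_pos_of_neg hrinv hqneg
          have h2 : 0 < -(r*q) := by
            have := mul_pos hr0 (neg_pos.mpr hqneg)
            linarith only [this]
          linarith only [hzb.2, h1, h2]
        exact mul_le_mul_of_nonneg_left hsqb (hdpos i).le
      calc (∑ i, d i * z i^2)
          = (∑ i ∈ S, d i * z i^2) + (∑ i ∈ Sᶜ, d i * z i^2) :=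
            (Finset.sum_add_sum_compl S _).symm
        _ ≤ _ := by linarith only [hb1, hb2]
    -- lower bound on the Laplacian quadratic form via the cut
    have hcutnn : 0 ≤ ∑ i ∈ S, ∑ j ∈ Sᶜ, A i j :=
      Finset.sum_nonneg fun i _ => Finset.sum_nonneg fun j _ => hA0 i j
    have hgap : 0 < (p - q) * r⁻¹ := mul_pos (by linarith only [hppos, hqneg]) hrinv
    have hLL : 2 * ((∑ i ∈ S, ∑ j ∈ Sᶜ, A i j) * ((p - q) * r⁻¹)^2)
        ≤ ∑ i, ∑ j, A i j * (z i - z j)^2 := by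
      have hsplit : (∑ i, ∑ j, A i j * (z i - z j)^2)
          = ((∑ i ∈ S, ∑ j ∈ S, A i j * (z i - z j)^2)
            + (∑ i ∈ S, ∑ j ∈ Sᶜ, A i j * (z i - z j)^2))
          + ((∑ i ∈ Sᶜ, ∑ j ∈ S, A i j * (z i - z j)^2)
            + (∑ i ∈ Sᶜ, ∑ j ∈ Sᶜ, A i j * (z i - z j)^2)) := by
        rw [← Finset.sum_add_sum_compl S (fun i => ∑ j, A i j * (z i - z j)^2)]
        congr 1
        · rw [← Finset.sum_add_distrib]
          exact Finset.sum_congr rfl fun i _ => (Finset.sum_add_sum_compl S _).symm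
        · rw [← Finset.sum_add_distrib]
          exact Finset.sum_congr rfl fun i _ => (Finset.sum_add_sum_compl S _).symm
      have hnn1 : 0 ≤ ∑ i ∈ S, ∑ j ∈ S, A i j * (z i - z j)^2 :=
        Finset.sum_nonneg fun i _ => Finset.sum_nonneg fun j _ =>
          mul_nonneg (hA0 i j) (sq_nonneg _)
      have hnn2 : 0 ≤ ∑ i ∈ Sᶜ, ∑ j ∈ Sᶜ, A i j * (z i - z j)^2 :=
        Finset.sum_nonneg fun i _ => Finset.sum_nonneg fun j _ =>
          mul_nonneg (hA0 i j) (sq_nonneg _)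
      have hbd1 : (∑ i ∈ S, ∑ j ∈ Sᶜ, A i j) * ((p - q) * r⁻¹)^2
          ≤ ∑ i ∈ S, ∑ j ∈ Sᶜ, A i j * (z i - z j)^2 := by
        rw [Finset.sum_mul]
        refine Finset.sum_le_sum fun i hi => ?_
        rw [Finset.sum_mul]
        refine Finset.sum_le_sum fun j hj => ?_
        have hzi := hzb1 i hi
        have hzj := hzb2 j (Finset.mem_compl.mp hj)
        have hdiff : (p - q) * r⁻¹ ≤ z i - z j := by
          linarith only [hzi.1, hzj.2]
        exact mul_le_mul_of_nonneg_left
          (pow_le_pow_left₀ hgap.le hdiff 2) (hA0 i j)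
      have hbd2 : (∑ i ∈ S, ∑ j ∈ Sᶜ, A i j) * ((p - q) * r⁻¹)^2
          ≤ ∑ i ∈ Sᶜ, ∑ j ∈ S, A i j * (z i - z j)^2 := by
        have hflip : (∑ i ∈ S, ∑ j ∈ Sᶜ, A i j)
            = ∑ i ∈ Sᶜ, ∑ j ∈ S, A i j := by
          refine (Finset.sum_comm (f := fun i j => A i j)).trans ?_
          exact Finset.sum_congr rfl fun j _ => Finset.sum_congr rfl fun i _ => hAsymm i j
        rw [hflip, Finset.sum_mul]
        refine Finset.sum_le_sum fun i hi => ?_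
        rw [Finset.sum_mul]
        refine Finset.sum_le_sum fun j hj => ?_
        have hzi := hzb2 i (Finset.mem_compl.mp hi)
        have hzj := hzb1 j hj
        have hdiff : (p - q) * r⁻¹ ≤ z j - z i := by
          linarith only [hzi.2, hzj.1]
        have hsq2 : ((p - q) * r⁻¹)^2 ≤ (z i - z j)^2 := by
          have h1 : ((p - q) * r⁻¹)^2 ≤ (z j - z i)^2 := pow_le_pow_left₀ hgap.le hdiff 2
          have h2 : (z j - z i)^2 = (z i - z j)^2 := by ring
          linarith only [h1, h2]
        exact mul_le_mul_of_nonneg_left hsq2 (hA0 i j)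
      rw [hsplit]
      linarith only [hnn1, hnn2, hbd1, hbd2]
    -- combine with the spectral identity
    have hmain : (∑ i ∈ S, ∑ j ∈ Sᶜ, A i j) * ((p - q) * r⁻¹)^2
        ≤ (1 - μ₁) * (∑ i, d i * z i^2) := by
      have hsnn : 0 ≤ (∑ j, d j * z j) * (∑ j, d j * z j) / vol :=
        div_nonneg (mul_self_nonneg _) hvolpos.le
      rw [hlap] at hLL
      linarith only [hLL, hsnn]
    have h1mu : 0 ≤ 1 - μ₁ := by
      have hlhs : 0 ≤ (∑ i ∈ S, ∑ j ∈ Sᶜ, A i j) * ((p - q) * r⁻¹)^2 :=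
        mul_nonneg hcutnn (sq_nonneg _)
      nlinarith only [hmain, hSZpos, hlhs]
    have hchain : (∑ i ∈ S, ∑ j ∈ Sᶜ, A i j) * ((p - q) * r⁻¹)^2
        ≤ (1 - μ₁) * ((∑ i ∈ S, d i) * (r*p)^2 + (∑ i ∈ Sᶜ, d i) * (-(r*q))^2) :=
      le_trans hmain (mul_le_mul_of_nonneg_left hSZb h1mu)
    -- algebra: convert to the normalized cut bound
    have e1 : ((p - q) * r⁻¹)^2 * (r^2 * ((∑ i ∈ S, d i) * (∑ i ∈ Sᶜ, d i))^2)
        = c^2 * vol^2 := by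
      calc ((p - q) * r⁻¹)^2 * (r^2 * ((∑ i ∈ S, d i) * (∑ i ∈ Sᶜ, d i))^2)
          = ((p * (∑ i ∈ S, d i)) * (∑ i ∈ Sᶜ, d i)
            - (q * (∑ i ∈ Sᶜ, d i)) * (∑ i ∈ S, d i))^2 * (r⁻¹ * r)^2 := by ring
        _ = (c * (∑ i ∈ Sᶜ, d i) - (-c) * (∑ i ∈ S, d i))^2 * 1^2 := by
            rw [hpv, hqv, inv_mul_cancel₀ hr0.ne']
        _ = c^2 * ((∑ i ∈ S, d i) + (∑ i ∈ Sᶜ, d i))^2 := by ring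
        _ = c^2 * vol^2 := by rw [hvolsum]
    have e2 : ((∑ i ∈ S, d i) * (r*p)^2 + (∑ i ∈ Sᶜ, d i) * (-(r*q))^2)
        * ((∑ i ∈ S, d i) * (∑ i ∈ Sᶜ, d i))
        = r^2 * (c^2 * vol) := by
      calc ((∑ i ∈ S, d i) * (r*p)^2 + (∑ i ∈ Sᶜ, d i) * (-(r*q))^2)
          * ((∑ i ∈ S, d i) * (∑ i ∈ Sᶜ, d i))
          = r^2 * ((p * (∑ i ∈ S, d i))^2 * (∑ i ∈ Sᶜ, d i)
            + (q * (∑ i ∈ Sᶜ, d i))^2 * (∑ i ∈ S, d i)) := by ring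
        _ = r^2 * (c^2 * ((∑ i ∈ S, d i) + (∑ i ∈ Sᶜ, d i))) := by rw [hpv, hqv]; ring
        _ = _ := by rw [hvolsum]
    have key2 : (∑ i ∈ S, ∑ j ∈ Sᶜ, A i j) * vol
        ≤ r^4 * (1 - μ₁) * ((∑ i ∈ S, d i) * (∑ i ∈ Sᶜ, d i)) := by
      have h3 := mul_le_mul_of_nonneg_right hchain
        (by positivity : (0:ℝ) ≤ r^2 * ((∑ i ∈ S, d i) * (∑ i ∈ Sᶜ, d i))^2)
      have h4 : (∑ i ∈ S, ∑ j ∈ Sᶜ, A i j) * (c^2 * vol^2)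
          ≤ r^4 * (1 - μ₁) * ((∑ i ∈ S, d i) * (∑ i ∈ Sᶜ, d i)) * (c^2 * vol) := by
        calc (∑ i ∈ S, ∑ j ∈ Sᶜ, A i j) * (c^2 * vol^2)
            = (∑ i ∈ S, ∑ j ∈ Sᶜ, A i j) * ((p - q) * r⁻¹)^2
              * (r^2 * ((∑ i ∈ S, d i) * (∑ i ∈ Sᶜ, d i))^2) := by rw [mul_assoc, e1]
          _ ≤ (1 - μ₁) * ((∑ i ∈ S, d i) * (r*p)^2 + (∑ i ∈ Sᶜ, d i) * (-(r*q))^2)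
              * (r^2 * ((∑ i ∈ S, d i) * (∑ i ∈ Sᶜ, d i))^2) := h3
          _ = (1 - μ₁) * r^2 * ((∑ i ∈ S, d i) * (∑ i ∈ Sᶜ, d i))
              * (((∑ i ∈ S, d i) * (r*p)^2 + (∑ i ∈ Sᶜ, d i) * (-(r*q))^2)
                * ((∑ i ∈ S, d i) * (∑ i ∈ Sᶜ, d i))) := by ring
          _ = (1 - μ₁) * r^2 * ((∑ i ∈ S, d i) * (∑ i ∈ Sᶜ, d i))
              * (r^2 * (c^2 * vol)) := by rw [e2]
          _ = r^4 * (1 - μ₁) * ((∑ i ∈ S, d i) * (∑ i ∈ Sᶜ, d i)) * (c^2 * vol) := by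
              ring
      have hcv2 : (0:ℝ) < c^2 * vol := mul_pos (pow_pos hcpos 2) hvolpos
      refine le_of_mul_le_mul_right ?_ hcv2
      calc (∑ i ∈ S, ∑ j ∈ Sᶜ, A i j) * vol * (c^2 * vol)
          = (∑ i ∈ S, ∑ j ∈ Sᶜ, A i j) * (c^2 * vol^2) := by ring
        _ ≤ r^4 * (1 - μ₁) * ((∑ i ∈ S, d i) * (∑ i ∈ Sᶜ, d i)) * (c^2 * vol) := h4
    -- now relate Q S to the cut
    have heinS : (∑ i ∈ S, ∑ j ∈ S, A i j)
        = (∑ i ∈ S, d i) - (∑ i ∈ S, ∑ j ∈ Sᶜ, A i j) := by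
      have h1 : ∑ i ∈ S, ((∑ j ∈ S, A i j) + ∑ j ∈ Sᶜ, A i j) = ∑ i ∈ S, d i := by
        refine Finset.sum_congr rfl fun i _ => ?_
        rw [Finset.sum_add_sum_compl]; simp only [hd]
      rw [Finset.sum_add_distrib] at h1
      linarith only [h1]
    have hQSvol : Q S * vol = (∑ i ∈ S, d i) * (∑ i ∈ Sᶜ, d i)
        - (∑ i ∈ S, ∑ j ∈ Sᶜ, A i j) * vol := by
      rw [hQ S, heinS]
      calc ((∑ i ∈ S, d i) - (∑ i ∈ S, ∑ j ∈ Sᶜ, A i j) - (∑ i ∈ S, d i)^2/vol) * vol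
          = ((∑ i ∈ S, d i) - (∑ i ∈ S, ∑ j ∈ Sᶜ, A i j)) * vol
            - (∑ i ∈ S, d i)^2/vol * vol := by ring
        _ = ((∑ i ∈ S, d i) - (∑ i ∈ S, ∑ j ∈ Sᶜ, A i j)) * vol
            - (∑ i ∈ S, d i)^2 := by rw [div_mul_cancel₀ _ hvolpos.ne']
        _ = _ := by rw [← hvolsum]; ring
    have hposSc : (0:ℝ) < (∑ i ∈ S, d i) * (∑ i ∈ Sᶜ, d i) := mul_pos hvolS hvolSc
    have hQSval : Q S * vol / ((∑ i ∈ S, d i) * (∑ i ∈ Sᶜ, d i))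
        = 1 - (∑ i ∈ S, ∑ j ∈ Sᶜ, A i j) * vol / ((∑ i ∈ S, d i) * (∑ i ∈ Sᶜ, d i)) := by
      rw [hQSvol, sub_div, div_self hposSc.ne']
    have hmemS : Q S * vol / ((∑ i ∈ S, d i) * (∑ i ∈ Sᶜ, d i)) ≤ qN :=
      hqN.2 ⟨S, hSne, hSu, rfl⟩
    have hcutval : (∑ i ∈ S, ∑ j ∈ Sᶜ, A i j) * vol / ((∑ i ∈ S, d i) * (∑ i ∈ Sᶜ, d i))
        ≤ r^4 * (1 - μ₁) := by
      rw [div_le_iff₀ hposSc]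
      linarith only [key2]
    have hfin : 1 - qN ≤ r^4 * (1 - μ₁) := by
      rw [hQSval] at hmemS
      linarith only [hmemS, hcutval]
    rw [div_le_iff₀ h4r]
    linarith only [hfin, mul_nonneg (pow_nonneg hr0.le 4) h1mu]
end

section
/- Let G be a finite simple connected graph and let v be a normalized eigenvector of the normalized modularity matrix 𝓜 corresponding to a positive eigenvalue μ, i.e., 𝓜v = μv with ‖v‖₂ = 1 and μ > 0. Let S = { i : v_i ≥ 0 }. If μ > [((vol S)² + (vol S̄)²)/vol V] · max_{i∈V} (v_i²/d_i), then Q(S) > 0. -/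
open Matrix Finset

/-- Let `v` be a normalized eigenvector (`‖v‖₂ = 1`) of the normalized
modularity matrix `𝓜` for a positive eigenvalue `μ`, and `S = {i : v_i ≥ 0}`. If
`μ > [((vol S)² + (vol S̄)²)/vol V] · max_{i} (v_i²/d_i)`, then `Q(S) > 0`. -/
theorem nodal_domain_positive_modularity_of_large_eigenvalue
    {n : ℕ} (hn : 0 < n) (G : SimpleGraph (Fin n)) [DecidableRel G.Adj]
    (hconn : G.Connected)
    (A : Matrix (Fin n) (Fin n) ℝ) (hA : A = G.adjMatrix ℝ)
    (d : Fin n → ℝ) (hd : d = fun i => ∑ j, A i j)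
    (vol : ℝ) (hvol : vol = ∑ i, d i)
    (δ : Fin n → ℝ) (hδ : δ = fun i => Real.sqrt (d i))
    (NM : Matrix (Fin n) (Fin n) ℝ)
    (hNM : NM = diagonal (fun i => (Real.sqrt (d i))⁻¹) * A *
                diagonal (fun i => (Real.sqrt (d i))⁻¹) - (1 / vol) • vecMulVec δ δ)
    (μ : ℝ) (hμpos : 0 < μ)
    (v : Fin n → ℝ) (hvnorm : ∑ i, v i ^ 2 = 1) (hvev : NM.mulVec v = μ • v)
    (S : Finset (Fin n)) (hS : S = univ.filter (fun i => 0 ≤ v i))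
    (mx : ℝ) (hmx : IsGreatest {t : ℝ | ∃ i : Fin n, t = v i ^ 2 / d i} mx)
    (Q : Finset (Fin n) → ℝ)
    (hQ : ∀ T, Q T = (∑ i ∈ T, ∑ j ∈ T, A i j) - (∑ i ∈ T, d i) ^ 2 / vol)
    (hμ : ((∑ i ∈ S, d i) ^ 2 + (∑ i ∈ Sᶜ, d i) ^ 2) / vol * mx < μ) :
    0 < Q S := by
  -- there is a nonzero coordinate
  obtain ⟨i₀, hi₀⟩ : ∃ i, v i ≠ 0 := by
    by_contra h
    push_neg at h
    simp [h] at hvnorm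
  -- rule out n = 1
  rcases Nat.lt_or_ge n 2 with h2 | h2
  · exfalso
    have hn1 : n = 1 := by omega
    subst hn1
    have hA1 : A = 0 := by
      subst hA; ext i j
      have : i = j := Subsingleton.elim i j
      simp [this]
    have hd1 : d = 0 := by subst hd; funext i; simp [hA1]
    have hδ1 : δ = 0 := by subst hδ; funext i; simp [hd1]
    have hNM1 : NM = 0 := by
      rw [hNM, hA1, hδ1]; ext i j; simp [vecMulVec]
    have := congrFun hvev i₀
    rw [hNM1] at this
    simp [Matrix.mulVec] at this
    rcases this with h | h
    · exact absurd h (ne_of_gt hμpos)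
    · exact hi₀ h
  -- entries of A are nonnegative
  have hA0 : ∀ i j, 0 ≤ A i j := by
    subst hA; intro i j
    simp only [SimpleGraph.adjMatrix_apply]
    split <;> norm_num
  have hAsymm : ∀ i j, A i j = A j i := by
    subst hA; intro i j
    simp [SimpleGraph.adjMatrix_apply, SimpleGraph.adj_comm]
  -- degrees are positive
  have hd0 : ∀ i, 0 < d i := by
    intro i
    obtain ⟨j, hij⟩ : ∃ j, j ≠ i := Fintype.exists_ne_of_one_lt_card (by simp; omega) i
    obtain ⟨w⟩ := hconn.preconnected i j
    have hadj : ∃ k, G.Adj i k := by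
      cases w with
      | nil => exact absurd rfl hij
      | cons h p => exact ⟨_, h⟩
    obtain ⟨k, hk⟩ := hadj
    have h1 : A i k = 1 := by subst hA; simp [hk]
    have : A i k ≤ ∑ j, A i j :=
      Finset.single_le_sum (fun j _ => hA0 i j) (Finset.mem_univ k)
    rw [hd]; rw [h1] at this; linarith
  have hvolpos : 0 < vol := by
    rw [hvol]
    exact Finset.sum_pos (fun i _ => hd0 i) ⟨i₀, Finset.mem_univ i₀⟩
  -- rescaled eigenvector
  set u : Fin n → ℝ := fun i => v i / Real.sqrt (d i) with hu
  have hsq : ∀ i, 0 < Real.sqrt (d i) := fun i => Real.sqrt_pos.2 (hd0 i)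
  have hvu : ∀ i, v i = Real.sqrt (d i) * u i := by
    intro i; simp only [hu]
    rw [mul_comm, div_mul_cancel₀ _ (hsq i).ne']
  have hdu2 : ∀ i, d i * u i ^ 2 = v i ^ 2 := by
    intro i
    simp only [hu, div_pow, Real.sq_sqrt (hd0 i).le]
    rw [mul_comm]
    exact div_mul_cancel₀ _ (hd0 i).ne'
  have hu2 : ∀ i, u i ^ 2 ≤ mx := by
    intro i
    have h1 : v i ^ 2 / d i ∈ {t : ℝ | ∃ i : Fin n, t = v i ^ 2 / d i} := ⟨i, rfl⟩
    have h2 := hmx.2 h1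
    have : u i ^ 2 = v i ^ 2 / d i := by
      rw [← hdu2 i, mul_div_cancel_left₀ _ (hd0 i).ne']
    linarith [this ▸ h2]
  have hmx0 : 0 < mx := by
    have h1 : (1:ℝ) = ∑ i, d i * u i ^ 2 := by
      rw [← hvnorm]; exact (Finset.sum_congr rfl fun i _ => hdu2 i).symm
    have h2 : ∑ i, d i * u i ^ 2 ≤ ∑ i, d i * mx :=
      Finset.sum_le_sum fun i _ => mul_le_mul_of_nonneg_left (hu2 i) (hd0 i).le
    have h3 : ∑ i, d i * mx = vol * mx := by rw [hvol, Finset.sum_mul]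
    nlinarith
  -- the key quadratic form identity
  have hss : ∀ i, Real.sqrt (d i) * Real.sqrt (d i) = d i :=
    fun i => Real.mul_self_sqrt (hd0 i).le
  have hNMij : ∀ i j, NM i j = (Real.sqrt (d i))⁻¹ * A i j * (Real.sqrt (d j))⁻¹
      - 1 / vol * (Real.sqrt (d i) * Real.sqrt (d j)) := by
    intro i j
    rw [hNM]
    simp only [Matrix.sub_apply, Matrix.smul_apply, Matrix.vecMulVec_apply,
      Matrix.mul_diagonal, Matrix.diagonal_mul, smul_eq_mul, hδ]
  have e1 : ∀ i, ∑ j, NM i j * v j = μ * v i := by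
    intro i
    have := congrFun hvev i
    simpa [Matrix.mulVec, dotProduct] using this
  have e3 : ∀ i j, v i * (NM i j * v j)
      = A i j * (u i * u j) - 1 / vol * ((d i * u i) * (d j * u j)) := by
    intro i j
    have h1 : v i * (Real.sqrt (d i))⁻¹ = u i := by
      simp only [hu, div_eq_mul_inv]
    have h2 : v j * (Real.sqrt (d j))⁻¹ = u j := by
      simp only [hu, div_eq_mul_inv]
    have h3 : v i * Real.sqrt (d i) = d i * u i := by
      rw [hvu i, mul_right_comm, hss i]
    have h4 : v j * Real.sqrt (d j) = d j * u j := by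
      rw [hvu j, mul_right_comm, hss j]
    rw [hNMij i j]
    linear_combination (A i j * (v j * (Real.sqrt (d j))⁻¹)) * h1
      + (A i j * u i) * h2
      - (1 / vol * (v j * Real.sqrt (d j))) * h3
      - (1 / vol * (d i * u i)) * h4
  have e2 : μ = ∑ i, ∑ j, v i * (NM i j * v j) := by
    have : ∀ i, ∑ j, v i * (NM i j * v j) = μ * v i ^ 2 := by
      intro i
      rw [← Finset.mul_sum, e1 i]; ring
    simp_rw [this, ← Finset.mul_sum, hvnorm, mul_one]
  have e4 : ∑ i, ∑ j, v i * (NM i j * v j)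
      = (∑ i, ∑ j, A i j * (u i * u j)) - (∑ i, d i * u i) ^ 2 / vol := by
    simp_rw [e3, Finset.sum_sub_distrib]
    congr 1
    rw [sq, Finset.sum_mul_sum, Finset.sum_div]
    refine Finset.sum_congr rfl fun i _ => ?_
    rw [Finset.sum_div]
    refine Finset.sum_congr rfl fun j _ => ?_
    ring
  have hμeq : μ = (∑ i, ∑ j, A i j * (u i * u j)) - (∑ i, d i * u i) ^ 2 / vol := by
    rw [e2, e4]
  -- membership
  have hmemS : ∀ i, i ∈ S ↔ 0 ≤ v i := by intro i; rw [hS]; simp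
  have hmemSc : ∀ i, i ∈ Sᶜ ↔ v i < 0 := by
    intro i; rw [Finset.mem_compl, hmemS]; exact not_le
  have huS : ∀ i ∈ S, 0 ≤ u i := by
    intro i hi
    exact div_nonneg ((hmemS i).1 hi) (hsq i).le
  have huSc : ∀ i ∈ Sᶜ, u i ≤ 0 := by
    intro i hi
    exact div_nonpos_of_nonpos_of_nonneg ((hmemSc i).1 hi).le (hsq i).le
  -- block decomposition of the quadratic form
  set a := ∑ i ∈ S, ∑ j ∈ S, A i j with ha
  set b := ∑ i ∈ S, ∑ j ∈ Sᶜ, A i j with hb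
  set c := ∑ i ∈ Sᶜ, ∑ j ∈ S, A i j with hc
  set e := ∑ i ∈ Sᶜ, ∑ j ∈ Sᶜ, A i j with he
  set p := ∑ i ∈ S, d i with hp
  set q := ∑ i ∈ Sᶜ, d i with hq
  -- bound the quadratic form
  have huumx : ∀ i j, u i * u j ≤ mx := by
    intro i j
    nlinarith [hu2 i, hu2 j, sq_nonneg (u i - u j)]
  have hbound : ∑ i, ∑ j, A i j * (u i * u j) ≤ mx * (a + e) := by
    have hcut : ∑ i, ∑ j, A i j * (u i * u j)
        = ((∑ i ∈ S, ∑ j ∈ S, A i j * (u i * u j))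
          + (∑ i ∈ S, ∑ j ∈ Sᶜ, A i j * (u i * u j)))
        + ((∑ i ∈ Sᶜ, ∑ j ∈ S, A i j * (u i * u j))
          + (∑ i ∈ Sᶜ, ∑ j ∈ Sᶜ, A i j * (u i * u j))) := by
      rw [← Finset.sum_add_sum_compl S (fun i => ∑ j, A i j * (u i * u j))]
      congr 1
      · rw [← Finset.sum_add_distrib]
        exact Finset.sum_congr rfl fun i _ => (Finset.sum_add_sum_compl S _).symm
      · rw [← Finset.sum_add_distrib]
        exact Finset.sum_congr rfl fun i _ => (Finset.sum_add_sum_compl S _).symm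
    have t1 : ∑ i ∈ S, ∑ j ∈ S, A i j * (u i * u j) ≤ mx * a := by
      have : ∑ i ∈ S, ∑ j ∈ S, A i j * (u i * u j) ≤ ∑ i ∈ S, ∑ j ∈ S, A i j * mx :=
        Finset.sum_le_sum fun i _ => Finset.sum_le_sum fun j _ =>
          mul_le_mul_of_nonneg_left (huumx i j) (hA0 i j)
      calc ∑ i ∈ S, ∑ j ∈ S, A i j * (u i * u j) ≤ ∑ i ∈ S, ∑ j ∈ S, A i j * mx := this
        _ = mx * a := by rw [ha]; simp_rw [← Finset.sum_mul]; ring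
    have t4 : ∑ i ∈ Sᶜ, ∑ j ∈ Sᶜ, A i j * (u i * u j) ≤ mx * e := by
      have : ∑ i ∈ Sᶜ, ∑ j ∈ Sᶜ, A i j * (u i * u j) ≤ ∑ i ∈ Sᶜ, ∑ j ∈ Sᶜ, A i j * mx :=
        Finset.sum_le_sum fun i _ => Finset.sum_le_sum fun j _ =>
          mul_le_mul_of_nonneg_left (huumx i j) (hA0 i j)
      calc ∑ i ∈ Sᶜ, ∑ j ∈ Sᶜ, A i j * (u i * u j) ≤ ∑ i ∈ Sᶜ, ∑ j ∈ Sᶜ, A i j * mx := this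
        _ = mx * e := by rw [he]; simp_rw [← Finset.sum_mul]; ring
    have t2 : ∑ i ∈ S, ∑ j ∈ Sᶜ, A i j * (u i * u j) ≤ 0 :=
      Finset.sum_nonpos fun i hi => Finset.sum_nonpos fun j hj =>
        mul_nonpos_of_nonneg_of_nonpos (hA0 i j)
          (mul_nonpos_of_nonneg_of_nonpos (huS i hi) (huSc j hj))
    have t3 : ∑ i ∈ Sᶜ, ∑ j ∈ S, A i j * (u i * u j) ≤ 0 :=
      Finset.sum_nonpos fun i hi => Finset.sum_nonpos fun j hj =>
        mul_nonpos_of_nonneg_of_nonpos (hA0 i j)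
          (mul_nonpos_of_nonpos_of_nonneg (huSc i hi) (huS j hj))
    rw [hcut]
    linarith
  -- μ ≤ mx * (a + e)
  have hkey : μ ≤ mx * (a + e) := by
    have := sq_nonneg (∑ i, d i * u i)
    have h := div_nonneg this hvolpos.le
    rw [hμeq]
    linarith
  -- structural identities
  have hbc : b = c := by
    rw [hb, hc]; refine Finset.sum_comm.trans ?_
    exact Finset.sum_congr rfl fun i _ => Finset.sum_congr rfl fun j _ => hAsymm j i
  have hpab : p = a + b := by
    rw [hp, ha, hb, ← Finset.sum_add_distrib]
    exact Finset.sum_congr rfl fun i _ => by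
      rw [hd, Finset.sum_add_sum_compl]
  have hqce : q = c + e := by
    rw [hq, hc, he, ← Finset.sum_add_distrib]
    exact Finset.sum_congr rfl fun i _ => by
      rw [hd, Finset.sum_add_sum_compl]
  have hvpq : vol = p + q := by
    rw [hvol, hp, hq, Finset.sum_add_sum_compl]
  -- conclude
  have hsum : (p ^ 2 + q ^ 2) / vol < a + e := by
    have h1 : (p ^ 2 + q ^ 2) / vol * mx < mx * (a + e) := lt_of_lt_of_le hμ hkey
    nlinarith
  have hQS : Q S = a - p ^ 2 / vol := by rw [hQ S]
  have hQeq : a - p ^ 2 / vol = e - q ^ 2 / vol := by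
    have hae : a - e = p - q := by rw [hpab, hqce, hbc]; ring
    have : (a - e) * vol = (p - q) * (p + q) := by rw [hae, hvpq]
    field_simp
    linear_combination this
  have hsplit : (p ^ 2 + q ^ 2) / vol = p ^ 2 / vol + q ^ 2 / vol := add_div _ _ _
  rw [hQS]
  linarith [hQeq, hsum]
end

section
/- Let G be a finite simple connected graph and let v be a real eigenvector of the normalized modularity matrix 𝓜 corresponding to a positive eigenvalue μ, i.e., 𝓜v = μv with v ≠ 0 and μ > 0. Let S = { i : v_i ≥ 0 } and let cos θ = (Σ_{i∈V} √d_i |v_i|)/(‖v‖₂‖δ‖₂) be the cosine of the acute angle between |v| = (|v₁|,…,|vₙ|)ᵀ and δ = (√d₁,…,√dₙ)ᵀ. If μ + 1 > 4·(vol S · vol S̄/(vol V)²)·(1/cos²θ), then Q(S) > 0. -/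
open Matrix Finset

set_option maxHeartbeats 1000000 in
lemma modularity_core {n : ℕ} (A : Fin n → Fin n → ℝ)
    (hAsym : ∀ i j, A i j = A j i) (hAnn : ∀ i j, 0 ≤ A i j)
    (d : Fin n → ℝ) (hdi : ∀ i, d i = ∑ j, A i j) (hdpos : ∀ i, 0 < d i)
    (vol : ℝ) (hvol : vol = ∑ i, d i) (hvolpos : 0 < vol)
    (e : Fin n → ℝ) (he : ∀ i, e i = Real.sqrt (d i))
    (NM : Fin n → Fin n → ℝ)
    (hNMe : ∀ i j, NM i j = (e i)⁻¹ * A i j * (e j)⁻¹ - (1/vol) * (e i * e j))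
    (μ : ℝ) (hμpos : 0 < μ)
    (v : Fin n → ℝ) (hv : v ≠ 0)
    (heig : ∀ i, ∑ j, NM i j * v j = μ * v i)
    (cosθ : ℝ)
    (hcos : cosθ = (∑ i, e i * |v i|) / (Real.sqrt (∑ i, v i ^ 2) * Real.sqrt vol))
    (hμ : 4 * ((∑ i ∈ univ.filter (fun i => 0 ≤ v i), d i) *
        (∑ i ∈ (univ.filter (fun i => 0 ≤ v i))ᶜ, d i) / vol ^ 2) * (1 / cosθ ^ 2) < μ + 1) :
    0 < (∑ i ∈ univ.filter (fun i => 0 ≤ v i), ∑ j ∈ univ.filter (fun i => 0 ≤ v i), A i j)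
        - (∑ i ∈ univ.filter (fun i => 0 ≤ v i), d i) ^ 2 / vol := by
  classical
  have hvolne : vol ≠ 0 := hvolpos.ne'
  have hepos : ∀ i, 0 < e i := fun i => by rw [he]; exact Real.sqrt_pos.mpr (hdpos i)
  have hene : ∀ i, e i ≠ 0 := fun i => (hepos i).ne'
  have he2 : ∀ i, e i * e i = d i := fun i => by rw [he]; exact Real.mul_self_sqrt (hdpos i).le
  have hcol : ∀ k, (∑ i, A i k) = d k := fun k => by
    rw [hdi k]; exact Finset.sum_congr rfl fun i _ => hAsym i k
  have hNMsym : ∀ i j, NM i j = NM j i := fun i j => by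
    rw [hNMe, hNMe, hAsym i j]; ring
  -- column key : δᵀ NM = 0
  have hkey : ∀ k, ∑ i, e i * NM i k = 0 := by
    intro k
    have h1 : ∀ i, e i * NM i k = A i k * (e k)⁻¹ - (1/vol) * (d i * e k) := by
      intro i
      rw [hNMe i k, mul_sub]
      congr 1
      · rw [show e i * ((e i)⁻¹ * A i k * (e k)⁻¹) = (e i * (e i)⁻¹) * (A i k * (e k)⁻¹) from by ring,
          mul_inv_cancel₀ (hene i), one_mul]
      · rw [show e i * (1/vol * (e i * e k)) = 1/vol * (e i * e i * e k) from by ring, he2]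
    rw [Finset.sum_congr rfl fun i _ => h1 i, Finset.sum_sub_distrib, ← Finset.sum_mul, hcol,
      ← Finset.mul_sum, ← Finset.sum_mul, ← hvol]
    have hd1 : d k * (e k)⁻¹ = e k := by rw [← he2]; field_simp
    rw [hd1]
    field_simp
    ring
  have hrowkey : ∀ i, ∑ j, NM i j * e j = 0 := by
    intro i
    calc ∑ j, NM i j * e j = ∑ j, e j * NM j i :=
          Finset.sum_congr rfl fun j _ => by rw [hNMsym i j]; ring
      _ = 0 := hkey i
  -- orthogonality of v and δ
  have hδv : ∑ i, e i * v i = 0 := by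
    have h0 : μ * (∑ i, e i * v i) = 0 := by
      have h1 : ∑ i, e i * (μ * v i) = ∑ i, e i * (∑ j, NM i j * v j) :=
        Finset.sum_congr rfl fun i _ => by rw [heig i]
      have h2 : ∑ i, e i * (∑ j, NM i j * v j) = ∑ j, (∑ i, e i * NM i j) * v j := by
        simp_rw [Finset.mul_sum, Finset.sum_mul, mul_assoc]
        exact Finset.sum_comm
      have h3 : ∑ j, (∑ i, e i * NM i j) * v j = 0 := by simp [hkey]
      have h4 : ∑ i, e i * (μ * v i) = μ * ∑ i, e i * v i := by
        rw [Finset.mul_sum]; exact Finset.sum_congr rfl fun i _ => by ring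
      rw [← h4, h1, h2, h3]
    exact (mul_eq_zero.mp h0).resolve_left hμpos.ne'
  -- definitions
  set s : Fin n → ℝ := fun i => if 0 ≤ v i then (1:ℝ) else -1 with hsdef
  have hss : ∀ i, s i * s i = 1 := by
    intro i; by_cases h : 0 ≤ v i <;> simp [hsdef, h]
  have hsv : ∀ i, s i * v i = |v i| := by
    intro i; by_cases h : 0 ≤ v i
    · simp [hsdef, h, abs_of_nonneg h]
    · simp [hsdef, h, abs_of_neg (lt_of_not_ge h)]
  set u : Fin n → ℝ := fun i => e i * s i with hudef
  set nv2 : ℝ := ∑ i, v i ^ 2 with hnv2def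
  set P : ℝ := ∑ i, e i * |v i| with hPdef
  have hnv2pos : 0 < nv2 := by
    obtain ⟨i0, hi0⟩ := Function.ne_iff.mp hv
    exact Finset.sum_pos' (fun i _ => sq_nonneg _) ⟨i0, Finset.mem_univ _, by
      have := abs_pos.mpr hi0; nlinarith [sq_abs (v i0)]⟩
  have hPpos : 0 < P := by
    obtain ⟨i0, hi0⟩ := Function.ne_iff.mp hv
    exact Finset.sum_pos' (fun i _ => mul_nonneg (hepos i).le (abs_nonneg _))
      ⟨i0, Finset.mem_univ _, mul_pos (hepos i0) (abs_pos.mpr hi0)⟩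
  set DS : ℝ := ∑ i, d i * s i with hDSdef
  set c1 : ℝ := P / nv2 with hc1def
  set c2 : ℝ := DS / vol with hc2def
  set r : Fin n → ℝ := fun i => u i - c1 * v i - c2 * e i with hrdef
  have hru : ∀ i, u i = c1 * v i + c2 * e i + r i := fun i => by simp [hrdef]
  -- basic inner products
  have huv : ∑ i, u i * v i = P := by
    rw [hPdef]; exact Finset.sum_congr rfl fun i _ => by
      rw [hudef]; simp only; rw [mul_assoc, hsv i]
  have heu : ∑ i, e i * u i = DS := by
    rw [hDSdef]; exact Finset.sum_congr rfl fun i _ => by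
      rw [hudef]; simp only; rw [← mul_assoc, he2 i]
  have huu : ∑ i, u i * u i = vol := by
    rw [hvol]; refine Finset.sum_congr rfl fun i _ => ?_
    rw [hudef]; simp only
    rw [show e i * s i * (e i * s i) = (e i * e i) * (s i * s i) from by ring, he2 i, hss i, mul_one]
  have hee : ∑ i, e i * e i = vol := by
    rw [hvol]; exact Finset.sum_congr rfl fun i _ => he2 i
  -- orthogonality of r
  have hrv : ∑ i, r i * v i = 0 := by
    have h1 : ∑ i, r i * v i
        = (∑ i, u i * v i) - c1 * (∑ i, v i ^ 2) - c2 * (∑ i, e i * v i) := by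
      rw [Finset.mul_sum, Finset.mul_sum, ← Finset.sum_sub_distrib, ← Finset.sum_sub_distrib]
      exact Finset.sum_congr rfl fun i _ => by simp only [hrdef]; ring
    rw [h1, huv, hδv, ← hnv2def, hc1def]
    field_simp
    ring
  have hre : ∑ i, e i * r i = 0 := by
    have h1 : ∑ i, e i * r i
        = (∑ i, e i * u i) - c1 * (∑ i, e i * v i) - c2 * (∑ i, e i * e i) := by
      rw [Finset.mul_sum, Finset.mul_sum, ← Finset.sum_sub_distrib, ← Finset.sum_sub_distrib]
      exact Finset.sum_congr rfl fun i _ => by simp only [hrdef]; ring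
    rw [h1, heu, hδv, hee, hc2def]
    field_simp
    ring
  have hrr : ∑ i, r i * r i = vol - c1^2 * nv2 - c2^2 * vol := by
    have h1 : ∑ i, r i * r i
        = (∑ i, u i * u i) - 2*c1*(∑ i, u i * v i) - 2*c2*(∑ i, e i * u i)
          + c1^2 * (∑ i, v i ^ 2) + (2*c1*c2)*(∑ i, e i * v i) + c2^2 * (∑ i, e i * e i) := by
      rw [Finset.mul_sum, Finset.mul_sum, Finset.mul_sum, Finset.mul_sum, Finset.mul_sum]
      rw [← Finset.sum_sub_distrib, ← Finset.sum_sub_distrib, Finset.sum_add_distrib.symm,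
        Finset.sum_add_distrib.symm, Finset.sum_add_distrib.symm]
      exact Finset.sum_congr rfl fun i _ => by simp only [hrdef]; ring
    rw [h1, huv, heu, hδv, hee, huu, ← hnv2def, hc1def, hc2def]
    field_simp
    ring
  -- general form of the quadratic form
  have hMform : ∀ x y : Fin n → ℝ, ∑ i, x i * (∑ j, NM i j * y j)
      = (∑ i, ∑ j, A i j * ((x i / e i) * (y j / e j)))
        - (1/vol) * ((∑ i, e i * x i) * (∑ i, e i * y i)) := by
    intro x y
    have hprod : (1/vol) * ((∑ i, e i * x i) * (∑ i, e i * y i))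
        = ∑ i, ∑ j, (1/vol) * ((e i * x i) * (e j * y j)) := by
      rw [Finset.sum_mul_sum, Finset.mul_sum]
      exact Finset.sum_congr rfl fun i _ => by rw [Finset.mul_sum]
    rw [hprod, ← Finset.sum_sub_distrib]
    refine Finset.sum_congr rfl fun i _ => ?_
    rw [Finset.mul_sum, ← Finset.sum_sub_distrib]
    refine Finset.sum_congr rfl fun j _ => ?_
    rw [hNMe i j]
    field_simp [hene i, hene j]
  have hMv : ∀ x : Fin n → ℝ, ∑ i, x i * (∑ j, NM i j * v j) = μ * (∑ i, x i * v i) := by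
    intro x
    rw [Finset.mul_sum]
    exact Finset.sum_congr rfl fun i _ => by rw [heig i]; ring
  have hMsymm : ∀ x y : Fin n → ℝ,
      ∑ i, x i * (∑ j, NM i j * y j) = ∑ i, y i * (∑ j, NM i j * x j) := by
    intro x y
    calc ∑ i, x i * (∑ j, NM i j * y j) = ∑ i, ∑ j, x i * (NM i j * y j) := by
          exact Finset.sum_congr rfl fun i _ => by rw [Finset.mul_sum]
      _ = ∑ j, ∑ i, x i * (NM i j * y j) := Finset.sum_comm
      _ = ∑ j, ∑ i, y j * (NM j i * x i) := by
          refine Finset.sum_congr rfl fun j _ => Finset.sum_congr rfl fun i _ => ?_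
          rw [hNMsym i j]; ring
      _ = ∑ j, y j * (∑ i, NM j i * x i) := by
          exact Finset.sum_congr rfl fun j _ => by rw [Finset.mul_sum]
  have hMe : ∀ x : Fin n → ℝ, ∑ i, x i * (∑ j, NM i j * e j) = 0 := by
    intro x; simp [hrowkey]
  -- splitting of u in the first slot
  have hsplit : ∀ t : Fin n → ℝ, ∑ i, u i * t i
      = c1 * (∑ i, v i * t i) + c2 * (∑ i, e i * t i) + ∑ i, r i * t i := by
    intro t
    rw [Finset.mul_sum, Finset.mul_sum, Finset.sum_add_distrib.symm, Finset.sum_add_distrib.symm]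
    exact Finset.sum_congr rfl fun i _ => by rw [hru i]; ring
  -- Step A : M(u,u) = c1 μ P + M(r,r)
  have hstepA : ∑ i, u i * (∑ j, NM i j * u j)
      = c1 * (μ * P) + ∑ i, r i * (∑ j, NM i j * r j) := by
    have h1 : ∑ i, v i * (∑ j, NM i j * u j) = μ * P := by
      rw [hMsymm v u, hMv u, huv]
    have h2 : ∑ i, e i * (∑ j, NM i j * u j) = 0 := by
      rw [hMsymm e u, hMe u]
    have h3 : ∑ i, v i * (∑ j, NM i j * r j) = 0 := by
      rw [hMsymm v r, hMv r, hrv, mul_zero]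
    have h4 : ∑ i, e i * (∑ j, NM i j * r j) = 0 := by
      rw [hMsymm e r, hMe r]
    have h5 : ∑ i, u i * (∑ j, NM i j * r j) = ∑ i, r i * (∑ j, NM i j * r j) := by
      rw [hsplit (fun i => ∑ j, NM i j * r j), h3, h4]; ring
    have h6 : ∑ i, r i * (∑ j, NM i j * u j) = ∑ i, u i * (∑ j, NM i j * r j) := hMsymm r u ▸ hMsymm u r ▸ rfl
    rw [hsplit (fun i => ∑ j, NM i j * u j), h1, h2]
    rw [show ∑ i, r i * (∑ j, NM i j * u j) = ∑ i, u i * (∑ j, NM i j * r j) from hMsymm r u, h5]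
    ring
  -- Step B : M(r,r) = N(r,r)
  have hstepB : ∑ i, r i * (∑ j, NM i j * r j)
      = ∑ i, ∑ j, A i j * ((r i / e i) * (r j / e j)) := by
    rw [hMform r r, hre]
    ring
  -- Step C : PSD estimate  N(y,y) + Σ d y² ≥ 0
  have hPSD : ∀ y : Fin n → ℝ,
      0 ≤ (∑ i, ∑ j, A i j * (y i * y j)) + ∑ i, d i * (y i)^2 := by
    intro y
    have hrowsq : ∀ i, ∑ j, (A i j / 2) * (y i)^2 = d i / 2 * (y i)^2 := by
      intro i
      rw [← Finset.sum_mul, ← Finset.sum_div, ← hdi i]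
    have hcolsq : ∑ i, ∑ j, (A i j / 2) * (y j)^2 = ∑ i, d i / 2 * (y i)^2 := by
      rw [Finset.sum_comm]
      refine Finset.sum_congr rfl fun j _ => ?_
      rw [← Finset.sum_mul, ← Finset.sum_div, hcol j]
    have hpt : ∀ i j, (A i j / 2) * (y i + y j)^2
        = A i j * (y i * y j) + ((A i j / 2) * (y i)^2 + (A i j / 2) * (y j)^2) := fun i j => by ring
    have hsplit2 : ∑ i, ∑ j, (A i j / 2) * (y i + y j)^2
        = (∑ i, ∑ j, A i j * (y i * y j))
          + ((∑ i, ∑ j, (A i j / 2) * (y i)^2) + (∑ i, ∑ j, (A i j / 2) * (y j)^2)) := by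
      calc ∑ i, ∑ j, (A i j / 2) * (y i + y j)^2
          = ∑ i, ∑ j, (A i j * (y i * y j) + ((A i j / 2) * (y i)^2 + (A i j / 2) * (y j)^2)) :=
            Finset.sum_congr rfl fun i _ => Finset.sum_congr rfl fun j _ => hpt i j
        _ = _ := by simp only [Finset.sum_add_distrib]
    have hsum1 : ∑ i, ∑ j, (A i j / 2) * (y i)^2 = ∑ i, d i / 2 * (y i)^2 :=
      Finset.sum_congr rfl fun i _ => hrowsq i
    have hδy : ∑ i, d i * (y i)^2 = (∑ i, d i / 2 * (y i)^2) + ∑ i, d i / 2 * (y i)^2 := by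
      rw [← Finset.sum_add_distrib]; exact Finset.sum_congr rfl fun i _ => by ring
    have hnn : 0 ≤ ∑ i, ∑ j, (A i j / 2) * (y i + y j)^2 :=
      Finset.sum_nonneg fun i _ => Finset.sum_nonneg fun j _ =>
        mul_nonneg (by linarith [hAnn i j]) (sq_nonneg _)
    rw [hsplit2, hsum1, hcolsq] at hnn
    rw [hδy]
    linarith
  -- Step C' : N(r,r) ≥ - Σ r²
  have hNrr : -(∑ i, r i * r i) ≤ ∑ i, ∑ j, A i j * ((r i / e i) * (r j / e j)) := by
    have h1 := hPSD (fun i => r i / e i)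
    have h2 : ∑ i, d i * (r i / e i)^2 = ∑ i, r i * r i := by
      refine Finset.sum_congr rfl fun i _ => ?_
      rw [div_pow, ← he2 i]
      field_simp [hene i]
    rw [h2] at h1
    linarith
  -- Step E : value of M(u,u) in terms of the cut quantities
  set S : Finset (Fin n) := univ.filter (fun i => 0 ≤ v i) with hSdef
  set volS : ℝ := ∑ i ∈ S, d i with hvolSdef
  set volSc : ℝ := ∑ i ∈ Sᶜ, d i with hvolScdef
  set ein : ℝ := ∑ i ∈ S, ∑ j ∈ S, A i j with heindef
  have hmemS : ∀ i, i ∈ S ↔ 0 ≤ v i := by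
    intro i; rw [hSdef]; simp
  have hvolsum : volS + volSc = vol := by
    rw [hvolSdef, hvolScdef, hvol]; exact Finset.sum_add_sum_compl S d
  have hDS2 : DS = volS - volSc := by
    rw [hDSdef, ← Finset.sum_add_sum_compl S (fun i => d i * s i), hvolSdef, hvolScdef]
    have ha : ∑ i ∈ S, d i * s i = ∑ i ∈ S, d i :=
      Finset.sum_congr rfl fun i hi => by
        have : 0 ≤ v i := (hmemS i).mp hi
        simp [hsdef, this]
    have hb : ∑ i ∈ Sᶜ, d i * s i = -∑ i ∈ Sᶜ, d i := by
      rw [← Finset.sum_neg_distrib]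
      refine Finset.sum_congr rfl fun i hi => ?_
      have h1 : ¬ (0 ≤ v i) := fun h => (Finset.mem_compl.mp hi) ((hmemS i).mpr h)
      simp [hsdef, h1]
    rw [ha, hb]
    ring
  -- χ indicator
  set χ : Fin n → ℝ := fun i => if 0 ≤ v i then (1:ℝ) else 0 with hχdef
  have hsχ : ∀ i, s i = 2 * χ i - 1 := by
    intro i; by_cases h : 0 ≤ v i <;> simp [hsdef, hχdef, h] <;> norm_num
  have hfilter : ∀ f : Fin n → ℝ, ∑ i ∈ S, f i = ∑ i, χ i * f i := by
    intro f
    rw [hSdef, Finset.sum_filter]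
    exact Finset.sum_congr rfl fun i _ => by by_cases h : 0 ≤ v i <;> simp [hχdef, h]
  have heinχ : ein = ∑ i, ∑ j, χ i * (χ j * A i j) := by
    rw [heindef, hfilter fun i => ∑ j ∈ S, A i j]
    exact Finset.sum_congr rfl fun i _ => by rw [hfilter fun j => A i j, Finset.mul_sum]
  have hvolSχ : volS = ∑ i, χ i * d i := by rw [hvolSdef, hfilter]
  have hquad : ∑ i, ∑ j, A i j * (s i * s j) = 4 * ein - 4 * volS + vol := by
    have hpt : ∀ i j, A i j * (s i * s j)
        = 4 * (χ i * (χ j * A i j)) - 2 * (χ i * A i j) - 2 * (χ j * A i j) + A i j := by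
      intro i j; rw [hsχ i, hsχ j]; ring
    have hsum1 : ∑ i, ∑ j, χ i * A i j = volS := by
      rw [hvolSχ]
      exact Finset.sum_congr rfl fun i _ => by rw [← Finset.mul_sum, ← hdi i]
    have hsum2 : ∑ i, ∑ j, χ j * A i j = volS := by
      rw [Finset.sum_comm, hvolSχ]
      refine Finset.sum_congr rfl fun j _ => ?_
      rw [← Finset.mul_sum, hcol j]
    have hsum3 : ∑ i, ∑ j, A i j = vol := by
      rw [hvol]; exact Finset.sum_congr rfl fun i _ => (hdi i).symm
    calc ∑ i, ∑ j, A i j * (s i * s j)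
        = ∑ i, ∑ j, (4 * (χ i * (χ j * A i j)) - 2 * (χ i * A i j) - 2 * (χ j * A i j) + A i j) :=
          Finset.sum_congr rfl fun i _ => Finset.sum_congr rfl fun j _ => hpt i j
      _ = 4 * (∑ i, ∑ j, χ i * (χ j * A i j)) - 2 * (∑ i, ∑ j, χ i * A i j)
            - 2 * (∑ i, ∑ j, χ j * A i j) + ∑ i, ∑ j, A i j := by
          simp only [Finset.sum_add_distrib, Finset.sum_sub_distrib, Finset.mul_sum]
      _ = 4 * ein - 4 * volS + vol := by rw [hsum1, hsum2, hsum3, heinχ]; ring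
  have hMuu : ∑ i, u i * (∑ j, NM i j * u j) = 4 * ein - 4 * volS + vol - (1/vol) * DS^2 := by
    rw [hMform u u, heu]
    have h1 : ∑ i, ∑ j, A i j * ((u i / e i) * (u j / e j)) = ∑ i, ∑ j, A i j * (s i * s j) := by
      refine Finset.sum_congr rfl fun i _ => Finset.sum_congr rfl fun j _ => ?_
      rw [hudef]
      simp only
      rw [mul_div_cancel_left₀ _ (hene i), mul_div_cancel_left₀ _ (hene j)]
    rw [h1, hquad]
    ring
  -- Final arithmetic
  clear_value s u nv2 P DS c1 c2 r χ S volS volSc ein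
  have hcos2 : cosθ^2 = P^2 / (nv2 * vol) := by
    rw [hcos, div_pow, mul_pow, Real.sq_sqrt hnv2pos.le, Real.sq_sqrt hvolpos.le]
  have hX : 0 < P^2 / nv2 := by positivity
  have hc1P : c1 * P = P^2 / nv2 := by
    rw [hc1def, div_mul_eq_mul_div, ← pow_two]
  have hc1sq : c1^2 * nv2 = P^2 / nv2 := by
    rw [hc1def, div_pow, div_mul_eq_mul_div, pow_two nv2]
    rw [mul_div_mul_right _ _ hnv2pos.ne']
  have hc2sq : c2^2 * vol = (volS - volSc)^2 / vol := by
    rw [hc2def, hDS2, div_pow, div_mul_eq_mul_div, pow_two vol]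
    rw [mul_div_mul_right _ _ hvolne]
  have hμ' : 4 * (volS * volSc) / vol < (μ + 1) * (P^2 / nv2) := by
    have h1 : (1 / cosθ^2) = vol * (nv2 / P^2) := by
      rw [hcos2, one_div, inv_div, mul_comm nv2 vol, mul_div_assoc]
    rw [h1] at hμ
    have h2 := mul_lt_mul_of_pos_right hμ hX
    calc 4 * (volS * volSc) / vol
        = 4 * (volS * volSc / vol ^ 2) * (vol * (nv2 / P^2)) * (P^2 / nv2) := by
          field_simp
      _ < (μ + 1) * (P^2 / nv2) := h2
  have hlast : (volS - volSc)^2 / vol - vol = -(4 * (volS * volSc) / vol) := by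
    have hsq : (volS - volSc)^2 = vol^2 - 4 * (volS * volSc) := by
      linear_combination (volS + volSc + vol) * hvolsum
    rw [hsq]
    field_simp
    ring
  -- lower bound on M(u,u)
  have hlower : (μ + 1) * (P^2 / nv2) + ((volS - volSc)^2 / vol - vol)
      ≤ ∑ i, u i * (∑ j, NM i j * u j) := by
    rw [hstepA, hstepB]
    have h1 : -(∑ i, r i * r i) ≤ ∑ i, ∑ j, A i j * ((r i / e i) * (r j / e j)) := hNrr
    rw [hrr] at h1
    have h2 : c1 * (μ * P) = μ * (P^2 / nv2) := by rw [← hc1P]; ring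
    rw [h2, ← hc1sq, ← hc2sq]
    generalize hZ : ∑ i, ∑ j, A i j * (r i / e i * (r j / e j)) = Z at h1 ⊢
    linarith only [h1]
  have hMuupos : 0 < ∑ i, u i * (∑ j, NM i j * u j) := by
    rw [hlast] at hlower
    linarith only [hlower, hμ']
  rw [hMuu] at hMuupos
  have hfin : 4 * ein - 4 * volS + vol - (1/vol) * DS^2 = 4 * (ein - volS^2 / vol) := by
    have hc : volSc = vol - volS := by linarith only [hvolsum]
    rw [hDS2, hc]
    field_simp
    ring
  rw [hfin] at hMuupos
  linarith only [hMuupos]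
set_option maxHeartbeats 1000000 in
/-- Let `v` be a real eigenvector of the normalized modularity matrix
`𝓜` for a positive eigenvalue `μ`, `S = {i : v_i ≥ 0}`, and
`cos θ = (Σ_i √d_i |v_i|)/(‖v‖₂‖δ‖₂)`. If
`μ + 1 > 4·(vol S · vol S̄/(vol V)²)·(1/cos²θ)`, then `Q(S) > 0`. -/
theorem nodal_domain_positive_modularity_cosine_condition
    {n : ℕ} (hn : 0 < n) (G : SimpleGraph (Fin n)) [DecidableRel G.Adj]
    (hconn : G.Connected)
    (A : Matrix (Fin n) (Fin n) ℝ) (hA : A = G.adjMatrix ℝ)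
    (d : Fin n → ℝ) (hd : d = fun i => ∑ j, A i j)
    (vol : ℝ) (hvol : vol = ∑ i, d i)
    (δ : Fin n → ℝ) (hδ : δ = fun i => Real.sqrt (d i))
    (NM : Matrix (Fin n) (Fin n) ℝ)
    (hNM : NM = diagonal (fun i => (Real.sqrt (d i))⁻¹) * A *
                diagonal (fun i => (Real.sqrt (d i))⁻¹) - (1 / vol) • vecMulVec δ δ)
    (μ : ℝ) (hμpos : 0 < μ)
    (v : Fin n → ℝ) (hv : v ≠ 0) (hvev : NM.mulVec v = μ • v)
    (S : Finset (Fin n)) (hS : S = univ.filter (fun i => 0 ≤ v i))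
    (cosθ : ℝ)
    (hcos : cosθ = (∑ i, Real.sqrt (d i) * |v i|) /
      (Real.sqrt (∑ i, v i ^ 2) * Real.sqrt (∑ i, d i)))
    (Q : Finset (Fin n) → ℝ)
    (hQ : ∀ T, Q T = (∑ i ∈ T, ∑ j ∈ T, A i j) - (∑ i ∈ T, d i) ^ 2 / vol)
    (hμ : 4 * ((∑ i ∈ S, d i) * (∑ i ∈ Sᶜ, d i) / vol ^ 2) * (1 / cosθ ^ 2) < μ + 1) :
    0 < Q S := by
  classical
  have hAnn : ∀ i j, (0:ℝ) ≤ A i j := fun i j => by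
    rw [hA]; simp only [SimpleGraph.adjMatrix_apply]; split <;> norm_num
  have hAsym : ∀ i j, A i j = A j i := fun i j => by
    rw [hA]; simp only [SimpleGraph.adjMatrix_apply, SimpleGraph.adj_comm]
  have hdi : ∀ i, d i = ∑ j, A i j := fun i => by rw [hd]
  have hNMent : ∀ i j, NM i j
      = (Real.sqrt (d i))⁻¹ * A i j * (Real.sqrt (d j))⁻¹ - (1/vol) * (δ i * δ j) := by
    intro i j
    rw [hNM]
    simp only [Matrix.sub_apply, Matrix.smul_apply, Matrix.vecMulVec_apply, smul_eq_mul,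
      Matrix.mul_diagonal, Matrix.diagonal_mul]
  have hveci : ∀ i, ∑ j, NM i j * v j = μ * v i := by
    intro i
    have h := congrFun hvev i
    simpa [Matrix.mulVec, dotProduct] using h
  rcases Nat.lt_or_ge n 2 with h2 | h2
  · -- degenerate case n = 1 : the eigenvector equation forces v = 0
    exfalso
    have hn1 : n = 1 := by omega
    subst hn1
    have hA0 : ∀ i j : Fin 1, A i j = 0 := by
      intro i j
      rw [hA, Subsingleton.elim i j]
      simp
    have hd0 : ∀ i, d i = 0 := fun i => by rw [hdi i]; simp [hA0]
    have hδ0 : ∀ i, δ i = 0 := fun i => by rw [hδ]; simp [hd0]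
    have hNM0 : ∀ i j, NM i j = 0 := by
      intro i j
      rw [hNMent i j, hA0, hδ0, hδ0]
      simp
    apply hv
    funext i
    have h := hveci i
    simp only [hNM0, zero_mul, Finset.sum_const_zero] at h
    have : v i = 0 := by
      rcases mul_eq_zero.mp h.symm with h' | h'
      · exact absurd h' hμpos.ne'
      · exact h'
    simpa using this
  · -- main case : all degrees are positive
    have hdpos : ∀ i, 0 < d i := by
      intro i
      obtain ⟨j, hij⟩ := Fintype.exists_ne_of_one_lt_card (by simp; omega) i
      obtain ⟨p⟩ := hconn.preconnected i j
      have hnil : ¬ p.Nil := SimpleGraph.Walk.not_nil_of_ne (Ne.symm hij)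
      have hadj : G.Adj i (p.getVert 1) := p.adj_snd hnil
      have h1 : A i (p.getVert 1) = 1 := by rw [hA]; simp [hadj]
      have hle : (1:ℝ) ≤ d i := by
        rw [hdi i, ← h1]
        exact Finset.single_le_sum (fun k _ => hAnn i k) (Finset.mem_univ _)
      linarith
    have hvolpos : 0 < vol := by
      have : Nonempty (Fin n) := ⟨⟨0, hn⟩⟩
      rw [hvol]
      exact Finset.sum_pos (fun i _ => hdpos i) Finset.univ_nonempty
    have hNMent' : ∀ i j, NM i j
        = (Real.sqrt (d i))⁻¹ * A i j * (Real.sqrt (d j))⁻¹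
          - (1/vol) * (Real.sqrt (d i) * Real.sqrt (d j)) := by
      intro i j
      rw [hNMent i j, hδ]
    have hcos' : cosθ = (∑ i, Real.sqrt (d i) * |v i|) /
        (Real.sqrt (∑ i, v i ^ 2) * Real.sqrt vol) := by
      rw [hcos, hvol]
    rw [hS] at hμ
    have key := modularity_core (fun i j => A i j) hAsym hAnn d hdi hdpos vol hvol hvolpos
      (fun i => Real.sqrt (d i)) (fun i => rfl) (fun i j => NM i j) hNMent' μ hμpos v hv
      hveci cosθ hcos' hμ
    rw [hQ S, hS]
    exact key
end

section
/- Let G be a finite simple connected graph and let v be a real eigenvector of the normalized modularity matrix 𝓜 corresponding to a positive eigenvalue μ. Let S = { i : v_i ≥ 0 } and let θ be the acute angle between |v| = (|v₁|,…,|vₙ|)ᵀ and δ = (√d₁,…,√dₙ)ᵀ, so cos θ = (Σ_{i∈V} √d_i |v_i|)/(‖v‖₂‖δ‖₂). If μ > tan²θ, then Q(S) > 0. -/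
open Matrix Finset

lemma quad_lb {n : ℕ} (A : Matrix (Fin n) (Fin n) ℝ)
    (hAs : ∀ i j, A i j = A j i) (hAnn : ∀ i j, 0 ≤ A i j)
    (δ : Fin n → ℝ) (hδne : ∀ i, δ i ≠ 0)
    (hrow : ∀ i, ∑ j, A i j = δ i ^ 2)
    (x : Fin n → ℝ) :
    -(∑ i, x i ^ 2) ≤ ∑ i, ∑ j, A i j * x i * x j / (δ i * δ j) := by
  set y : Fin n → ℝ := fun i => x i / δ i with hy
  have hxy : ∀ i, x i = δ i * y i := fun i => by
    rw [hy]; field_simp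
    rw [mul_div_assoc, div_self (hδne i), mul_one]
  have key : (0:ℝ) ≤ ∑ i, ∑ j, A i j * (y i + y j)^2 :=
    Finset.sum_nonneg fun i _ => Finset.sum_nonneg fun j _ =>
      mul_nonneg (hAnn i j) (sq_nonneg _)
  have split : ∑ i, ∑ j, A i j * (y i + y j)^2
      = (∑ i, ∑ j, A i j * y i ^ 2) + 2 * (∑ i, ∑ j, A i j * (y i * y j))
          + ∑ i, ∑ j, A i j * y j ^ 2 := by
    simp only [Finset.mul_sum, ← Finset.sum_add_distrib]
    exact Finset.sum_congr rfl fun i _ => Finset.sum_congr rfl fun j _ => by ring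
  have hT1 : ∑ i, ∑ j, A i j * y i ^ 2 = ∑ i, x i ^ 2 := by
    refine Finset.sum_congr rfl fun i _ => ?_
    rw [← Finset.sum_mul, hrow, hxy i]
    ring
  have hT3 : ∑ i, ∑ j, A i j * y j ^ 2 = ∑ i, x i ^ 2 := by
    rw [Finset.sum_comm]
    refine Finset.sum_congr rfl fun j _ => ?_
    have hcol : ∑ i, A i j = δ j ^ 2 := by
      rw [← hrow j]; exact Finset.sum_congr rfl fun i _ => hAs i j
    rw [← Finset.sum_mul, hcol, hxy j]
    ring
  have hT2 : ∑ i, ∑ j, A i j * (y i * y j) = ∑ i, ∑ j, A i j * x i * x j / (δ i * δ j) := by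
    refine Finset.sum_congr rfl fun i _ => Finset.sum_congr rfl fun j _ => ?_
    rw [hy]
    have := hδne i; have := hδne j
    field_simp
  rw [split, hT1, hT3, hT2] at key
  linarith

lemma aux_main {n : ℕ} (hn : 0 < n)
    (A : Matrix (Fin n) (Fin n) ℝ)
    (hAs : ∀ i j, A i j = A j i) (hAnn : ∀ i j, 0 ≤ A i j)
    (d : Fin n → ℝ) (hd : ∀ i, ∑ j, A i j = d i) (hdpos : ∀ i, 0 < d i)
    (δ : Fin n → ℝ) (hδ : ∀ i, δ i = Real.sqrt (d i))
    (vol : ℝ) (hvol : vol = ∑ i, d i)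
    (μ : ℝ) (hμpos : 0 < μ)
    (v : Fin n → ℝ)
    (hei : ∀ i, ∑ j, (A i j / (δ i * δ j) - δ i * δ j / vol) * v j = μ * v i)
    (hc : vol < (μ + 1) * ((∑ i, δ i * |v i|) ^ 2 / (∑ i, v i ^ 2))) :
    0 < (∑ i ∈ univ.filter (fun i => 0 ≤ v i), ∑ j ∈ univ.filter (fun i => 0 ≤ v i), A i j)
          - (∑ i ∈ univ.filter (fun i => 0 ≤ v i), d i) ^ 2 / vol := by
  have hδpos : ∀ i, 0 < δ i := fun i => (hδ i) ▸ Real.sqrt_pos.2 (hdpos i)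
  have hδne : ∀ i, δ i ≠ 0 := fun i => (hδpos i).ne'
  have hδsq : ∀ i, δ i ^ 2 = d i := fun i => by rw [hδ]; exact Real.sq_sqrt (hdpos i).le
  have hcancel : ∀ (j : Fin n) (t : ℝ), δ j ^ 2 * (t / δ j) = δ j * t := fun j t => by
    rw [pow_two, mul_assoc, ← mul_div_assoc, mul_div_cancel_left₀ _ (hδne j)]
  have hvolpos : 0 < vol := by
    rw [hvol]; exact Finset.sum_pos (fun i _ => hdpos i) (univ_nonempty_iff.2 ⟨⟨0, hn⟩⟩)
  have hvolne : vol ≠ 0 := hvolpos.ne'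
  have hcol : ∀ j, ∑ i, A i j = d j := fun j => by
    rw [← hd j]; exact Finset.sum_congr rfl fun i _ => hAs i j
  set X := ∑ j, δ j * v j with hXdef
  -- Step 1: orthogonality X = 0
  have hstep : ∀ i, μ * (δ i * v i) = (∑ j, A i j * (v j / δ j)) - δ i ^ 2 / vol * X := by
    intro i
    have h0 := hei i
    have h1 : δ i * (μ * v i)
          = δ i * ∑ j, (A i j / (δ i * δ j) - δ i * δ j / vol) * v j := by rw [h0]
    rw [Finset.mul_sum] at h1
    calc μ * (δ i * v i) = δ i * (μ * v i) := by ring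
      _ = ∑ j, δ i * ((A i j / (δ i * δ j) - δ i * δ j / vol) * v j) := h1
      _ = ∑ j, (A i j * (v j / δ j) - δ i ^ 2 / vol * (δ j * v j)) := by
          refine Finset.sum_congr rfl fun j _ => ?_
          field_simp [hδne i, hδne j]
      _ = (∑ j, A i j * (v j / δ j)) - δ i ^ 2 / vol * X := by
          rw [Finset.sum_sub_distrib, ← Finset.mul_sum]
  have hX0 : X = 0 := by
    have hXsum : μ * X = X - X := by
      calc μ * X = ∑ i, μ * (δ i * v i) := by rw [← Finset.mul_sum]
        _ = ∑ i, ((∑ j, A i j * (v j / δ j)) - δ i ^ 2 / vol * X) :=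
            Finset.sum_congr rfl fun i _ => hstep i
        _ = (∑ i, ∑ j, A i j * (v j / δ j)) - ∑ i, δ i ^ 2 / vol * X :=
            Finset.sum_sub_distrib _ _
        _ = X - X := by
            congr 1
            · rw [Finset.sum_comm]
              refine Finset.sum_congr rfl fun j _ => ?_
              rw [← Finset.sum_mul, hcol j, ← hδsq j, hcancel j]
            · simp only [hδsq]
              rw [← Finset.sum_mul, ← Finset.sum_div, ← hvol, div_self hvolne, one_mul]
    have h2 : μ * X = 0 := by rw [hXsum]; ring
    rcases mul_eq_zero.1 h2 with h | h
    · exact absurd h hμpos.ne'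
    · exact h
  -- Step 2: eigen equation in N-form
  have heig : ∀ i, ∑ j, A i j * v j / (δ i * δ j) = μ * v i := by
    intro i
    have h0 := hei i
    have h1 : ∑ j, (A i j / (δ i * δ j) - δ i * δ j / vol) * v j
          = (∑ j, A i j * v j / (δ i * δ j)) - δ i / vol * X := by
      rw [Finset.mul_sum, ← Finset.sum_sub_distrib]
      exact Finset.sum_congr rfl fun j _ => by ring
    rw [h1, hX0, mul_zero, sub_zero] at h0
    exact h0
  -- bilinear form evaluations
  have hBr : ∀ x : Fin n → ℝ, ∑ i, ∑ j, A i j * x i * v j / (δ i * δ j) = μ * ∑ i, x i * v i := by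
    intro x
    rw [Finset.mul_sum]
    refine Finset.sum_congr rfl fun i _ => ?_
    calc (∑ j, A i j * x i * v j / (δ i * δ j)) = x i * ∑ j, A i j * v j / (δ i * δ j) := by
          rw [Finset.mul_sum]; exact Finset.sum_congr rfl fun j _ => by ring
      _ = μ * (x i * v i) := by rw [heig i]; ring
  have hBl : ∀ x : Fin n → ℝ, ∑ i, ∑ j, A i j * v i * x j / (δ i * δ j) = μ * ∑ i, x i * v i := by
    intro x
    rw [Finset.sum_comm]
    calc (∑ j, ∑ i, A i j * v i * x j / (δ i * δ j))
          = ∑ j, ∑ i, A j i * x j * v i / (δ j * δ i) :=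
          Finset.sum_congr rfl fun j _ => Finset.sum_congr rfl fun i _ => by rw [hAs i j]; ring
      _ = μ * ∑ j, x j * v j := hBr x
  have hDr : ∀ x : Fin n → ℝ, ∑ i, ∑ j, A i j * x i * δ j / (δ i * δ j) = ∑ i, x i * δ i := by
    intro x
    refine Finset.sum_congr rfl fun i _ => ?_
    calc (∑ j, A i j * x i * δ j / (δ i * δ j))
          = ∑ j, A i j * (x i / δ i) := by
          refine Finset.sum_congr rfl fun j _ => ?_
          field_simp [hδne i, hδne j]
      _ = (∑ j, A i j) * (x i / δ i) := (Finset.sum_mul _ _ _).symm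
      _ = x i * δ i := by rw [hd i, ← hδsq i, hcancel i, mul_comm]
  have hDl : ∀ x : Fin n → ℝ, ∑ i, ∑ j, A i j * δ i * x j / (δ i * δ j) = ∑ i, x i * δ i := by
    intro x
    rw [Finset.sum_comm]
    calc (∑ j, ∑ i, A i j * δ i * x j / (δ i * δ j))
          = ∑ j, ∑ i, A j i * x j * δ i / (δ j * δ i) :=
          Finset.sum_congr rfl fun j _ => Finset.sum_congr rfl fun i _ => by rw [hAs i j]; ring
      _ = ∑ j, x j * δ j := hDr x
  -- Step 3: the sign vector and residual
  set σ : Fin n → ℝ := fun i => if 0 ≤ v i then 1 else -1 with hσ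
  set s : Fin n → ℝ := fun i => σ i * δ i with hs
  set τ := ∑ i, δ i * |v i| with hτ
  set ρ2 := ∑ i, v i ^ 2 with hρ2
  set P := ∑ i, s i * δ i with hPdef
  have hρ2nonneg : (0:ℝ) ≤ ρ2 := Finset.sum_nonneg fun i _ => sq_nonneg _
  have hρ2pos : 0 < ρ2 := by
    rcases hρ2nonneg.lt_or_eq with h | h
    · exact h
    · exfalso; rw [← h, div_zero, mul_zero] at hc; linarith
  have hρ2ne : ρ2 ≠ 0 := hρ2pos.ne'
  have hσv : ∀ i, σ i * v i = |v i| := by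
    intro i
    by_cases h : 0 ≤ v i
    · simp [hσ, h, abs_of_nonneg h]
    · simp [hσ, h, abs_of_neg (lt_of_not_ge h)]
  have hσsq : ∀ i, σ i ^ 2 = 1 := by
    intro i; by_cases h : 0 ≤ v i <;> simp [hσ, h]
  have hssq : ∀ i, s i ^ 2 = d i := fun i => by
    rw [hs]; simp only; rw [mul_pow, hσsq, one_mul, hδsq]
  have hsum_s2 : ∑ i, s i ^ 2 = vol := by rw [hvol]; exact Finset.sum_congr rfl fun i _ => hssq i
  have hsv : ∑ i, s i * v i = τ := by
    refine Finset.sum_congr rfl fun i _ => ?_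
    rw [hs]; simp only
    calc σ i * δ i * v i = δ i * (σ i * v i) := by ring
      _ = δ i * |v i| := by rw [hσv i]
  have hδδ : ∑ i, δ i * δ i = vol := by
    rw [hvol]; exact Finset.sum_congr rfl fun i _ => by rw [← hδsq i]; ring
  have hvδ : ∑ i, v i * δ i = 0 := by
    rw [← hX0]; exact Finset.sum_congr rfl fun i _ => mul_comm _ _
  have hvv : ∑ i, v i * v i = ρ2 := Finset.sum_congr rfl fun i _ => (pow_two (v i)).symm
  set a1 := P / vol with ha1
  set b1 := τ / ρ2 with hb1
  set r : Fin n → ℝ := fun i => s i - a1 * δ i - b1 * v i with hr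
  have hrsum : ∑ i, r i ^ 2 = vol - P ^ 2 / vol - τ ^ 2 / ρ2 := by
    calc (∑ i, r i ^ 2) = ∑ i, (s i ^ 2 + a1 ^ 2 * (δ i * δ i) + b1 ^ 2 * (v i * v i)
          - 2 * a1 * (s i * δ i) - 2 * b1 * (s i * v i) + 2 * (a1 * b1) * (δ i * v i)) := by
          refine Finset.sum_congr rfl fun i _ => ?_
          simp only [hr]; ring
      _ = (∑ i, s i ^ 2) + a1 ^ 2 * (∑ i, δ i * δ i) + b1 ^ 2 * (∑ i, v i * v i)
          - 2 * a1 * (∑ i, s i * δ i) - 2 * b1 * (∑ i, s i * v i)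
          + 2 * (a1 * b1) * (∑ i, δ i * v i) := by
          simp only [Finset.sum_add_distrib, Finset.sum_sub_distrib, ← Finset.mul_sum]
      _ = vol - P ^ 2 / vol - τ ^ 2 / ρ2 := by
          rw [hsum_s2, hδδ, hvv, ← hPdef, hsv, ← hXdef, hX0, ha1, hb1]
          field_simp
          ring
  set Bss := ∑ i, ∑ j, A i j * s i * s j / (δ i * δ j) with hBssdef
  have hBrr : ∑ i, ∑ j, A i j * r i * r j / (δ i * δ j)
      = Bss - P ^ 2 / vol - μ * (τ ^ 2 / ρ2) := by
    calc (∑ i, ∑ j, A i j * r i * r j / (δ i * δ j))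
          = ∑ i, ∑ j, (A i j * s i * s j / (δ i * δ j)
          - a1 * (A i j * δ i * s j / (δ i * δ j))
          - b1 * (A i j * v i * s j / (δ i * δ j))
          - a1 * (A i j * s i * δ j / (δ i * δ j))
          + a1 ^ 2 * (A i j * δ i * δ j / (δ i * δ j))
          + a1 * b1 * (A i j * v i * δ j / (δ i * δ j))
          - b1 * (A i j * s i * v j / (δ i * δ j))
          + a1 * b1 * (A i j * δ i * v j / (δ i * δ j))
          + b1 ^ 2 * (A i j * v i * v j / (δ i * δ j))) := by
          refine Finset.sum_congr rfl fun i _ => Finset.sum_congr rfl fun j _ => ?_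
          simp only [hr]; ring
      _ = Bss
          - a1 * (∑ i, ∑ j, A i j * δ i * s j / (δ i * δ j))
          - b1 * (∑ i, ∑ j, A i j * v i * s j / (δ i * δ j))
          - a1 * (∑ i, ∑ j, A i j * s i * δ j / (δ i * δ j))
          + a1 ^ 2 * (∑ i, ∑ j, A i j * δ i * δ j / (δ i * δ j))
          + a1 * b1 * (∑ i, ∑ j, A i j * v i * δ j / (δ i * δ j))
          - b1 * (∑ i, ∑ j, A i j * s i * v j / (δ i * δ j))
          + a1 * b1 * (∑ i, ∑ j, A i j * δ i * v j / (δ i * δ j))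
          + b1 ^ 2 * (∑ i, ∑ j, A i j * v i * v j / (δ i * δ j)) := by
          simp only [Finset.sum_add_distrib, Finset.sum_sub_distrib, ← Finset.mul_sum, ← hBssdef]
      _ = Bss - a1 * P - b1 * (μ * τ) - a1 * P + a1 ^ 2 * vol + a1 * b1 * 0
          - b1 * (μ * τ) + a1 * b1 * 0 + b1 ^ 2 * (μ * ρ2) := by
          rw [hDl s, hDr s, hDr δ, hDr v, hBl s, hBr s, hBr δ, hBr v]
          rw [← hPdef, hsv, hδδ, hvδ, ← hXdef, hX0, hvv, mul_zero]
          ring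
      _ = Bss - P ^ 2 / vol - μ * (τ ^ 2 / ρ2) := by
          rw [ha1, hb1]; field_simp; ring
  -- modularity identity
  set Sf := univ.filter (fun i : Fin n => 0 ≤ v i) with hSf
  set χ : Fin n → ℝ := fun i => if 0 ≤ v i then 1 else 0 with hχ
  have hfilter : ∀ f : Fin n → ℝ, ∑ i ∈ Sf, f i = ∑ i, χ i * f i := by
    intro f
    rw [hSf, Finset.sum_filter]
    refine Finset.sum_congr rfl fun i _ => ?_
    by_cases h : 0 ≤ v i <;> simp [hχ, h]
  have hσχ : ∀ i, σ i = 2 * χ i - 1 := by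
    intro i; by_cases h : 0 ≤ v i <;> simp [hσ, hχ, h] <;> norm_num
  have hE : ∑ i ∈ Sf, ∑ j ∈ Sf, A i j = ∑ i, ∑ j, χ i * χ j * A i j := by
    rw [hfilter]
    refine Finset.sum_congr rfl fun i _ => ?_
    rw [hfilter, Finset.mul_sum]
    exact Finset.sum_congr rfl fun j _ => by ring
  have hW : ∑ i ∈ Sf, d i = ∑ i, χ i * d i := hfilter d
  have hBss1 : Bss = ∑ i, ∑ j, A i j * σ i * σ j := by
    rw [hBssdef]
    refine Finset.sum_congr rfl fun i _ => Finset.sum_congr rfl fun j _ => ?_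
    rw [hs]; simp only
    field_simp [hδne i, hδne j]
  have hsum_chiA : ∑ i, ∑ j, χ i * A i j = ∑ i, χ i * d i := by
    refine Finset.sum_congr rfl fun i _ => ?_
    rw [← Finset.mul_sum, hd i]
  have hsum_Achj : ∑ i, ∑ j, χ j * A i j = ∑ i, χ i * d i := by
    rw [Finset.sum_comm]
    refine Finset.sum_congr rfl fun j _ => ?_
    rw [← Finset.mul_sum, hcol j]
  have hsum_A : ∑ i, ∑ j, A i j = vol := by
    rw [hvol]; exact Finset.sum_congr rfl fun i _ => hd i
  have hBss2 : Bss = 4 * (∑ i, ∑ j, χ i * χ j * A i j) - 4 * (∑ i, χ i * d i) + vol := by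
    rw [hBss1]
    calc (∑ i, ∑ j, A i j * σ i * σ j)
          = ∑ i, ∑ j, (4 * (χ i * χ j * A i j) - 2 * (χ i * A i j) - 2 * (χ j * A i j) + A i j) :=
          Finset.sum_congr rfl fun i _ => Finset.sum_congr rfl fun j _ => by
          rw [hσχ i, hσχ j]; ring
      _ = 4 * (∑ i, ∑ j, χ i * χ j * A i j) - 2 * (∑ i, ∑ j, χ i * A i j)
          - 2 * (∑ i, ∑ j, χ j * A i j) + ∑ i, ∑ j, A i j := by
          simp only [Finset.sum_add_distrib, Finset.sum_sub_distrib, ← Finset.mul_sum]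
      _ = 4 * (∑ i, ∑ j, χ i * χ j * A i j) - 4 * (∑ i, χ i * d i) + vol := by
          rw [hsum_chiA, hsum_Achj, hsum_A]; ring
  have hP2 : P = 2 * (∑ i, χ i * d i) - vol := by
    rw [hPdef]
    calc (∑ i, s i * δ i) = ∑ i, (2 * (χ i * d i) - d i) := by
          refine Finset.sum_congr rfl fun i _ => ?_
          rw [hs]; simp only
          rw [hσχ i, ← hδsq i]; ring
      _ = 2 * (∑ i, χ i * d i) - ∑ i, d i := by
          simp only [Finset.sum_sub_distrib, ← Finset.mul_sum]
      _ = 2 * (∑ i, χ i * d i) - vol := by rw [← hvol]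
  have hfinal : Bss - P ^ 2 / vol
      = 4 * ((∑ i ∈ Sf, ∑ j ∈ Sf, A i j) - (∑ i ∈ Sf, d i) ^ 2 / vol) := by
    rw [hE, hW, hBss2, hP2]
    field_simp
    ring
  -- put it together
  have hq := quad_lb A hAs hAnn δ hδne (fun i => by rw [hd i]; exact (hδsq i).symm) r
  rw [hBrr, hrsum] at hq
  have hPsq : 0 ≤ P ^ 2 / vol := div_nonneg (sq_nonneg _) hvolpos.le
  have hcc : vol < μ * (τ ^ 2 / ρ2) + τ ^ 2 / ρ2 := by
    have hh : (μ + 1) * (τ ^ 2 / ρ2) = μ * (τ ^ 2 / ρ2) + τ ^ 2 / ρ2 := by ring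
    linarith [hc, hh]
  have hpos : 0 < Bss - P ^ 2 / vol := by linarith
  linarith [hfinal, hpos]


/-- Let `v` be a real eigenvector of the normalized modularity matrix
`𝓜` for a positive eigenvalue `μ`, `S = {i : v_i ≥ 0}`, and let `θ` be the acute angle
between `|v|` and `δ`, i.e. `cos θ = (Σ_i √d_i |v_i|)/(‖v‖₂‖δ‖₂)`. If `μ > tan²θ`,
then `Q(S) > 0`. -/
theorem nodal_domain_positive_modularity_tangent_condition
    {n : ℕ} (hn : 0 < n) (G : SimpleGraph (Fin n)) [DecidableRel G.Adj]
    (hconn : G.Connected)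
    (A : Matrix (Fin n) (Fin n) ℝ) (hA : A = G.adjMatrix ℝ)
    (d : Fin n → ℝ) (hd : d = fun i => ∑ j, A i j)
    (vol : ℝ) (hvol : vol = ∑ i, d i)
    (δ : Fin n → ℝ) (hδ : δ = fun i => Real.sqrt (d i))
    (NM : Matrix (Fin n) (Fin n) ℝ)
    (hNM : NM = diagonal (fun i => (Real.sqrt (d i))⁻¹) * A *
                diagonal (fun i => (Real.sqrt (d i))⁻¹) - (1 / vol) • vecMulVec δ δ)
    (μ : ℝ) (hμpos : 0 < μ)
    (v : Fin n → ℝ) (hv : v ≠ 0) (hvev : NM.mulVec v = μ • v)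
    (S : Finset (Fin n)) (hS : S = univ.filter (fun i => 0 ≤ v i))
    (θ : ℝ)
    (hθ : θ = Real.arccos ((∑ i, Real.sqrt (d i) * |v i|) /
      (Real.sqrt (∑ i, v i ^ 2) * Real.sqrt (∑ i, d i))))
    (Q : Finset (Fin n) → ℝ)
    (hQ : ∀ T, Q T = (∑ i ∈ T, ∑ j ∈ T, A i j) - (∑ i ∈ T, d i) ^ 2 / vol)
    (hμ : Real.tan θ ^ 2 < μ) :
    0 < Q S := by
  -- basic facts about A
  have hAs : ∀ i j, A i j = A j i := by
    intro i j; rw [hA]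
    simp only [SimpleGraph.adjMatrix_apply]
    by_cases h : G.Adj i j
    · rw [if_pos h, if_pos h.symm]
    · rw [if_neg h, if_neg fun h2 => h h2.symm]
  have hAnn : ∀ i j, (0:ℝ) ≤ A i j := by
    intro i j; rw [hA]
    simp only [SimpleGraph.adjMatrix_apply]
    split <;> norm_num
  -- rule out n = 1
  rcases Nat.lt_or_ge n 2 with hn2 | hn2
  · exfalso
    have hn1 : n = 1 := by omega
    subst hn1
    have hA0 : A = 0 := by
      rw [hA]; ext i j
      have hij : i = j := Subsingleton.elim i j
      subst hij
      simp
    have hd0 : ∀ i, d i = 0 := by intro i; rw [hd]; simp [hA0]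
    have hNM0 : NM = 0 := by
      rw [hNM, hA0, hδ]
      ext i j
      simp [Matrix.vecMulVec_apply, hd0 i, hd0 j]
    rw [hNM0, Matrix.zero_mulVec] at hvev
    have : v = 0 := by
      have := hvev.symm
      rcases smul_eq_zero.1 this with h | h
      · exact absurd h hμpos.ne'
      · exact h
    exact hv this
  · -- main case: every vertex has positive degree
    have hdpos : ∀ i, 0 < d i := by
      intro i
      have hnt : Nontrivial (Fin n) := by
        refine ⟨⟨0, hn⟩, ⟨1, by omega⟩, ?_⟩
        simp [Fin.ext_iff]
      obtain ⟨j, hj⟩ := exists_ne i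
      obtain ⟨p⟩ := hconn.preconnected i j
      have hnil : ¬ p.Nil := SimpleGraph.Walk.not_nil_of_ne hj.symm
      have hadj : G.Adj i (p.getVert 1) := p.adj_snd hnil
      have h1 : (0:ℝ) < A i (p.getVert 1) := by rw [hA]; simp [hadj]
      have h2 : A i (p.getVert 1) ≤ ∑ k, A i k :=
        Finset.single_le_sum (fun k _ => hAnn i k) (mem_univ _)
      rw [hd]; simp only
      linarith
    have hvolpos : 0 < vol := by
      rw [hvol]; exact Finset.sum_pos (fun i _ => hdpos i) ⟨⟨0, hn⟩, mem_univ _⟩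
    -- coordinate form of the eigenvalue equation
    have hei : ∀ i, ∑ j, (A i j / (δ i * δ j) - δ i * δ j / vol) * v j = μ * v i := by
      intro i
      have h0 : NM.mulVec v i = (μ • v) i := by rw [hvev]
      rw [hNM] at h0
      simp only [Matrix.mulVec, dotProduct, Matrix.sub_apply,
        Matrix.smul_apply, Matrix.vecMulVec_apply, Pi.smul_apply, smul_eq_mul,
        Matrix.mul_diagonal, Matrix.diagonal_mul] at h0
      rw [← h0]
      refine Finset.sum_congr rfl fun j _ => ?_
      rw [hδ]; simp only
      ring
    -- the tangent condition
    obtain ⟨τ, hτ⟩ : ∃ t, ∑ i, Real.sqrt (d i) * |v i| = t := ⟨_, rfl⟩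
    obtain ⟨ρ2, hρ2⟩ : ∃ t, ∑ i, v i ^ 2 = t := ⟨_, rfl⟩
    obtain ⟨i0, hi0⟩ := Function.ne_iff.1 hv
    have hρ2pos : 0 < ρ2 := by
      rw [← hρ2]
      refine Finset.sum_pos' (fun k _ => sq_nonneg _) ⟨i0, mem_univ _, ?_⟩
      exact lt_of_le_of_ne (sq_nonneg _) (Ne.symm (pow_ne_zero 2 hi0))
    have hτpos : 0 < τ := by
      rw [← hτ]
      refine Finset.sum_pos' (fun k _ => mul_nonneg (Real.sqrt_nonneg _) (abs_nonneg _))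
        ⟨i0, mem_univ _, mul_pos (Real.sqrt_pos.2 (hdpos i0)) (abs_pos.2 hi0)⟩
    have hρpos : 0 < Real.sqrt ρ2 := Real.sqrt_pos.2 hρ2pos
    have hsvol : 0 < Real.sqrt vol := Real.sqrt_pos.2 hvolpos
    obtain ⟨c, hcdef⟩ : ∃ t, τ / (Real.sqrt ρ2 * Real.sqrt vol) = t := ⟨_, rfl⟩
    have hcpos : 0 < c := by
      rw [← hcdef]; exact div_pos hτpos (mul_pos hρpos hsvol)
    have hCS : τ ^ 2 ≤ ρ2 * vol := by
      have h := Finset.sum_mul_sq_le_sq_mul_sq univ (fun i => |v i|) (fun i => Real.sqrt (d i))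
      have e1 : ∑ i, |v i| * Real.sqrt (d i) = τ := by
        rw [← hτ]; exact Finset.sum_congr rfl fun i _ => mul_comm _ _
      have e2 : ∑ i, |v i| ^ 2 = ρ2 := by
        rw [← hρ2]; exact Finset.sum_congr rfl fun i _ => sq_abs _
      have e3 : ∑ i, Real.sqrt (d i) ^ 2 = vol := by
        rw [hvol]; exact Finset.sum_congr rfl fun i _ => Real.sq_sqrt (hdpos i).le
      rw [e1, e2, e3] at h
      exact h
    have hc1 : c ≤ 1 := by
      rw [← hcdef, div_le_one (mul_pos hρpos hsvol)]
      calc τ ≤ Real.sqrt (ρ2 * vol) := Real.le_sqrt_of_sq_le hCS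
        _ = Real.sqrt ρ2 * Real.sqrt vol := Real.sqrt_mul hρ2pos.le _
    have hθarc : θ = Real.arccos c := by
      rw [hθ, hτ, hρ2, ← hvol, hcdef]
    have hcos : Real.cos θ = c := by
      rw [hθarc]; exact Real.cos_arccos (by linarith) hc1
    have hsin : Real.sin θ = Real.sqrt (1 - c ^ 2) := by
      rw [hθarc, Real.sin_arccos]
    have htan2 : Real.tan θ ^ 2 = (1 - c ^ 2) / c ^ 2 := by
      rw [Real.tan_eq_sin_div_cos, hsin, hcos, div_pow,
        Real.sq_sqrt (by nlinarith : (0:ℝ) ≤ 1 - c ^ 2)]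
    have hc2pos : 0 < c ^ 2 := by positivity
    have hkey : 1 < (μ + 1) * c ^ 2 := by
      rw [htan2] at hμ
      have h4 := (div_lt_iff₀ hc2pos).1 hμ
      nlinarith
    have hc2vol : c ^ 2 = τ ^ 2 / (ρ2 * vol) := by
      rw [← hcdef, div_pow, mul_pow, Real.sq_sqrt hρ2pos.le, Real.sq_sqrt hvolpos.le]
    have hfin : vol < (μ + 1) * (τ ^ 2 / ρ2) := by
      rw [hc2vol] at hkey
      have h2 := mul_lt_mul_of_pos_left hkey hvolpos
      have h3 : vol * ((μ + 1) * (τ ^ 2 / (ρ2 * vol))) = (μ + 1) * (τ ^ 2 / ρ2) := by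
        field_simp
      rw [mul_one, h3] at h2
      exact h2
    -- apply the main lemma
    have hτδ : (∑ i, δ i * |v i|) = τ := by
      rw [← hτ]; exact Finset.sum_congr rfl fun i _ => by rw [hδ]
    have hmain := aux_main hn A hAs hAnn d (fun i => (congrFun hd i).symm) hdpos δ
      (fun i => congrFun hδ i) vol hvol μ hμpos v hei (by rw [hτδ, hρ2]; exact hfin)
    rw [hQ S, hS]
    exact hmain
end
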